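/- arXiv:1204.0167 — 6 statements merged into one kernel-verified Lean document; each statement's English description precedes it below -/
import Mathlib

section
/- Let H₀, V be self-adjoint matrices on a finite-dimensional Hilbert space and define η(λ) = ∫₀¹ Tr(V(E₀(λ) − E_s(λ))) ds, where E_s(λ) is the spectral projection of H₀ + sV onto eigenvalues ≤ λ. Then η is a non-negative integrable function with ∫_ℝ η(λ) dλ = ½‖V‖₂². -/
open scoped Matrix

/-- The spectral projection `χ_{(−∞,t]}(A)` of a Hermitian matrix `A`, defined via the
spectral theorem. -/
noncomputable def specProj {n : ℕ} {A : Matrix (Fin n) (Fin n) ℂ} (hA : A.IsHermitian)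
    (t : ℝ) : Matrix (Fin n) (Fin n) ℂ :=
  (Matrix.IsHermitian.eigenvectorUnitary hA : Matrix (Fin n) (Fin n) ℂ) *
    Matrix.diagonal (fun i => if hA.eigenvalues i ≤ t then (1 : ℂ) else 0) *
    star (Matrix.IsHermitian.eigenvectorUnitary hA : Matrix (Fin n) (Fin n) ℂ)

open Matrix MeasureTheory Polynomial Filter Topology

namespace Stmt6Aux

variable {n : ℕ}

/-- abbreviation for the eigenvector unitary, as a matrix. -/
noncomputable def Uc {M : Matrix (Fin n) (Fin n) ℂ} (hM : M.IsHermitian) :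
    Matrix (Fin n) (Fin n) ℂ :=
  (Matrix.IsHermitian.eigenvectorUnitary hM : Matrix (Fin n) (Fin n) ℂ)

lemma Uc_star_mul {M : Matrix (Fin n) (Fin n) ℂ} (hM : M.IsHermitian) :
    star (Uc hM) * Uc hM = 1 :=
  Matrix.mem_unitaryGroup_iff'.mp (Matrix.IsHermitian.eigenvectorUnitary hM).2

lemma Uc_mul_star {M : Matrix (Fin n) (Fin n) ℂ} (hM : M.IsHermitian) :
    Uc hM * star (Uc hM) = 1 :=
  Matrix.mem_unitaryGroup_iff.mp (Matrix.IsHermitian.eigenvectorUnitary hM).2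

lemma spectral {M : Matrix (Fin n) (Fin n) ℂ} (hM : M.IsHermitian) :
    M = Uc hM * Matrix.diagonal (fun i => ((hM.eigenvalues i : ℝ) : ℂ)) * star (Uc hM) := by
  have := hM.spectral_theorem
  rw [Unitary.conjStarAlgAut_apply] at this
  exact this

/-- diagonal coefficient of `V` in the eigenbasis of `M` -/
noncomputable def cj (V : Matrix (Fin n) (Fin n) ℂ) {M : Matrix (Fin n) (Fin n) ℂ}
    (hM : M.IsHermitian) (j : Fin n) : ℝ :=
  ((star (Uc hM) * V * Uc hM) j j).re

lemma trace_mul_UDU (V : Matrix (Fin n) (Fin n) ℂ) {M : Matrix (Fin n) (Fin n) ℂ}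
    (hM : M.IsHermitian) (d : Fin n → ℝ) :
    ((V * (Uc hM * Matrix.diagonal (fun i => ((d i : ℝ) : ℂ)) * star (Uc hM))).trace).re
      = ∑ j, d j * cj V hM j := by
  have h1 : V * (Uc hM * Matrix.diagonal (fun i => ((d i : ℝ) : ℂ)) * star (Uc hM))
      = (V * Uc hM * Matrix.diagonal (fun i => ((d i : ℝ) : ℂ))) * star (Uc hM) := by
    noncomm_ring
  rw [h1, Matrix.trace_mul_comm, ← Matrix.mul_assoc, ← Matrix.mul_assoc]
  simp only [Matrix.trace, Matrix.diag, Matrix.mul_diagonal, Complex.re_sum]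
  refine Finset.sum_congr rfl fun j _ => ?_
  simp [cj, Uc, Complex.mul_re, mul_comm]

lemma trace_mul_specProj (V : Matrix (Fin n) (Fin n) ℂ) {M : Matrix (Fin n) (Fin n) ℂ}
    (hM : M.IsHermitian) (t : ℝ) :
    ((V * specProj hM t).trace).re
      = ∑ j, (if hM.eigenvalues j ≤ t then (1:ℝ) else 0) * cj V hM j := by
  have hd : (fun i => if hM.eigenvalues i ≤ t then (1:ℂ) else 0)
      = fun i => (((if hM.eigenvalues i ≤ t then (1:ℝ) else 0) : ℝ) : ℂ) := by
    funext i; split <;> simp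
  have h : specProj hM t = Uc hM *
      Matrix.diagonal (fun i => (((if hM.eigenvalues i ≤ t then (1:ℝ) else 0) : ℝ) : ℂ)) *
      star (Uc hM) := by
    unfold specProj Uc
    rw [hd]
  rw [h, trace_mul_UDU]

lemma conj_pow (U D : Matrix (Fin n) (Fin n) ℂ) (h : star U * U = 1) (h2 : U * star U = 1)
    (m : ℕ) : (U * D * star U) ^ m = U * D ^ m * star U := by
  induction m with
  | zero => rw [pow_zero, pow_zero, Matrix.mul_one, h2]
  | succ m ih =>
    rw [pow_succ, ih, pow_succ]
    have : U * D ^ m * star U * (U * D * star U) = U * D ^ m * (star U * U) * D * star U := by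
      noncomm_ring
    rw [this, h, Matrix.mul_one, Matrix.mul_assoc (U * D ^ m), ← Matrix.mul_assoc,
      Matrix.mul_assoc U]

lemma pow_eq (m : ℕ) {M : Matrix (Fin n) (Fin n) ℂ} (hM : M.IsHermitian) :
    M ^ m = Uc hM * Matrix.diagonal (fun i => (((hM.eigenvalues i) ^ m : ℝ) : ℂ)) *
      star (Uc hM) := by
  conv_lhs => rw [spectral hM]
  rw [conj_pow _ _ (Uc_star_mul hM) (Uc_mul_star hM), Matrix.diagonal_pow]
  have : ((fun i => ((hM.eigenvalues i : ℝ) : ℂ)) ^ m)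
      = fun i => (((hM.eigenvalues i) ^ m : ℝ) : ℂ) := by
    funext i
    rw [Pi.pow_apply, Complex.ofReal_pow]
  rw [this]

lemma trace_mul_pow (V : Matrix (Fin n) (Fin n) ℂ) {M : Matrix (Fin n) (Fin n) ℂ}
    (hM : M.IsHermitian) (m : ℕ) :
    ((V * M ^ m).trace).re = ∑ j, (hM.eigenvalues j) ^ m * cj V hM j := by
  rw [pow_eq m hM, trace_mul_UDU]

lemma cj_sum (V : Matrix (Fin n) (Fin n) ℂ) {M : Matrix (Fin n) (Fin n) ℂ}
    (hM : M.IsHermitian) : ∑ j, cj V hM j = (V.trace).re := by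
  have h : ∑ j, (star (Uc hM) * V * Uc hM) j j = (star (Uc hM) * V * Uc hM).trace := rfl
  have h2 : (star (Uc hM) * V * Uc hM).trace = V.trace := by
    rw [Matrix.trace_mul_cycle, Uc_mul_star hM, Matrix.one_mul]
  unfold cj
  rw [← Complex.re_sum, h, h2]

lemma col_normSq {U : Matrix (Fin n) (Fin n) ℂ} (h : star U * U = 1) (j : Fin n) :
    ∑ k, Complex.normSq (U k j) = 1 := by
  have h2 : (star U * U) j j = 1 := by rw [h]; simp
  have h3 : (star U * U) j j = ∑ k, (starRingEnd ℂ) (U k j) * U k j := by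
    simp [Matrix.mul_apply, Matrix.star_apply]
  rw [h3] at h2
  have := congrArg Complex.re h2
  rw [Complex.re_sum] at this
  simpa [Complex.normSq_eq_conj_mul_self, Complex.normSq_apply] using this

lemma col_entry_le {U : Matrix (Fin n) (Fin n) ℂ} (h : star U * U = 1) (k j : Fin n) :
    ‖U k j‖ ≤ 1 := by
  have h1 := col_normSq h j
  have h2 : Complex.normSq (U k j) ≤ 1 := by
    rw [← h1]
    exact Finset.single_le_sum (f := fun i => Complex.normSq (U i j))
      (fun i _ => Complex.normSq_nonneg _) (Finset.mem_univ k)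
  have h3 : ‖U k j‖ ^ 2 ≤ 1 := by rwa [← Complex.sq_norm] at h2
  nlinarith [norm_nonneg (U k j)]

lemma entry_norm_le (V : Matrix (Fin n) (Fin n) ℂ) {U : Matrix (Fin n) (Fin n) ℂ}
    (hU : ∀ a b, ‖U a b‖ ≤ 1) (j : Fin n) :
    ‖(star U * V * U) j j‖ ≤ ∑ k, ∑ l, ‖V k l‖ := by
  have hexp : (star U * V * U) j j
      = ∑ l, (∑ k, star (U k j) * V k l) * U l j := by
    simp [Matrix.mul_apply, Matrix.star_apply, Finset.sum_mul]
  rw [hexp]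
  refine (norm_sum_le _ _).trans ?_
  have key : ∀ l : Fin n, ‖(∑ k, star (U k j) * V k l) * U l j‖ ≤ ∑ k, ‖V k l‖ := by
    intro l
    calc ‖(∑ k, star (U k j) * V k l) * U l j‖
        = ‖∑ k, star (U k j) * V k l‖ * ‖U l j‖ := norm_mul _ _
      _ ≤ (∑ k, ‖V k l‖) * 1 := by
          apply mul_le_mul ?_ (hU l j) (norm_nonneg _) (by positivity)
          refine (norm_sum_le _ _).trans (Finset.sum_le_sum fun k _ => ?_)
          rw [norm_mul, norm_star]
          exact mul_le_of_le_one_left (norm_nonneg _) (hU k j)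
      _ = ∑ k, ‖V k l‖ := mul_one _
  calc ∑ l, ‖(∑ k, star (U k j) * V k l) * U l j‖ ≤ ∑ l, ∑ k, ‖V k l‖ :=
        Finset.sum_le_sum fun l _ => key l
    _ = ∑ k, ∑ l, ‖V k l‖ := Finset.sum_comm

lemma cj_abs_le (V : Matrix (Fin n) (Fin n) ℂ) {M : Matrix (Fin n) (Fin n) ℂ}
    (hM : M.IsHermitian) (j : Fin n) : |cj V hM j| ≤ ∑ k, ∑ l, ‖V k l‖ := by
  have habs : |cj V hM j| ≤ ‖(star (Uc hM) * V * Uc hM) j j‖ := Complex.abs_re_le_norm _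
  exact habs.trans (entry_norm_le V (fun a b => col_entry_le (Uc_star_mul hM) a b) j)

lemma specProj_eq {M' : Matrix (Fin n) (Fin n) ℂ}
    (hM' : M'.IsHermitian) (t : ℝ) :
    specProj hM' t = Uc hM' *
      Matrix.diagonal (fun i => if hM'.eigenvalues i ≤ t then (1:ℂ) else 0) * star (Uc hM') :=
  rfl

/-- The diagonal coefficients of a spectral projection in any orthonormal basis lie in `[0,1]`. -/
lemma re_diag_conj_proj_mem {M M' : Matrix (Fin n) (Fin n) ℂ}
    (hM : M.IsHermitian) (hM' : M'.IsHermitian) (t : ℝ) (j : Fin n) :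
    ((star (Uc hM) * specProj hM' t * Uc hM) j j).re ∈ Set.Icc (0:ℝ) 1 := by
  set U := Uc hM
  set W := Uc hM'
  set C := star W * U with hC
  have hCC : star C * C = 1 := by
    rw [hC, Matrix.star_mul, star_star, Matrix.mul_assoc, ← Matrix.mul_assoc W,
      Uc_mul_star hM', Matrix.one_mul, Uc_star_mul hM]
  have hrw : star U * specProj hM' t * U
      = star C * Matrix.diagonal (fun i => if hM'.eigenvalues i ≤ t then (1:ℂ) else 0) * C := by
    rw [specProj_eq hM' t]
    rw [hC, Matrix.star_mul, star_star]
    noncomm_ring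
  rw [hrw]
  have hentry : (star C * Matrix.diagonal (fun i => if hM'.eigenvalues i ≤ t then (1:ℂ) else 0)
      * C) j j = ∑ k, (if hM'.eigenvalues k ≤ t then (1:ℂ) else 0) * (star (C k j) * C k j) := by
    rw [Matrix.mul_assoc, Matrix.mul_apply]
    refine Finset.sum_congr rfl fun k _ => ?_
    rw [Matrix.diagonal_mul, Matrix.star_apply]
    ring
  rw [hentry]
  have hre : (∑ k, (if hM'.eigenvalues k ≤ t then (1:ℂ) else 0) * (star (C k j) * C k j)).re
      = ∑ k, (if hM'.eigenvalues k ≤ t then (1:ℝ) else 0) * Complex.normSq (C k j) := by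
    rw [Complex.re_sum]
    refine Finset.sum_congr rfl fun k _ => ?_
    split <;> simp [Complex.star_def, ← Complex.normSq_eq_conj_mul_self]
  rw [hre]
  constructor
  · refine Finset.sum_nonneg fun k _ => ?_
    split <;> simp [Complex.normSq_nonneg]
  · calc ∑ k, (if hM'.eigenvalues k ≤ t then (1:ℝ) else 0) * Complex.normSq (C k j)
        ≤ ∑ k, Complex.normSq (C k j) := by
          refine Finset.sum_le_sum fun k _ => ?_
          split <;> simp [Complex.normSq_nonneg]
      _ = 1 := col_normSq hCC j

lemma sub_smul_one_eq {M : Matrix (Fin n) (Fin n) ℂ} (hM : M.IsHermitian) (lam : ℝ) :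
    M - (lam : ℂ) • (1 : Matrix (Fin n) (Fin n) ℂ)
      = Uc hM * Matrix.diagonal (fun i => (((hM.eigenvalues i - lam : ℝ)) : ℂ)) * star (Uc hM) := by
  have h1 : ((lam : ℂ) • (1 : Matrix (Fin n) (Fin n) ℂ))
      = Uc hM * Matrix.diagonal (fun _ => (lam : ℂ)) * star (Uc hM) := by
    have : Matrix.diagonal (fun _ : Fin n => (lam : ℂ)) = (lam : ℂ) • 1 := by
      ext i j
      simp [Matrix.diagonal_apply, Matrix.one_apply, mul_ite]
    rw [this, Matrix.mul_smul, Matrix.smul_mul, Matrix.mul_one, Uc_mul_star hM]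
  conv_lhs => rw [spectral hM, h1]
  rw [← Matrix.sub_mul, ← Matrix.mul_sub, Matrix.diagonal_sub]
  congr 2
  funext i
  push_cast
  ring

lemma trace_shift {M : Matrix (Fin n) (Fin n) ℂ} (hM : M.IsHermitian) (lam : ℝ)
    (P : Matrix (Fin n) (Fin n) ℂ) :
    (((M - (lam : ℂ) • 1) * P).trace).re
      = ∑ j, (hM.eigenvalues j - lam) * ((star (Uc hM) * P * Uc hM) j j).re := by
  rw [Matrix.trace_mul_comm, sub_smul_one_eq hM lam,
    trace_mul_UDU P hM (fun i => hM.eigenvalues i - lam)]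
  rfl

lemma conj_specProj_self {M : Matrix (Fin n) (Fin n) ℂ} (hM : M.IsHermitian) (t : ℝ) (j : Fin n) :
    ((star (Uc hM) * specProj hM t * Uc hM) j j).re
      = if hM.eigenvalues j ≤ t then (1:ℝ) else 0 := by
  have h : star (Uc hM) * specProj hM t * Uc hM
      = Matrix.diagonal (fun i => if hM.eigenvalues i ≤ t then (1:ℂ) else 0) := by
    rw [specProj_eq hM t, ← Matrix.mul_assoc, ← Matrix.mul_assoc, Uc_star_mul hM,
      Matrix.one_mul, Matrix.mul_assoc, Uc_star_mul hM, Matrix.mul_one]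
  rw [h, Matrix.diagonal_apply_eq]
  split <;> simp

lemma trace_shift_min {M : Matrix (Fin n) (Fin n) ℂ} (hM : M.IsHermitian) (lam : ℝ)
    (P : Matrix (Fin n) (Fin n) ℂ)
    (hP : ∀ j, ((star (Uc hM) * P * Uc hM) j j).re ∈ Set.Icc (0:ℝ) 1) :
    (((M - (lam : ℂ) • 1) * specProj hM lam).trace).re ≤ (((M - (lam : ℂ) • 1) * P).trace).re := by
  rw [trace_shift hM lam, trace_shift hM lam]
  refine Finset.sum_le_sum fun j _ => ?_
  obtain ⟨h0, h1⟩ := hP j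
  rw [conj_specProj_self hM lam j]
  rcases le_or_gt (hM.eigenvalues j) lam with h | h
  · rw [if_pos h]
    nlinarith
  · rw [if_neg (not_le.mpr h)]
    nlinarith

lemma trace_mul_sub_re (V A B : Matrix (Fin n) (Fin n) ℂ) :
    ((V * (A - B)).trace).re = ((V * A).trace).re - ((V * B).trace).re := by
  rw [Matrix.mul_sub, Matrix.trace_sub, Complex.sub_re]

lemma integrand_nonneg (H₀ V : Matrix (Fin n) (Fin n) ℂ)
    (hs' : ∀ s : ℝ, (H₀ + (s : ℂ) • V).IsHermitian) (lam : ℝ) {s : ℝ} (hspos : 0 < s) :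
    0 ≤ ((V * (specProj (hs' 0) lam - specProj (hs' s) lam)).trace).re := by
  set E0 := specProj (hs' 0) lam with hE0
  set Es := specProj (hs' s) lam with hEs
  set M0 := H₀ + (0 : ℂ) • V with hM0
  set Ms := H₀ + (s : ℂ) • V with hMs
  have hdiff : Ms - M0 = (s : ℂ) • V := by
    rw [hM0, hMs]
    simp
  -- key inequalities
  have h1 : (((Ms - (lam : ℂ) • 1) * Es).trace).re ≤ (((Ms - (lam : ℂ) • 1) * E0).trace).re :=
    trace_shift_min (hs' s) lam E0 (fun j => re_diag_conj_proj_mem (hs' s) (hs' 0) lam j)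
  have h2 : (((M0 - (lam : ℂ) • 1) * E0).trace).re ≤ (((M0 - (lam : ℂ) • 1) * Es).trace).re :=
    trace_shift_min (hs' 0) lam Es (fun j => re_diag_conj_proj_mem (hs' 0) (hs' s) lam j)
  -- s * target = difference of shifted traces
  have hkey : s * ((V * (E0 - Es)).trace).re
      = ((((Ms - (lam : ℂ) • 1) * E0).trace).re - (((Ms - (lam : ℂ) • 1) * Es).trace).re)
        - ((((M0 - (lam : ℂ) • 1) * E0).trace).re - (((M0 - (lam : ℂ) • 1) * Es).trace).re) := by
    have e1 : (Ms - (lam : ℂ) • 1) - (M0 - (lam : ℂ) • 1) = (s : ℂ) • V := by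
      rw [sub_sub_sub_cancel_right, hdiff]
    have e2 : ((((s : ℂ) • V) * (E0 - Es)).trace).re = s * ((V * (E0 - Es)).trace).re := by
      rw [Matrix.smul_mul, Matrix.trace_smul]
      simp [Complex.smul_re]
    rw [← e2, ← e1, Matrix.sub_mul, Matrix.trace_sub, Complex.sub_re,
      trace_mul_sub_re, trace_mul_sub_re]
  have hge : 0 ≤ s * ((V * (E0 - Es)).trace).re := by
    rw [hkey]; linarith
  exact nonneg_of_mul_nonneg_right hge hspos

lemma specProj_eq_zero {M : Matrix (Fin n) (Fin n) ℂ} (hM : M.IsHermitian) {t : ℝ}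
    (h : ∀ j, t < hM.eigenvalues j) : specProj hM t = 0 := by
  unfold specProj
  have : (fun i => if hM.eigenvalues i ≤ t then (1:ℂ) else 0) = fun _ => 0 := by
    funext i
    rw [if_neg (not_le.mpr (h i))]
  rw [this, Matrix.diagonal_zero, Matrix.mul_zero, Matrix.zero_mul]

lemma specProj_eq_one {M : Matrix (Fin n) (Fin n) ℂ} (hM : M.IsHermitian) {t : ℝ}
    (h : ∀ j, hM.eigenvalues j ≤ t) : specProj hM t = 1 := by
  have h1 : (fun i => if hM.eigenvalues i ≤ t then (1:ℂ) else 0) = fun _ => 1 := by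
    funext i
    rw [if_pos (h i)]
  unfold specProj
  rw [h1, Matrix.diagonal_one, Matrix.mul_one]
  exact Uc_mul_star hM

lemma eig_bound {M : Matrix (Fin n) (Fin n) ℂ} (hM : M.IsHermitian) (j : Fin n) :
    |hM.eigenvalues j| ≤ ∑ i, ∑ k, ‖M i k‖ := by
  have hMU : M * Uc hM = Uc hM * Matrix.diagonal (fun i => ((hM.eigenvalues i : ℝ) : ℂ)) := by
    have h1 : M * Uc hM = Uc hM * Matrix.diagonal (fun i => ((hM.eigenvalues i : ℝ) : ℂ))
        * star (Uc hM) * Uc hM := by rw [← spectral hM]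
    rw [h1, Matrix.mul_assoc, Uc_star_mul hM, Matrix.mul_one]
  have hentry : ∀ i, ∑ k, M i k * Uc hM k j = Uc hM i j * (hM.eigenvalues j : ℂ) := by
    intro i
    have := congrFun (congrFun hMU i) j
    rwa [Matrix.mul_apply, Matrix.mul_diagonal] at this
  -- find the max column entry
  obtain ⟨i₀, -, hmax⟩ := Finset.exists_max_image (Finset.univ : Finset (Fin n))
    (fun i => ‖Uc hM i j‖) ⟨j, Finset.mem_univ j⟩
  have hpos : 0 < ‖Uc hM i₀ j‖ := by
    by_contra hcon
    push_neg at hcon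
    have hz : ∀ i, Uc hM i j = 0 := by
      intro i
      have := hmax i (Finset.mem_univ i)
      have h9 : ‖Uc hM i j‖ ≤ 0 := le_trans this hcon
      exact norm_le_zero_iff.mp h9
    have := col_normSq (Uc_star_mul hM) j
    simp [hz] at this
  have hb : |hM.eigenvalues j| * ‖Uc hM i₀ j‖ ≤ (∑ i, ∑ k, ‖M i k‖) * ‖Uc hM i₀ j‖ := by
    calc |hM.eigenvalues j| * ‖Uc hM i₀ j‖
        = ‖Uc hM i₀ j * (hM.eigenvalues j : ℂ)‖ := by
          rw [norm_mul, Complex.norm_real, Real.norm_eq_abs, mul_comm]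
      _ = ‖∑ k, M i₀ k * Uc hM k j‖ := by rw [hentry i₀]
      _ ≤ ∑ k, ‖M i₀ k * Uc hM k j‖ := norm_sum_le _ _
      _ ≤ ∑ k, ‖M i₀ k‖ * ‖Uc hM i₀ j‖ := by
          refine Finset.sum_le_sum fun k _ => ?_
          rw [norm_mul]
          exact mul_le_mul_of_nonneg_left (hmax k (Finset.mem_univ k)) (norm_nonneg _)
      _ = (∑ k, ‖M i₀ k‖) * ‖Uc hM i₀ j‖ := by rw [Finset.sum_mul]
      _ ≤ (∑ i, ∑ k, ‖M i k‖) * ‖Uc hM i₀ j‖ := by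
          refine mul_le_mul_of_nonneg_right ?_ (norm_nonneg _)
          exact Finset.single_le_sum (f := fun i => ∑ k, ‖M i k‖)
            (fun i _ => Finset.sum_nonneg fun k _ => norm_nonneg _) (Finset.mem_univ i₀)
  exact le_of_mul_le_mul_right hb hpos

lemma trace_specProj_abs_le (V : Matrix (Fin n) (Fin n) ℂ) {M : Matrix (Fin n) (Fin n) ℂ}
    (hM : M.IsHermitian) (t : ℝ) :
    |((V * specProj hM t).trace).re| ≤ (n : ℝ) * ∑ k, ∑ l, ‖V k l‖ := by
  rw [trace_mul_specProj]
  refine (Finset.abs_sum_le_sum_abs _ _).trans ?_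
  have : ∀ j : Fin n, |(if hM.eigenvalues j ≤ t then (1:ℝ) else 0) * cj V hM j|
      ≤ ∑ k, ∑ l, ‖V k l‖ := by
    intro j
    rw [abs_mul]
    rcases le_or_gt (hM.eigenvalues j) t with h | h
    · rw [if_pos h]
      simpa using cj_abs_le V hM j
    · rw [if_neg (not_le.mpr h)]
      simp
      positivity
  calc ∑ j, |(if hM.eigenvalues j ≤ t then (1:ℝ) else 0) * cj V hM j|
      ≤ ∑ _j : Fin n, ∑ k, ∑ l, ‖V k l‖ := Finset.sum_le_sum fun j _ => this j
    _ = (n : ℝ) * ∑ k, ∑ l, ‖V k l‖ := by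
        rw [Finset.sum_const, Finset.card_univ, Fintype.card_fin, nsmul_eq_mul]

lemma cont_trace_pow (H₀ V : Matrix (Fin n) (Fin n) ℂ) (m : ℕ) :
    Continuous fun s : ℝ => ((V * (H₀ + (s : ℂ) • V) ^ m).trace).re := by
  have h1 : Continuous fun s : ℝ => H₀ + (s : ℂ) • V :=
    continuous_const.add (Complex.continuous_ofReal.smul continuous_const)
  have hp : Continuous fun s : ℝ => (H₀ + (s : ℂ) • V) ^ m := by
    induction m with
    | zero => simpa [pow_zero] using continuous_const
    | succ m ih =>
      simp only [pow_succ]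
      exact ih.matrix_mul h1
  exact Complex.continuous_re.comp ((continuous_const.matrix_mul hp).matrix_trace)

lemma trace_poly (V : Matrix (Fin n) (Fin n) ℂ) {M : Matrix (Fin n) (Fin n) ℂ}
    (hM : M.IsHermitian) (p : ℝ[X]) :
    ∑ j, p.eval (hM.eigenvalues j) * cj V hM j
      = ∑ m ∈ Finset.range (p.natDegree + 1), p.coeff m * ((V * M ^ m).trace).re := by
  have : ∀ m, ((V * M ^ m).trace).re = ∑ j, (hM.eigenvalues j) ^ m * cj V hM j :=
    fun m => trace_mul_pow V hM m
  simp_rw [this, Finset.mul_sum]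
  rw [Finset.sum_comm]
  refine Finset.sum_congr rfl fun j _ => ?_
  rw [Polynomial.eval_eq_sum_range, Finset.sum_mul]
  refine Finset.sum_congr rfl fun m _ => ?_
  ring

lemma cont_trace_polyeval (H₀ V : Matrix (Fin n) (Fin n) ℂ)
    (hs' : ∀ s : ℝ, (H₀ + (s : ℂ) • V).IsHermitian) (p : ℝ[X]) :
    Continuous fun s : ℝ => ∑ j, p.eval ((hs' s).eigenvalues j) * cj V (hs' s) j := by
  have : (fun s : ℝ => ∑ j, p.eval ((hs' s).eigenvalues j) * cj V (hs' s) j)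
      = fun s : ℝ => ∑ m ∈ Finset.range (p.natDegree + 1),
          p.coeff m * ((V * (H₀ + (s : ℂ) • V) ^ m).trace).re := by
    funext s
    exact trace_poly V (hs' s) p
  rw [this]
  exact continuous_finset_sum _ fun m _ => continuous_const.mul (cont_trace_pow H₀ V m)

lemma eig_bound_family (H₀ V : Matrix (Fin n) (Fin n) ℂ)
    (hs' : ∀ s : ℝ, (H₀ + (s : ℂ) • V).IsHermitian) {s C : ℝ} (hsC : |s| ≤ C) (j : Fin n) :
    |(hs' s).eigenvalues j| ≤ ∑ i, ∑ k, (‖H₀ i k‖ + C * ‖V i k‖) := by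
  refine (eig_bound (hs' s) j).trans ?_
  refine Finset.sum_le_sum fun i _ => Finset.sum_le_sum fun k _ => ?_
  calc ‖(H₀ + (s : ℂ) • V) i k‖ = ‖H₀ i k + (s : ℂ) * V i k‖ := by
        simp [Matrix.add_apply, Matrix.smul_apply, smul_eq_mul]
    _ ≤ ‖H₀ i k‖ + ‖(s : ℂ) * V i k‖ := norm_add_le _ _
    _ ≤ ‖H₀ i k‖ + C * ‖V i k‖ := by
        rw [norm_mul, Complex.norm_real, Real.norm_eq_abs]
        have : |s| * ‖V i k‖ ≤ C * ‖V i k‖ :=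
          mul_le_mul_of_nonneg_right hsC (norm_nonneg _)
        linarith

/-- continuity in `s` of `∑ⱼ f(μⱼ(s)) cⱼ(s)` for continuous `f`. -/
lemma cont_trace_cfun (H₀ V : Matrix (Fin n) (Fin n) ℂ)
    (hs' : ∀ s : ℝ, (H₀ + (s : ℂ) • V).IsHermitian) (f : ℝ → ℝ) (hf : Continuous f) :
    Continuous fun s : ℝ => ∑ j, f ((hs' s).eigenvalues j) * cj V (hs' s) j := by
  rw [continuous_iff_continuousAt]
  intro s₀
  rw [Metric.continuousAt_iff]
  intro ε hε
  set SV : ℝ := ∑ k, ∑ l, ‖V k l‖ with hSV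
  have hSV0 : 0 ≤ SV := Finset.sum_nonneg fun k _ => Finset.sum_nonneg fun l _ => norm_nonneg _
  set K : ℝ := (n : ℝ) * SV + 1 with hK
  have hK0 : 0 < K := by positivity
  set R : ℝ := ∑ i, ∑ k, (‖H₀ i k‖ + (|s₀| + 1) * ‖V i k‖) with hR
  -- eigenvalues of H(s) for |s - s₀| ≤ 1 lie in [-R, R]
  have heig : ∀ s : ℝ, |s - s₀| ≤ 1 → ∀ j, (hs' s).eigenvalues j ∈ Set.Icc (-R) R := by
    intro s hs j
    have habs : |s| ≤ |s₀| + 1 := by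
      have := abs_sub_abs_le_abs_sub s s₀
      linarith
    have := eig_bound_family H₀ V hs' habs j
    rw [hR]
    constructor <;> [linarith [abs_le.mp this]; linarith [abs_le.mp this]]
  obtain ⟨p, hp⟩ := exists_polynomial_near_of_continuousOn (-R) R f hf.continuousOn
    (ε / (3 * K)) (by positivity)
  -- approximation bound
  have happrox : ∀ s : ℝ, |s - s₀| ≤ 1 →
      |(∑ j, f ((hs' s).eigenvalues j) * cj V (hs' s) j)
        - ∑ j, p.eval ((hs' s).eigenvalues j) * cj V (hs' s) j| ≤ ε / 3 := by
    intro s hs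
    rw [← Finset.sum_sub_distrib]
    refine (Finset.abs_sum_le_sum_abs _ _).trans ?_
    have hterm : ∀ j : Fin n, |f ((hs' s).eigenvalues j) * cj V (hs' s) j
        - p.eval ((hs' s).eigenvalues j) * cj V (hs' s) j| ≤ (ε / (3 * K)) * SV := by
      intro j
      rw [← sub_mul, abs_mul]
      have h1 : |f ((hs' s).eigenvalues j) - p.eval ((hs' s).eigenvalues j)| ≤ ε / (3 * K) := by
        have := hp ((hs' s).eigenvalues j) (heig s hs j)
        rw [abs_sub_comm]
        exact this.le
      exact mul_le_mul h1 (cj_abs_le V (hs' s) j) (abs_nonneg _) (by positivity)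
    calc ∑ j, |f ((hs' s).eigenvalues j) * cj V (hs' s) j
          - p.eval ((hs' s).eigenvalues j) * cj V (hs' s) j|
        ≤ ∑ _j : Fin n, (ε / (3 * K)) * SV := Finset.sum_le_sum fun j _ => hterm j
      _ = (n : ℝ) * ((ε / (3 * K)) * SV) := by
          rw [Finset.sum_const, Finset.card_univ, Fintype.card_fin, nsmul_eq_mul]
      _ ≤ ε / 3 := by
          have hnSV : (n : ℝ) * SV ≤ K := by rw [hK]; linarith
          have h2 : (n : ℝ) * ((ε / (3 * K)) * SV) = ((n : ℝ) * SV) * (ε / (3 * K)) := by ring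
          rw [h2]
          calc ((n : ℝ) * SV) * (ε / (3 * K)) ≤ K * (ε / (3 * K)) :=
                mul_le_mul_of_nonneg_right hnSV (by positivity)
            _ = ε / 3 := by field_simp
  -- continuity of the polynomial part
  have hcontP := cont_trace_polyeval H₀ V hs' p
  rw [continuous_iff_continuousAt] at hcontP
  have := hcontP s₀
  rw [Metric.continuousAt_iff] at this
  obtain ⟨δ₂, hδ₂pos, hδ₂⟩ := this (ε / 3) (by positivity)
  refine ⟨min 1 δ₂, by positivity, fun {s} hdist => ?_⟩
  have hd1 : |s - s₀| ≤ 1 := by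
    rw [Real.dist_eq] at hdist
    have := lt_of_lt_of_le hdist (min_le_left _ _)
    linarith [this.le]
  have hd2 : dist s s₀ < δ₂ := lt_of_lt_of_le hdist (min_le_right _ _)
  have hP := hδ₂ hd2
  rw [Real.dist_eq] at hP ⊢
  have ha := happrox s hd1
  have hb := happrox s₀ (by simp)
  set F := fun s : ℝ => ∑ j, f ((hs' s).eigenvalues j) * cj V (hs' s) j with hF
  set P := fun s : ℝ => ∑ j, p.eval ((hs' s).eigenvalues j) * cj V (hs' s) j with hPdef
  calc |F s - F s₀| = |(F s - P s) + (P s - P s₀) + (P s₀ - F s₀)| := by ring_nf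
    _ ≤ |(F s - P s) + (P s - P s₀)| + |P s₀ - F s₀| := abs_add_le _ _
    _ ≤ |F s - P s| + |P s - P s₀| + |P s₀ - F s₀| := by
        have := abs_add_le (F s - P s) (P s - P s₀)
        linarith
    _ < ε := by
        have hb' : |P s₀ - F s₀| ≤ ε / 3 := by rw [abs_sub_comm]; exact hb
        linarith

/-- continuous approximations to the indicator of `(-∞, 0]` -/
noncomputable def gk (k : ℕ) (x : ℝ) : ℝ := max 0 (min 1 (1 - (k + 1 : ℝ) * x))

lemma gk_continuous (k : ℕ) : Continuous (gk k) := by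
  unfold gk
  exact continuous_const.max (continuous_const.min (by continuity))

lemma gk_le_max (k : ℕ) {x : ℝ} (hx : x ≤ 0) : gk k x = 1 := by
  unfold gk
  have h1 : (1:ℝ) ≤ 1 - (k + 1 : ℝ) * x := by nlinarith [Nat.cast_nonneg (α := ℝ) k]
  rw [min_eq_left h1, max_eq_right zero_le_one]

lemma gk_eq_zero (k : ℕ) {x : ℝ} (hx : (1:ℝ) ≤ (k + 1 : ℝ) * x) : gk k x = 0 := by
  unfold gk
  have h1 : 1 - (k + 1 : ℝ) * x ≤ 0 := by linarith
  rw [min_eq_right (by linarith), max_eq_left h1]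

lemma gk_tendsto (x : ℝ) :
    Filter.Tendsto (fun k : ℕ => gk k x) Filter.atTop (nhds (if x ≤ 0 then (1:ℝ) else 0)) := by
  rcases le_or_gt x 0 with h | h
  · rw [if_pos h]
    have heq : (fun k : ℕ => gk k x) = fun _ => (1:ℝ) := funext fun k => gk_le_max k h
    rw [heq]
    exact tendsto_const_nhds
  · rw [if_neg (not_le.mpr h)]
    apply tendsto_atTop_of_eventually_const (i₀ := ⌈1/x⌉₊)
    intro k hk
    apply gk_eq_zero
    have h1 : 1 / x ≤ (k : ℝ) := le_trans (Nat.le_ceil _) (by exact_mod_cast hk)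
    have h2 : 1 / x ≤ (k : ℝ) + 1 := by linarith
    calc (1:ℝ) = (1 / x) * x := by field_simp
      _ ≤ ((k : ℝ) + 1) * x := mul_le_mul_of_nonneg_right h2 h.le

lemma meas_trace_specProj (H₀ V : Matrix (Fin n) (Fin n) ℂ)
    (hs' : ∀ s : ℝ, (H₀ + (s : ℂ) • V).IsHermitian) :
    Measurable (fun q : ℝ × ℝ => ((V * specProj (hs' q.1) q.2).trace).re) := by
  have hlim : ∀ q : ℝ × ℝ, Filter.Tendsto
      (fun k : ℕ => ∑ j, gk k ((hs' q.1).eigenvalues j - q.2) * cj V (hs' q.1) j)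
      Filter.atTop (nhds (((V * specProj (hs' q.1) q.2).trace).re)) := by
    intro q
    rw [trace_mul_specProj]
    apply tendsto_finset_sum
    intro j _
    have h := (gk_tendsto ((hs' q.1).eigenvalues j - q.2)).mul_const (cj V (hs' q.1) j)
    have heq : (if (hs' q.1).eigenvalues j - q.2 ≤ 0 then (1:ℝ) else 0)
        = if (hs' q.1).eigenvalues j ≤ q.2 then (1:ℝ) else 0 := by
      simp [sub_nonpos]
    rwa [heq] at h
  apply measurable_of_tendsto_metrizable (fun k => ?_) (tendsto_pi_nhds.mpr hlim)
  exact measurable_uncurry_of_continuous_of_measurable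
    (u := fun (s : ℝ) (lam : ℝ) => ∑ j, gk k ((hs' s).eigenvalues j - lam) * cj V (hs' s) j)
    (fun lam => cont_trace_cfun H₀ V hs' (fun t => gk k (t - lam))
      ((gk_continuous k).comp (continuous_id.sub continuous_const)))
    (fun s => (continuous_finset_sum _ fun j _ =>
      (((gk_continuous k).comp (continuous_const.sub continuous_id)).mul
        continuous_const)).measurable)

lemma meas_phi (H₀ V : Matrix (Fin n) (Fin n) ℂ)
    (hs' : ∀ s : ℝ, (H₀ + (s : ℂ) • V).IsHermitian) :
    Measurable (fun q : ℝ × ℝ =>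
      ((V * (specProj (hs' 0) q.2 - specProj (hs' q.1) q.2)).trace).re) := by
  have heq : (fun q : ℝ × ℝ => ((V * (specProj (hs' 0) q.2 - specProj (hs' q.1) q.2)).trace).re)
      = fun q : ℝ × ℝ => ((V * specProj (hs' ((0:ℝ), q.2).1) ((0:ℝ), q.2).2).trace).re
          - ((V * specProj (hs' q.1) q.2).trace).re := by
    funext q
    rw [trace_mul_sub_re]
  rw [heq]
  exact ((meas_trace_specProj H₀ V hs').comp (measurable_const.prodMk measurable_snd)).sub
    (meas_trace_specProj H₀ V hs')

open MeasureTheory in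
lemma psi_eq (a M : ℝ) :
    (fun lam : ℝ => (if a ≤ lam then (1:ℝ) else 0) - (if M ≤ lam then 1 else 0))
      = fun lam : ℝ => (Set.Ico a M).indicator (fun _ => (1:ℝ)) lam
          - (Set.Ico M a).indicator (fun _ => (1:ℝ)) lam := by
  funext lam
  rcases le_or_gt a lam with h1 | h1 <;> rcases le_or_gt M lam with h2 | h2 <;>
    simp [Set.indicator_apply, Set.mem_Ico, h1, h2, not_le.mpr, le_of_lt] <;>
    split_ifs with h3 <;> simp_all <;> linarith

open MeasureTheory in
lemma ind_integrable (u v : ℝ) :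
    Integrable ((Set.Ico u v).indicator (fun _ => (1:ℝ))) := by
  rw [integrable_indicator_iff measurableSet_Ico]
  exact integrableOn_const (by rw [Real.volume_Ico]; exact ENNReal.ofReal_ne_top)

open MeasureTheory in
lemma ind_integral (u v : ℝ) :
    ∫ lam : ℝ, (Set.Ico u v).indicator (fun _ => (1:ℝ)) lam = max (v - u) 0 := by
  rw [integral_indicator_const (1:ℝ) measurableSet_Ico, Real.volume_real_Ico, smul_eq_mul, mul_one]

open MeasureTheory in
lemma psi_integrable (a M : ℝ) :
    Integrable (fun lam : ℝ => (if a ≤ lam then (1:ℝ) else 0) - (if M ≤ lam then 1 else 0)) := by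
  rw [psi_eq]
  exact (ind_integrable a M).sub (ind_integrable M a)

open MeasureTheory in
lemma psi_integral (a M : ℝ) :
    ∫ lam : ℝ, ((if a ≤ lam then (1:ℝ) else 0) - (if M ≤ lam then 1 else 0)) = M - a := by
  rw [psi_eq, integral_sub (ind_integrable a M) (ind_integrable M a), ind_integral, ind_integral]
  rcases le_total a M with h | h
  · rw [max_eq_left (by linarith), max_eq_right (by linarith)]
    linarith
  · rw [max_eq_right (by linarith), max_eq_left (by linarith)]
    linarith

open MeasureTheory in
lemma slice_repr (V : Matrix (Fin n) (Fin n) ℂ) {M0 Ms : Matrix (Fin n) (Fin n) ℂ}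
    (h0 : M0.IsHermitian) (hs : Ms.IsHermitian) :
    (fun lam : ℝ => ((V * specProj h0 lam).trace).re - ((V * specProj hs lam).trace).re)
      = fun lam : ℝ =>
        (∑ j, cj V h0 j * ((if h0.eigenvalues j ≤ lam then (1:ℝ) else 0)
            - (if (0:ℝ) ≤ lam then 1 else 0)))
        - ∑ j, cj V hs j * ((if hs.eigenvalues j ≤ lam then (1:ℝ) else 0)
            - (if (0:ℝ) ≤ lam then 1 else 0)) := by
  funext lam
  rw [trace_mul_specProj, trace_mul_specProj]
  simp only [mul_sub, Finset.sum_sub_distrib]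
  have hM : ∑ j, cj V h0 j * (if (0:ℝ) ≤ lam then (1:ℝ) else 0)
      = ∑ j, cj V hs j * (if (0:ℝ) ≤ lam then (1:ℝ) else 0) := by
    rw [← Finset.sum_mul, ← Finset.sum_mul, cj_sum, cj_sum]
  have l0 : ∑ j, (if h0.eigenvalues j ≤ lam then (1:ℝ) else 0) * cj V h0 j
      = ∑ j, cj V h0 j * (if h0.eigenvalues j ≤ lam then (1:ℝ) else 0) :=
    Finset.sum_congr rfl fun j _ => mul_comm _ _
  have ls : ∑ j, (if hs.eigenvalues j ≤ lam then (1:ℝ) else 0) * cj V hs j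
      = ∑ j, cj V hs j * (if hs.eigenvalues j ≤ lam then (1:ℝ) else 0) :=
    Finset.sum_congr rfl fun j _ => mul_comm _ _
  linarith [hM, l0, ls]

open MeasureTheory in
lemma slice_integrable (V : Matrix (Fin n) (Fin n) ℂ) {M0 Ms : Matrix (Fin n) (Fin n) ℂ}
    (h0 : M0.IsHermitian) (hs : Ms.IsHermitian) :
    Integrable (fun lam : ℝ =>
      ((V * specProj h0 lam).trace).re - ((V * specProj hs lam).trace).re) := by
  rw [slice_repr V h0 hs]
  refine Integrable.sub ?_ ?_ <;>
  · apply integrable_finset_sum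
    intro j _
    exact (psi_integrable _ 0).const_mul _

open MeasureTheory in
lemma slice_integral (V : Matrix (Fin n) (Fin n) ℂ) {M0 Ms : Matrix (Fin n) (Fin n) ℂ}
    (h0 : M0.IsHermitian) (hs : Ms.IsHermitian) :
    ∫ lam : ℝ, (((V * specProj h0 lam).trace).re - ((V * specProj hs lam).trace).re)
      = ((V * Ms).trace).re - ((V * M0).trace).re := by
  rw [slice_repr V h0 hs]
  rw [integral_sub (by apply integrable_finset_sum; intro j _; exact (psi_integrable _ 0).const_mul _)
    (by apply integrable_finset_sum; intro j _; exact (psi_integrable _ 0).const_mul _)]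
  rw [integral_finset_sum _ (fun j _ => (psi_integrable _ 0).const_mul _),
    integral_finset_sum _ (fun j _ => (psi_integrable _ 0).const_mul _)]
  have hv : ∀ (M' : Matrix (Fin n) (Fin n) ℂ) (h' : M'.IsHermitian),
      ∑ j, ∫ lam : ℝ, cj V h' j * ((if h'.eigenvalues j ≤ lam then (1:ℝ) else 0)
          - (if (0:ℝ) ≤ lam then 1 else 0))
        = (0:ℝ) * (V.trace).re - ((V * M').trace).re := by
    intro M' h'
    have hterm : ∀ j : Fin n, ∫ lam : ℝ, cj V h' j * ((if h'.eigenvalues j ≤ lam then (1:ℝ) else 0)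
        - (if (0:ℝ) ≤ lam then 1 else 0)) = cj V h' j * (0 - h'.eigenvalues j) := by
      intro j
      rw [MeasureTheory.integral_const_mul, psi_integral]
    simp_rw [hterm]
    have hp := trace_mul_pow V h' 1
    simp only [pow_one] at hp
    rw [hp, ← cj_sum V h']
    calc ∑ j, cj V h' j * (0 - h'.eigenvalues j)
        = ∑ j, ((0:ℝ) * cj V h' j - h'.eigenvalues j * cj V h' j) :=
          Finset.sum_congr rfl fun j _ => by ring
      _ = (0:ℝ) * (∑ j, cj V h' j) - ∑ j, h'.eigenvalues j * cj V h' j := by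
          rw [Finset.sum_sub_distrib, ← Finset.mul_sum]
  rw [hv M0 h0, hv Ms hs]
  ring

end Stmt6Aux

open Stmt6Aux MeasureTheory

/-- The Koplienko spectral shift function
`η(λ) = ∫₀¹ Tr(V(E₀(λ) − E_s(λ))) ds` of a pair of Hermitian matrices is non-negative,
integrable, and `∫_ℝ η(λ) dλ = ½ ‖V‖₂²` where `‖V‖₂² = Tr(V* V)`. -/
theorem stmt_6 {n : ℕ} (H₀ V : Matrix (Fin n) (Fin n) ℂ)
    (hH₀ : H₀.IsHermitian) (hV : V.IsHermitian)
    (hs' : ∀ s : ℝ, (H₀ + (s : ℂ) • V).IsHermitian)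
    (η : ℝ → ℝ)
    (hη : ∀ lam : ℝ, η lam =
      ∫ s in (0:ℝ)..1, ((V * (specProj (hs' 0) lam - specProj (hs' s) lam)).trace).re) :
    (∀ lam : ℝ, 0 ≤ η lam) ∧ MeasureTheory.Integrable η ∧
      ∫ lam : ℝ, η lam = (1 / 2) * ((Vᴴ * V).trace).re := by
  set φ : ℝ → ℝ → ℝ := fun s lam =>
    ((V * (specProj (hs' 0) lam - specProj (hs' s) lam)).trace).re with hφ
  -- Part 1 : nonnegativity
  have part1 : ∀ lam : ℝ, 0 ≤ η lam := by
    intro lam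
    rw [hη lam]
    apply intervalIntegral.integral_nonneg zero_le_one
    intro s hs
    rcases eq_or_lt_of_le hs.1 with h | h
    · subst h
      simp
    · exact integrand_nonneg H₀ V hs' lam h
  -- setup
  set μ1 : Measure ℝ := volume.restrict (Set.Ioc (0:ℝ) 1) with hμ1
  haveI : IsFiniteMeasure μ1 := by
    constructor
    rw [hμ1, Measure.restrict_apply_univ, Real.volume_Ioc]
    exact ENNReal.ofReal_lt_top
  set T : ℝ := ((Vᴴ * V).trace).re with hT
  -- slice facts
  have hphi_eq : ∀ s : ℝ, φ s = fun lam =>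
      ((V * specProj (hs' 0) lam).trace).re - ((V * specProj (hs' s) lam).trace).re := by
    intro s
    funext lam
    rw [hφ]
    exact trace_mul_sub_re V _ _
  have hslice_int : ∀ s : ℝ, Integrable (φ s) := by
    intro s
    rw [hphi_eq s]
    exact slice_integrable V (hs' 0) (hs' s)
  have hslice_val : ∀ s : ℝ, ∫ lam : ℝ, φ s lam = s * T := by
    intro s
    rw [hphi_eq s, slice_integral V (hs' 0) (hs' s)]
    have hdiff : (H₀ + (s : ℂ) • V) - (H₀ + ((0:ℝ) : ℂ) • V) = (s : ℂ) • V := by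
      push_cast
      simp
    have : ((V * (H₀ + (s : ℂ) • V)).trace).re - ((V * (H₀ + ((0:ℝ) : ℂ) • V)).trace).re
        = ((V * ((s : ℂ) • V)).trace).re := by
      rw [← trace_mul_sub_re V _ _, hdiff]
    rw [this]
    have hVV : Vᴴ * V = V * V := by rw [hV.eq]
    rw [hT, hVV, Matrix.mul_smul, Matrix.trace_smul]
    simp [Complex.smul_re]
  -- measurable
  have hmeas : Measurable (fun q : ℝ × ℝ => φ q.1 q.2) := meas_phi H₀ V hs'
  -- bound and support
  set SV : ℝ := ∑ k, ∑ l, ‖V k l‖ with hSV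
  set B : ℝ := ∑ i, ∑ k, (‖H₀ i k‖ + 1 * ‖V i k‖) with hB
  have hzero : ∀ s : ℝ, |s| ≤ 1 → ∀ lam : ℝ, lam ∉ Set.Icc (-B) B → φ s lam = 0 := by
    intro s hs lam hlam
    rw [Set.mem_Icc, not_and_or] at hlam
    have hEeq : specProj (hs' 0) lam = specProj (hs' s) lam := by
      rcases hlam with h | h
      · push_neg at h
        rw [specProj_eq_zero (hs' 0), specProj_eq_zero (hs' s)]
        · intro j
          have := eig_bound_family H₀ V hs' hs j
          have := (abs_le.mp this).1
          linarith
        · intro j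
          have := eig_bound_family H₀ V hs' (by simp : |(0:ℝ)| ≤ 1) j
          have := (abs_le.mp this).1
          linarith
      · push_neg at h
        rw [specProj_eq_one (hs' 0), specProj_eq_one (hs' s)]
        · intro j
          have := eig_bound_family H₀ V hs' hs j
          have := (abs_le.mp this).2
          linarith
        · intro j
          have := eig_bound_family H₀ V hs' (by simp : |(0:ℝ)| ≤ 1) j
          have := (abs_le.mp this).2
          linarith
    rw [hφ]
    simp [hEeq]
  set g : ℝ → ℝ := (Set.Icc (-B) B).indicator (fun _ => 2 * (n:ℝ) * SV) with hg
  have hbound : ∀ s : ℝ, |s| ≤ 1 → ∀ lam : ℝ, ‖φ s lam‖ ≤ g lam := by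
    intro s hs lam
    by_cases hmem : lam ∈ Set.Icc (-B) B
    · rw [hg, Set.indicator_of_mem hmem]
      rw [hphi_eq s, Real.norm_eq_abs]
      have h1 := trace_specProj_abs_le V (hs' 0) lam
      have h2 := trace_specProj_abs_le V (hs' s) lam
      rw [← hSV] at h1 h2
      calc |((V * specProj (hs' 0) lam).trace).re - ((V * specProj (hs' s) lam).trace).re|
          ≤ |((V * specProj (hs' 0) lam).trace).re| + |((V * specProj (hs' s) lam).trace).re| :=
            abs_sub _ _
        _ ≤ 2 * (n:ℝ) * SV := by linarith
    · rw [hzero s hs lam hmem, hg, Set.indicator_of_notMem hmem]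
      simp
  have hg_int : Integrable g := by
    rw [hg, integrable_indicator_iff measurableSet_Icc]
    exact integrableOn_const (by rw [Real.volume_Icc]; exact ENNReal.ofReal_ne_top)
  -- product integrability
  have hΦint : Integrable (fun q : ℝ × ℝ => φ q.1 q.2) (μ1.prod volume) := by
    rw [integrable_prod_iff hmeas.aestronglyMeasurable]
    constructor
    · exact Filter.Eventually.of_forall fun s => hslice_int s
    · refine Integrable.mono' (integrable_const (∫ lam : ℝ, g lam))
        ((hmeas.norm.aestronglyMeasurable).integral_prod_right') ?_
      have hmem : ∀ᵐ s ∂μ1, s ∈ Set.Ioc (0:ℝ) 1 := ae_restrict_mem measurableSet_Ioc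
      filter_upwards [hmem] with s hsmem
      have hs1 : |s| ≤ 1 := by
        rw [abs_le]
        constructor <;> [linarith [hsmem.1]; exact hsmem.2]
      have hnn : 0 ≤ ∫ lam : ℝ, ‖φ s lam‖ := integral_nonneg fun lam => norm_nonneg _
      rw [Real.norm_eq_abs, abs_of_nonneg hnn]
      exact integral_mono (hslice_int s).norm hg_int fun lam => hbound s hs1 lam
  -- rewrite η
  have hetaeq : η = fun lam => ∫ s, φ s lam ∂μ1 := by
    funext lam
    rw [hη lam, intervalIntegral.integral_of_le zero_le_one]
  have part2 : Integrable η := by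
    rw [hetaeq]
    exact hΦint.integral_prod_right
  refine ⟨part1, part2, ?_⟩
  -- the integral identity
  have hswap : ∫ lam : ℝ, ∫ s, φ s lam ∂μ1 = ∫ s, (∫ lam : ℝ, φ s lam) ∂μ1 :=
    (integral_integral_swap hΦint).symm
  rw [hetaeq]
  rw [hswap]
  have : ∫ s, (∫ lam : ℝ, φ s lam) ∂μ1 = ∫ s, s * T ∂μ1 := by
    refine integral_congr_ae (Filter.Eventually.of_forall fun s => ?_)
    exact hslice_val s
  rw [this, hμ1, ← intervalIntegral.integral_of_le zero_le_one,
    intervalIntegral.integral_mul_const, integral_id]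
  rw [hT]
  ring
end

section
/- Let H₀ be a bounded self-adjoint operator on a Hilbert space and V bounded. Then the map A ↦ e^{itA} is Fréchet differentiable at H₀ with D(e^{itH₀})·V = it ∫₀¹ e^{itαH₀} V e^{it(1−α)H₀} dα. -/
open NormedSpace intervalIntegral

namespace Stmt8Aux

variable {𝔸 : Type*} [NormedRing 𝔸] [NormedAlgebra ℝ 𝔸] [CompleteSpace 𝔸]

lemma lemA (X Y : 𝔸) (α : ℝ) :
    HasDerivAt (fun s : ℝ => exp (s • Y) * exp ((1 - s) • X))
      (exp (α • Y) * (Y - X) * exp ((1 - α) • X)) α := by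
  have h1 : HasDerivAt (fun s : ℝ => exp (s • Y)) (exp (α • Y) * Y) α :=
    hasDerivAt_exp_smul_const Y α
  have hc : HasDerivAt (fun s : ℝ => 1 - s) (-1) α := by
    simpa using (hasDerivAt_id α).const_sub (1:ℝ)
  have h2 : HasDerivAt (fun s : ℝ => exp ((1 - s) • X))
      (-(X * exp ((1 - α) • X))) α := by
    have := (hasDerivAt_exp_smul_const' X (1 - α)).scomp α hc
    simpa [Function.comp_def] using this
  convert h1.mul h2 using 1
  all_goals noncomm_ring

lemma contInt' (X Y B : 𝔸) :
    Continuous fun α : ℝ => exp (α • Y) * B * exp ((1 - α) • X) := by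
  have c1 : Continuous fun α : ℝ => exp (α • Y) :=
    (show Continuous (exp : 𝔸 → 𝔸) from by
      letI : NormedAlgebra ℚ 𝔸 := .restrictScalars ℚ ℝ 𝔸; exact exp_continuous).comp (continuous_id.smul continuous_const)
  have c2 : Continuous fun α : ℝ => exp ((1 - α) • X) :=
    (show Continuous (exp : 𝔸 → 𝔸) from by
      letI : NormedAlgebra ℚ 𝔸 := .restrictScalars ℚ ℝ 𝔸; exact exp_continuous).comp ((continuous_const.sub continuous_id).smul continuous_const)
  exact (c1.mul continuous_const).mul c2

lemma contInt (X Y : 𝔸) :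
    Continuous fun α : ℝ => exp (α • Y) * (Y - X) * exp ((1 - α) • X) :=
  contInt' X Y (Y - X)

lemma lemB (X Y : 𝔸) :
    exp Y - exp X
      = ∫ α in (0:ℝ)..1, exp (α • Y) * (Y - X) * exp ((1 - α) • X) := by
  have h := intervalIntegral.integral_eq_sub_of_hasDerivAt
    (f := fun s : ℝ => exp (s • Y) * exp ((1 - s) • X))
    (fun α _ => lemA X Y α) ((contInt X Y).intervalIntegrable 0 1)
  rw [h]
  simp [exp_zero]

lemma normExpLe (h1 : ‖(1:𝔸)‖ ≤ 1) (x : 𝔸) : ‖exp x‖ ≤ Real.exp ‖x‖ := by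
  rw [exp_eq_tsum ℝ]
  refine (norm_tsum_le_tsum_norm (norm_expSeries_summable' x)).trans ?_
  rw [Real.exp_eq_exp_ℝ, exp_eq_tsum_div]
  refine Summable.tsum_le_tsum (fun n => ?_) (norm_expSeries_summable' x)
    (Real.summable_pow_div_factorial ‖x‖)
  rw [norm_smul, norm_inv, Real.norm_natCast, div_eq_inv_mul]
  gcongr
  rcases Nat.eq_zero_or_pos n with rfl | hn
  · simpa using h1
  · exact norm_pow_le' x hn

lemma lemC (h1 : ‖(1:𝔸)‖ ≤ 1) (Z W : 𝔸) :
    ‖exp Z - exp W‖ ≤ ‖Z - W‖ * (Real.exp ‖Z‖ * Real.exp ‖W‖) := by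
  rw [lemB W Z]
  refine le_trans (intervalIntegral.norm_integral_le_of_norm_le_const
    (a := (0:ℝ)) (b := 1)
    (C := ‖Z - W‖ * (Real.exp ‖Z‖ * Real.exp ‖W‖))
    (f := fun α : ℝ => exp (α • Z) * (Z - W) * exp ((1 - α) • W)) ?_) (by simp)
  · intro α hα
    rw [Set.uIoc_of_le (by norm_num : (0:ℝ) ≤ 1)] at hα
    obtain ⟨h0, h1'⟩ := hα
    have e1 : ‖exp (α • Z)‖ ≤ Real.exp ‖Z‖ :=
      (normExpLe h1 _).trans (Real.exp_le_exp.2 (by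
        rw [norm_smul, Real.norm_eq_abs, abs_of_pos h0]
        nlinarith [norm_nonneg Z]))
    have e2 : ‖exp ((1 - α) • W)‖ ≤ Real.exp ‖W‖ :=
      (normExpLe h1 _).trans (Real.exp_le_exp.2 (by
        rw [norm_smul, Real.norm_eq_abs, abs_of_nonneg (by linarith)]
        nlinarith [norm_nonneg W]))
    calc ‖exp (α • Z) * (Z - W) * exp ((1 - α) • W)‖
        ≤ ‖exp (α • Z) * (Z - W)‖ * ‖exp ((1 - α) • W)‖ := norm_mul_le _ _
      _ ≤ (‖exp (α • Z)‖ * ‖Z - W‖) * ‖exp ((1 - α) • W)‖ := by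
          gcongr; exact norm_mul_le _ _
      _ ≤ (Real.exp ‖Z‖ * ‖Z - W‖) * Real.exp ‖W‖ := by
          gcongr
      _ = ‖Z - W‖ * (Real.exp ‖Z‖ * Real.exp ‖W‖) := by ring

lemma lemB' (X E : 𝔸) :
    exp (X + E) - exp X
      = ∫ α in (0:ℝ)..1, exp (α • (X + E)) * E * exp ((1 - α) • X) := by
  simpa using lemB X (X + E)

lemma lemD (h1 : ‖(1:𝔸)‖ ≤ 1) (X E B : 𝔸) :
    ‖∫ α in (0:ℝ)..1, (exp (α • (X + E)) - exp (α • X)) * B * exp ((1 - α) • X)‖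
      ≤ ‖E‖ * Real.exp (‖X‖ + ‖E‖) * Real.exp ‖X‖ * ‖B‖ * Real.exp ‖X‖ := by
  refine le_trans (intervalIntegral.norm_integral_le_of_norm_le_const
    (a := (0:ℝ)) (b := 1)
    (C := ‖E‖ * Real.exp (‖X‖ + ‖E‖) * Real.exp ‖X‖ * ‖B‖ * Real.exp ‖X‖) ?_) (by simp)
  intro α hα
  rw [Set.uIoc_of_le (by norm_num : (0:ℝ) ≤ 1)] at hα
  obtain ⟨h0, h1'⟩ := hα
  have hα0 : (0:ℝ) ≤ α := le_of_lt h0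
  have e0 : ‖exp (α • (X + E)) - exp (α • X)‖
      ≤ ‖E‖ * (Real.exp (‖X‖ + ‖E‖) * Real.exp ‖X‖) := by
    refine (lemC h1 _ _).trans ?_
    have hZW : ‖α • (X + E) - α • X‖ ≤ ‖E‖ := by
      rw [← smul_sub, add_sub_cancel_left, norm_smul, Real.norm_eq_abs, abs_of_nonneg hα0]
      nlinarith [norm_nonneg E]
    have hZ : ‖α • (X + E)‖ ≤ ‖X‖ + ‖E‖ := by
      rw [norm_smul, Real.norm_eq_abs, abs_of_nonneg hα0]
      nlinarith [norm_nonneg (X + E), norm_add_le X E, norm_nonneg X, norm_nonneg E]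
    have hW : ‖α • X‖ ≤ ‖X‖ := by
      rw [norm_smul, Real.norm_eq_abs, abs_of_nonneg hα0]
      nlinarith [norm_nonneg X]
    have := Real.exp_le_exp.2 hZ
    have := Real.exp_le_exp.2 hW
    gcongr
  have e2 : ‖exp ((1 - α) • X)‖ ≤ Real.exp ‖X‖ :=
    (normExpLe h1 _).trans (Real.exp_le_exp.2 (by
      rw [norm_smul, Real.norm_eq_abs, abs_of_nonneg (by linarith)]
      nlinarith [norm_nonneg X]))
  calc ‖(exp (α • (X + E)) - exp (α • X)) * B * exp ((1 - α) • X)‖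
      ≤ ‖(exp (α • (X + E)) - exp (α • X)) * B‖ * ‖exp ((1 - α) • X)‖ :=
        norm_mul_le _ _
    _ ≤ (‖exp (α • (X + E)) - exp (α • X)‖ * ‖B‖) * ‖exp ((1 - α) • X)‖ := by
        gcongr; exact norm_mul_le _ _
    _ ≤ (‖E‖ * (Real.exp (‖X‖ + ‖E‖) * Real.exp ‖X‖) * ‖B‖) * Real.exp ‖X‖ := by
        gcongr
    _ = ‖E‖ * Real.exp (‖X‖ + ‖E‖) * Real.exp ‖X‖ * ‖B‖ * Real.exp ‖X‖ := by ring

section CLM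

variable {𝓗 : Type*} [NormedAddCommGroup 𝓗] [InnerProductSpace ℂ 𝓗] [CompleteSpace 𝓗]

noncomputable def Lmap (X : 𝓗 →L[ℂ] 𝓗) (α : ℝ) : (𝓗 →L[ℂ] 𝓗) →L[ℂ] (𝓗 →L[ℂ] 𝓗) :=
  ((ContinuousLinearMap.mul ℂ (𝓗 →L[ℂ] 𝓗)).flip (exp ((1 - α) • X))).comp
    ((ContinuousLinearMap.mul ℂ (𝓗 →L[ℂ] 𝓗)) (exp (α • X)))

lemma Lmap_apply (X V : 𝓗 →L[ℂ] 𝓗) (α : ℝ) :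
    Lmap X α V = exp (α • X) * V * exp ((1 - α) • X) := rfl

lemma Lmap_continuous (X : 𝓗 →L[ℂ] 𝓗) : Continuous fun α : ℝ => Lmap X α := by
  have c1 : Continuous fun α : ℝ => exp (α • X) :=
    (show Continuous (exp : (𝓗 →L[ℂ] 𝓗) → (𝓗 →L[ℂ] 𝓗)) from by
      letI : NormedAlgebra ℚ (𝓗 →L[ℂ] 𝓗) := .restrictScalars ℚ ℂ (𝓗 →L[ℂ] 𝓗)
      exact exp_continuous).comp (continuous_id.smul continuous_const)
  have c2 : Continuous fun α : ℝ => exp ((1 - α) • X) :=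
    (show Continuous (exp : (𝓗 →L[ℂ] 𝓗) → (𝓗 →L[ℂ] 𝓗)) from by
      letI : NormedAlgebra ℚ (𝓗 →L[ℂ] 𝓗) := .restrictScalars ℚ ℂ (𝓗 →L[ℂ] 𝓗)
      exact exp_continuous).comp ((continuous_const.sub continuous_id).smul continuous_const)
  exact Continuous.clm_comp
    (((ContinuousLinearMap.mul ℂ (𝓗 →L[ℂ] 𝓗)).flip.continuous).comp c2)
    (((ContinuousLinearMap.mul ℂ (𝓗 →L[ℂ] 𝓗)).continuous).comp c1)

end CLM

end Stmt8Aux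

set_option maxHeartbeats 1000000 in
/-- The map `A ↦ e^{itA}` on bounded operators is Fréchet differentiable at a
bounded self-adjoint operator `H₀`, with derivative
`V ↦ it ∫₀¹ e^{itαH₀} V e^{it(1−α)H₀} dα` (Bochner integral in operator norm). -/
theorem stmt_8 {𝓗 : Type*} [NormedAddCommGroup 𝓗] [InnerProductSpace ℂ 𝓗] [CompleteSpace 𝓗]
    (H₀ : 𝓗 →L[ℂ] 𝓗) (hH₀ : IsSelfAdjoint H₀) (t : ℝ) :
    ∃ D : (𝓗 →L[ℂ] 𝓗) →L[ℂ] (𝓗 →L[ℂ] 𝓗),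
      HasFDerivAt (fun A : 𝓗 →L[ℂ] 𝓗 => NormedSpace.exp ((Complex.I * t) • A)) D H₀ ∧
      ∀ V : 𝓗 →L[ℂ] 𝓗,
        D V = (Complex.I * t) •
          ∫ α in (0:ℝ)..1,
            NormedSpace.exp (((α : ℂ) * Complex.I * t) • H₀) * V *
              NormedSpace.exp ((((1 : ℂ) - (α : ℂ)) * Complex.I * t) • H₀) := by
  classical
  have hexp : (exp : (𝓗 →L[ℂ] 𝓗) → (𝓗 →L[ℂ] 𝓗)) = exp := rfl
  have h1 : ‖(1:(𝓗 →L[ℂ] 𝓗))‖ ≤ 1 := ContinuousLinearMap.norm_id_le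
  set X : (𝓗 →L[ℂ] 𝓗) := (Complex.I * t) • H₀ with hX
  have c1 : Continuous fun α : ℝ => exp (α • X) :=
    (show Continuous (exp : (𝓗 →L[ℂ] 𝓗) → (𝓗 →L[ℂ] 𝓗)) from by
      letI : NormedAlgebra ℚ (𝓗 →L[ℂ] 𝓗) := .restrictScalars ℚ ℂ (𝓗 →L[ℂ] 𝓗)
      exact exp_continuous).comp (continuous_id.smul continuous_const)
  have c2 : Continuous fun α : ℝ => exp ((1 - α) • X) :=
    (show Continuous (exp : (𝓗 →L[ℂ] 𝓗) → (𝓗 →L[ℂ] 𝓗)) from by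
      letI : NormedAlgebra ℚ (𝓗 →L[ℂ] 𝓗) := .restrictScalars ℚ ℂ (𝓗 →L[ℂ] 𝓗)
      exact exp_continuous).comp ((continuous_const.sub continuous_id).smul continuous_const)
  have cL : Continuous fun α : ℝ => Stmt8Aux.Lmap X α := Stmt8Aux.Lmap_continuous X
  refine ⟨(Complex.I * t : ℂ) • ∫ α in (0:ℝ)..1,
      Stmt8Aux.Lmap X α, ?_, ?_⟩
  · -- differentiability
    have hD : ∀ B : (𝓗 →L[ℂ] 𝓗),
        ((Complex.I * t : ℂ) • ∫ α in (0:ℝ)..1,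
          Stmt8Aux.Lmap X α) B
        = (Complex.I * t : ℂ) •
            ∫ α in (0:ℝ)..1, exp (α • X) * B * exp ((1 - α) • X) := by
      intro B
      rw [ContinuousLinearMap.smul_apply,
        ContinuousLinearMap.intervalIntegral_apply (cL.intervalIntegrable 0 1)]
      simp [Stmt8Aux.Lmap_apply]
    rw [hasFDerivAt_iff_isLittleO_nhds_zero]
    have key : ∀ h : (𝓗 →L[ℂ] 𝓗),
        exp ((Complex.I * t) • (H₀ + h)) - exp ((Complex.I * t) • H₀)
          - ((Complex.I * t : ℂ) • ∫ α in (0:ℝ)..1,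
              Stmt8Aux.Lmap X α) h
        = (Complex.I * t : ℂ) • ∫ α in (0:ℝ)..1,
            (exp (α • (X + (Complex.I * t : ℂ) • h)) - exp (α • X)) * h
              * exp ((1 - α) • X) := by
      intro h
      set E : (𝓗 →L[ℂ] 𝓗) := (Complex.I * t : ℂ) • h with hE
      have hsmul : (Complex.I * t) • (H₀ + h) = X + E := by
        rw [smul_add]
      rw [hsmul, hexp, hD h, ← hX, Stmt8Aux.lemB' X E]
      have : ∀ α : ℝ, exp (α • (X + E)) * E * exp ((1 - α) • X)
          = (Complex.I * t : ℂ) • (exp (α • (X + E)) * h * exp ((1 - α) • X)) := by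
        intro α
        rw [hE, mul_smul_comm, smul_mul_assoc]
      rw [intervalIntegral.integral_congr (fun α _ => this α),
        intervalIntegral.integral_smul, ← smul_sub]
      congr 1
      rw [← intervalIntegral.integral_sub
        ((Stmt8Aux.contInt' X (X + E) h).intervalIntegrable 0 1)
        ((Stmt8Aux.contInt' X X h).intervalIntegrable 0 1)]
      refine intervalIntegral.integral_congr fun α _ => ?_
      rw [sub_mul, sub_mul]
    have hIt : ‖(Complex.I * (t:ℂ))‖ = |t| := by
      simp
    rw [Asymptotics.isLittleO_iff]
    intro c hc
    set K : ℝ := t ^ 2 * Real.exp (3 * ‖X‖ + |t|) with hKdef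
    have hK0 : 0 ≤ K := by positivity
    have hδ : 0 < min 1 (c / (K + 1)) := lt_min one_pos (div_pos hc (by positivity))
    filter_upwards [Metric.closedBall_mem_nhds (0:(𝓗 →L[ℂ] 𝓗)) hδ] with h hh
    rw [Metric.mem_closedBall, dist_zero_right] at hh
    have hh1 : ‖h‖ ≤ 1 := hh.trans (min_le_left _ _)
    have hh2 : ‖h‖ ≤ c / (K + 1) := hh.trans (min_le_right _ _)
    set E : (𝓗 →L[ℂ] 𝓗) := (Complex.I * t : ℂ) • h with hE
    have hEnorm : ‖E‖ = |t| * ‖h‖ := by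
      rw [hE, norm_smul, hIt]
    rw [key h]
    rw [norm_smul, hIt]
    have hb := Stmt8Aux.lemD h1 X E h
    have hmain : |t| * ‖∫ α in (0:ℝ)..1,
        (exp (α • (X + E)) - exp (α • X)) * h * exp ((1 - α) • X)‖
        ≤ |t| * (‖E‖ * Real.exp (‖X‖ + ‖E‖) * Real.exp ‖X‖ * ‖h‖ * Real.exp ‖X‖) :=
      mul_le_mul_of_nonneg_left hb (abs_nonneg t)
    refine hmain.trans ?_
    have hEle : ‖E‖ ≤ |t| := by
      rw [hEnorm]; nlinarith [abs_nonneg t]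
    have hexp1 : Real.exp (‖X‖ + ‖E‖) ≤ Real.exp (‖X‖ + |t|) :=
      Real.exp_le_exp.2 (by linarith)
    have hKbound : |t| * (‖E‖ * Real.exp (‖X‖ + ‖E‖) * Real.exp ‖X‖ * ‖h‖ * Real.exp ‖X‖)
        ≤ K * ‖h‖ * ‖h‖ := by
      rw [hEnorm, hKdef]
      have h3 : Real.exp (3 * ‖X‖ + |t|)
          = Real.exp (‖X‖ + |t|) * Real.exp ‖X‖ * Real.exp ‖X‖ := by
        rw [← Real.exp_add, ← Real.exp_add]; ring_nf
      have hE2 : Real.exp (‖X‖ + |t| * ‖h‖) ≤ Real.exp (‖X‖ + |t|) :=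
        Real.exp_le_exp.2 (by nlinarith [abs_nonneg t])
      calc |t| * (|t| * ‖h‖ * Real.exp (‖X‖ + |t| * ‖h‖) * Real.exp ‖X‖ * ‖h‖ * Real.exp ‖X‖)
          = (|t| * |t|) * (Real.exp (‖X‖ + |t| * ‖h‖) * Real.exp ‖X‖ * Real.exp ‖X‖)
              * ‖h‖ * ‖h‖ := by ring
        _ ≤ (|t| * |t|) * (Real.exp (‖X‖ + |t|) * Real.exp ‖X‖ * Real.exp ‖X‖)
              * ‖h‖ * ‖h‖ := by gcongr
        _ = t ^ 2 * Real.exp (3 * ‖X‖ + |t|) * ‖h‖ * ‖h‖ := by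
            rw [h3, ← sq_abs t]; ring
    refine hKbound.trans ?_
    have hcK : (K + 1) * ‖h‖ ≤ c :=
      (le_div_iff₀' (by positivity : (0:ℝ) < K + 1)).1 hh2
    nlinarith [norm_nonneg h, hK0]
  · -- the formula
    intro V
    rw [ContinuousLinearMap.smul_apply,
      ContinuousLinearMap.intervalIntegral_apply (cL.intervalIntegrable 0 1)]
    congr 1
    refine intervalIntegral.integral_congr fun α _ => ?_
    have key1 : ((α:ℂ) * Complex.I * t) • H₀ = α • X := by
      rw [hX, mul_assoc, ← smul_smul, Complex.coe_smul]
    have key2 : (((1:ℂ) - (α:ℂ)) * Complex.I * t) • H₀ = (1 - α) • X := by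
      rw [hX, mul_assoc, ← smul_smul, ← Complex.ofReal_one, ← Complex.ofReal_sub,
        Complex.coe_smul]
    rw [Stmt8Aux.Lmap_apply, hexp, key1, key2]
end

section
/- Let H₀ be a self-adjoint operator and V a bounded self-adjoint operator, H = H₀ + V. Then for t ∈ ℝ, e^{itH} − e^{itH₀} − it∫₀¹ e^{itαH₀} V e^{it(1−α)H₀} dα = (it)² ∫₀¹ α dα ∫₀¹ dβ e^{itαβH} V e^{itα(1−β)H₀} V e^{it(1−α)H₀}. -/
open NormedSpace intervalIntegral

section Aux

variable {A : Type*} [NormedRing A] [NormedAlgebra ℂ A] [CompleteSpace A]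

private lemma hasDerivAt_exp_real_aux (X : A) (α : ℝ) :
    HasDerivAt (fun u : ℝ => exp ((u : ℂ) • X)) (X * exp ((α : ℂ) • X)) α := by
  have h := (hasDerivAt_exp_smul_const' (𝕂 := ℂ) X ((α : ℝ) : ℂ)).scomp α
    Complex.ofRealCLM.hasDerivAt
  exact h.congr_deriv (by simp)

private lemma hasDerivAt_exp_real_aux' (X : A) (α : ℝ) :
    HasDerivAt (fun u : ℝ => exp ((1 - (u : ℂ)) • X)) (-(X * exp ((1 - (α : ℂ)) • X))) α := by
  have h1 : HasDerivAt (fun u : ℂ => exp (u • X)) (X * exp ((1 - (α : ℂ)) • X))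
      (1 - (α : ℂ)) := hasDerivAt_exp_smul_const' X _
  have h2 : HasDerivAt (fun u : ℝ => 1 - (u : ℂ)) (-1 : ℂ) α := by
    simpa using (Complex.ofRealCLM.hasDerivAt (x := α)).const_sub 1
  have h3 := h1.scomp α h2
  exact h3.congr_deriv (by simp)

private lemma integral_mul_right_aux {f : ℝ → A}
    (hf : IntervalIntegrable f MeasureTheory.volume 0 1) (C : A) :
    (∫ x in (0:ℝ)..1, f x) * C = ∫ x in (0:ℝ)..1, f x * C := by
  simpa using (ContinuousLinearMap.intervalIntegral_comp_comm
    ((ContinuousLinearMap.mul ℂ A).flip C) hf).symm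

/-- First-order Duhamel formula. -/
private lemma duhamel1_aux (H₀ V : A) (s : ℂ) :
    exp (s • (H₀ + V)) - exp (s • H₀) =
      s • ∫ α in (0:ℝ)..1,
        exp (((α : ℂ) * s) • (H₀ + V)) * V * exp (((1 - (α : ℂ)) * s) • H₀) := by
  set B := H₀ + V with hB
  set f : ℝ → A := fun α => exp ((α : ℂ) • (s • B)) * exp ((1 - (α : ℂ)) • (s • H₀)) with hf
  have hderiv : ∀ α : ℝ,
      HasDerivAt f (s • (exp ((α : ℂ) • (s • B)) * V * exp ((1 - (α : ℂ)) • (s • H₀)))) α := by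
    intro α
    have h := (hasDerivAt_exp_real_aux (s • B) α).mul (hasDerivAt_exp_real_aux' (s • H₀) α)
    convert h using 1
    · rfl
    set E₁ := exp ((α : ℂ) • (s • B))
    set E₂ := exp ((1 - (α : ℂ)) • (s • H₀))
    have hc : (s • B) * E₁ = E₁ * (s • B) :=
      ((((Commute.refl (s • B)).smul_right ((α : ℂ)))).exp_right).eq
    rw [hc]
    simp only [hB, mul_neg, smul_add, add_mul, mul_add, smul_mul_assoc, mul_smul_comm, mul_assoc]
    abel
  have hcont : Continuous fun α : ℝ =>
      s • (exp ((α : ℂ) • (s • B)) * V * exp ((1 - (α : ℂ)) • (s • H₀))) := by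
    apply Continuous.const_smul
    apply Continuous.mul
    apply Continuous.mul
    · exact (continuous_iff_continuousAt.2 fun x => (exp_analytic (𝕂 := ℂ) (x : A)).continuousAt).comp (by fun_prop)
    · exact continuous_const
    · exact (continuous_iff_continuousAt.2 fun x => (exp_analytic (𝕂 := ℂ) (x : A)).continuousAt).comp (by fun_prop)
  have hint : IntervalIntegrable (fun α : ℝ =>
      s • (exp ((α : ℂ) • (s • B)) * V * exp ((1 - (α : ℂ)) • (s • H₀))))
      MeasureTheory.volume 0 1 := hcont.intervalIntegrable _ _
  have hFTC := intervalIntegral.integral_eq_sub_of_hasDerivAt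
    (f := f) (a := (0:ℝ)) (b := 1) (fun α _ => hderiv α) hint
  rw [intervalIntegral.integral_smul] at hFTC
  have hf1 : f 1 = exp (s • B) := by simp [hf, NormedSpace.exp_zero]
  have hf0 : f 0 = exp (s • H₀) := by simp [hf, NormedSpace.exp_zero]
  rw [hf1, hf0] at hFTC
  rw [← hFTC]
  congr 1
  apply intervalIntegral.integral_congr
  intro α _
  simp only [mul_smul]

/-- Second-order Duhamel formula. -/
private lemma duhamel2_aux (H₀ V : A) (s : ℂ) :
    exp (s • (H₀ + V)) - exp (s • H₀) -
        s • ∫ α in (0:ℝ)..1,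
          exp (((α : ℂ) * s) • H₀) * V * exp (((1 - (α : ℂ)) * s) • H₀) =
      (s ^ 2) • ∫ α in (0:ℝ)..1, (α : ℂ) •
        ∫ β in (0:ℝ)..1,
          exp (((α : ℂ) * ((β : ℂ) * s)) • (H₀ + V)) * V *
            exp (((α : ℂ) * ((1 - (β : ℂ)) * s)) • H₀) * V *
              exp (((1 - (α : ℂ)) * s) • H₀) := by
  have cexp : ∀ (c : ℂ) (X : A), Continuous fun α : ℝ => exp (((α : ℂ) * c) • X) :=
    fun c X => (continuous_iff_continuousAt.2 fun x => (exp_analytic (𝕂 := ℂ) (x : A)).continuousAt).comp (by fun_prop)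
  have cexp' : ∀ (c : ℂ) (X : A), Continuous fun α : ℝ => exp (((1 - (α : ℂ)) * c) • X) :=
    fun c X => (continuous_iff_continuousAt.2 fun x => (exp_analytic (𝕂 := ℂ) (x : A)).continuousAt).comp (by fun_prop)
  have hintA : IntervalIntegrable (fun α : ℝ =>
      exp (((α : ℂ) * s) • (H₀ + V)) * V * exp (((1 - (α : ℂ)) * s) • H₀))
      MeasureTheory.volume 0 1 :=
    (((cexp s (H₀ + V)).mul continuous_const).mul (cexp' s H₀)).intervalIntegrable _ _
  have hintB : IntervalIntegrable (fun α : ℝ =>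
      exp (((α : ℂ) * s) • H₀) * V * exp (((1 - (α : ℂ)) * s) • H₀))
      MeasureTheory.volume 0 1 :=
    (((cexp s H₀).mul continuous_const).mul (cexp' s H₀)).intervalIntegrable _ _
  have key : ∀ α : ℝ,
      exp (((α : ℂ) * s) • (H₀ + V)) * V * exp (((1 - (α : ℂ)) * s) • H₀) -
          exp (((α : ℂ) * s) • H₀) * V * exp (((1 - (α : ℂ)) * s) • H₀) =
        s • ((α : ℂ) •
          ∫ β in (0:ℝ)..1,
            exp (((α : ℂ) * ((β : ℂ) * s)) • (H₀ + V)) * V *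
              exp (((α : ℂ) * ((1 - (β : ℂ)) * s)) • H₀) * V *
                exp (((1 - (α : ℂ)) * s) • H₀)) := by
    intro α
    have hg : IntervalIntegrable (fun β : ℝ =>
        exp (((β : ℂ) * ((α : ℂ) * s)) • (H₀ + V)) * V *
          exp (((1 - (β : ℂ)) * ((α : ℂ) * s)) • H₀)) MeasureTheory.volume 0 1 :=
      (((cexp ((α : ℂ) * s) (H₀ + V)).mul continuous_const).mul
        (cexp' ((α : ℂ) * s) H₀)).intervalIntegrable _ _
    rw [← sub_mul, ← sub_mul, duhamel1_aux H₀ V ((α : ℂ) * s), smul_mul_assoc, smul_mul_assoc,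
      mul_assoc, integral_mul_right_aux hg, mul_smul, smul_comm ((α : ℂ)) s]
    congr 2
    apply intervalIntegral.integral_congr
    intro β _
    simp only
    rw [show (β : ℂ) * ((α : ℂ) * s) = (α : ℂ) * ((β : ℂ) * s) by ring,
      show (1 - (β : ℂ)) * ((α : ℂ) * s) = (α : ℂ) * ((1 - (β : ℂ)) * s) by ring, ← mul_assoc]
  rw [duhamel1_aux H₀ V s, ← smul_sub, ← intervalIntegral.integral_sub hintA hintB,
    intervalIntegral.integral_congr (g := fun α : ℝ => s • ((α : ℂ) •
      ∫ β in (0:ℝ)..1,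
        exp (((α : ℂ) * ((β : ℂ) * s)) • (H₀ + V)) * V *
          exp (((α : ℂ) * ((1 - (β : ℂ)) * s)) • H₀) * V *
            exp (((1 - (α : ℂ)) * s) • H₀))) (fun α _ => key α),
    intervalIntegral.integral_smul, smul_smul, ← sq]

end Aux

/-- Second-order Duhamel formula: for self-adjoint `H₀`, bounded self-adjoint
`V` and `H = H₀ + V`,
`e^{itH} − e^{itH₀} − it∫₀¹ e^{itαH₀}Ve^{it(1−α)H₀}dα
  = (it)² ∫₀¹ α dα ∫₀¹ dβ e^{itαβH} V e^{itα(1−β)H₀} V e^{it(1−α)H₀}`. -/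
theorem stmt_9 {𝓗 : Type*} [NormedAddCommGroup 𝓗] [InnerProductSpace ℂ 𝓗] [CompleteSpace 𝓗]
    (H₀ V : 𝓗 →L[ℂ] 𝓗) (hH₀ : IsSelfAdjoint H₀) (hV : IsSelfAdjoint V) (t : ℝ)
    (H : 𝓗 →L[ℂ] 𝓗) (hH : H = H₀ + V) :
    NormedSpace.exp ((Complex.I * t) • H) - NormedSpace.exp ((Complex.I * t) • H₀) -
        (Complex.I * t) •
          ∫ α in (0:ℝ)..1,
            NormedSpace.exp (((α : ℂ) * Complex.I * t) • H₀) * V *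
              NormedSpace.exp ((((1 : ℂ) - (α : ℂ)) * Complex.I * t) • H₀) =
      ((Complex.I * t) ^ 2) •
        ∫ α in (0:ℝ)..1, (α : ℂ) •
          ∫ β in (0:ℝ)..1,
            NormedSpace.exp (((α : ℂ) * (β : ℂ) * Complex.I * t) • H) * V *
              NormedSpace.exp (((α : ℂ) * ((1 : ℂ) - (β : ℂ)) * Complex.I * t) • H₀) * V *
                NormedSpace.exp ((((1 : ℂ) - (α : ℂ)) * Complex.I * t) • H₀) := by
  subst hH
  simp only [mul_assoc]
  exact duhamel2_aux H₀ V (Complex.I * t)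
end

section
/- Let A be a self-adjoint operator on a separable Hilbert space with spectral measure F, let f₁,…,f_L be unit vectors, and ε > 0. Then there exists a finite-rank orthogonal projection P with range contained in Dom(A) such that ‖(I−P)f_l‖ < ε for all l, and (I−P)AP is a finite-rank operator with Hilbert–Schmidt norm ‖(I−P)AP‖₂ < ε. -/
open scoped InnerProductSpace
open Filter

namespace Stmt12
noncomputable section

/-- Trapezoid: equals 1 on `(-∞, t + w/2]`, 0 on `[t + w, ∞)`. -/
def psi (t w x : ℝ) : ℝ := max 0 (min 1 (2 + 2 * (t - x) / w))

lemma psi_nonneg (t w x : ℝ) : 0 ≤ psi t w x := le_max_left _ _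

lemma psi_le_one (t w x : ℝ) : psi t w x ≤ 1 := max_le zero_le_one (min_le_left _ _)

lemma psi_continuous (t w : ℝ) : Continuous (psi t w) := by
  unfold psi
  fun_prop

lemma psi_eq_one {t w x : ℝ} (hw : 0 < w) (hx : x ≤ t + w / 2) : psi t w x = 1 := by
  have h1 : (1 : ℝ) ≤ 2 + 2 * (t - x) / w := by
    have h2 : (-1 : ℝ) ≤ 2 * (t - x) / w := by
      rw [le_div_iff₀ hw]; nlinarith
    linarith
  unfold psi
  rw [min_eq_left h1, max_eq_right zero_le_one]

lemma psi_eq_zero {t w x : ℝ} (hw : 0 < w) (hx : t + w ≤ x) : psi t w x = 0 := by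
  have h1 : 2 + 2 * (t - x) / w ≤ 0 := by
    have : 2 * (t - x) / w ≤ -2 := by
      rw [div_le_iff₀ hw]; nlinarith
    linarith
  unfold psi
  rw [max_eq_left]
  exact le_trans (min_le_right _ _) h1

lemma psi_lt_top_of_ne_zero {t w x : ℝ} (hw : 0 < w) (h : psi t w x ≠ 0) : x < t + w := by
  by_contra hc
  exact h (psi_eq_zero hw (not_lt.mp hc))

lemma psi_gt_of_ne_one {t w x : ℝ} (hw : 0 < w) (h : psi t w x ≠ 1) : t + w / 2 < x := by
  by_contra hc
  exact h (psi_eq_one hw (not_lt.mp hc))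

lemma psi_mono_w {t w w' x : ℝ} (hw' : 0 < w') (h : w' ≤ w) : psi t w' x ≤ psi t w x := by
  have hw : 0 < w := lt_of_lt_of_le hw' h
  rcases le_or_gt x t with hx | hx
  · rw [psi_eq_one hw (by linarith)]; exact psi_le_one _ _ _
  · have key : 2 * (t - x) / w' ≤ 2 * (t - x) / w := by
      rw [div_le_div_iff₀ hw' hw]; nlinarith
    exact max_le_max le_rfl (min_le_min le_rfl (by linarith))

lemma psi_mono_t {s t w x : ℝ} (hw : 0 < w) (h : s ≤ t) : psi s w x ≤ psi t w x := by
  have key : 2 * (s - x) / w ≤ 2 * (t - x) / w := by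
    rw [div_le_div_iff₀ hw hw]; nlinarith
  exact max_le_max le_rfl (min_le_min le_rfl (by linarith))

lemma psi_mul_psi {s t w w' x : ℝ} (hw' : 0 < w') (hw : 0 < w) (h : s + w' ≤ t + w / 2) :
    psi s w' x * psi t w x = psi s w' x := by
  by_cases h0 : psi s w' x = 0
  · rw [h0, zero_mul]
  · rw [psi_eq_one hw (le_trans (psi_lt_top_of_ne_zero hw' h0).le h), mul_one]


/-- the width sequence -/
def wd (n : ℕ) : ℝ := (1 / 2 : ℝ) ^ n

lemma wd_pos (n : ℕ) : 0 < wd n := by unfold wd; positivity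

lemma wd_le_one (n : ℕ) : wd n ≤ 1 :=
  pow_le_one₀ (by norm_num) (by norm_num)

lemma wd_antitone : Antitone wd := fun m n h =>
  pow_le_pow_of_le_one (by norm_num) (by norm_num) h

lemma wd_succ (n : ℕ) : wd (n + 1) = wd n / 2 := by
  simp [wd, pow_succ]; ring

lemma wd_tendsto : Filter.Tendsto wd Filter.atTop (nhds 0) :=
  tendsto_pow_atTop_nhds_zero_of_lt_one (by norm_num) (by norm_num)


variable {H : Type*} [NormedAddCommGroup H] [InnerProductSpace ℂ H] [CompleteSpace H]

section S
variable (A : H →L[ℂ] H)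

variable (A : H →L[ℂ] H)

/-- quadratic form of cfc, real part. -/
def qf (g : ℝ → ℝ) (x : H) : ℝ := RCLike.re ⟪cfc g A x, x⟫_ℂ

lemma qf_nonneg' {g : ℝ → ℝ} (hg : ∀ y ∈ spectrum ℝ A, 0 ≤ g y) (x : H) : 0 ≤ qf A g x :=
  ((ContinuousLinearMap.nonneg_iff_isPositive _).mp (cfc_nonneg hg)).re_inner_nonneg_left x

lemma qf_mono' {g h : ℝ → ℝ} (hg : Continuous g) (hh : Continuous h)
    (hgh : ∀ y ∈ spectrum ℝ A, g y ≤ h y) (x : H) : qf A g x ≤ qf A h x := by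
  have h0 : 0 ≤ qf A (fun y => h y - g y) x :=
    qf_nonneg' A (fun y hy => sub_nonneg.mpr (hgh y hy)) x
  have hsub : cfc (fun y => h y - g y) A = cfc h A - cfc g A :=
    cfc_sub _ _ A (hh.continuousOn) (hg.continuousOn)
  unfold qf at *
  rw [hsub] at h0
  simp only [ContinuousLinearMap.sub_apply, inner_sub_left, map_sub] at h0
  linarith

lemma norm_cfc_apply_sq' {g : ℝ → ℝ} (hg : Continuous g) (x : H) :
    ‖cfc g A x‖ ^ 2 = qf A (fun y => g y * g y) x := by
  have hsa : IsSelfAdjoint (cfc g A) := cfc_predicate g A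
  have hmul : cfc (fun y => g y * g y) A = cfc g A * cfc g A :=
    cfc_mul _ _ A (hg.continuousOn) (hg.continuousOn)
  unfold qf
  rw [hmul]
  have h2 := hsa.isSymmetric (cfc g A x) x
  rw [ContinuousLinearMap.mul_apply]
  rw [show ⟪(cfc g A) ((cfc g A) x), x⟫_ℂ = ⟪(cfc g A) x, (cfc g A) x⟫_ℂ from h2]
  rw [inner_self_eq_norm_sq]


lemma qf_sub (g h : ℝ → ℝ) (hg : Continuous g) (hh : Continuous h) (x : H) :
    qf A (fun y => g y - h y) x = qf A g x - qf A h x := by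
  unfold qf
  rw [cfc_sub _ _ A hg.continuousOn hh.continuousOn]
  simp [ContinuousLinearMap.sub_apply, inner_sub_left]

lemma qf_const_mul (c : ℝ) (g : ℝ → ℝ) (hg : Continuous g) (x : H) :
    qf A (fun y => c * g y) x = c * qf A g x := by
  unfold qf
  rw [cfc_const_mul c g A hg.continuousOn]
  rw [ContinuousLinearMap.smul_apply]
  rw [show (c : ℝ) • (cfc g A x) = (c : ℂ) • (cfc g A x) from (Complex.coe_smul c _).symm]
  rw [inner_smul_left]
  simp [RCLike.conj_ofReal, RCLike.re_ofReal_mul]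

/-- the approximants to the spectral projection `χ_{(-∞,t]}(A)`. -/
def TT (t : ℝ) (n : ℕ) : H →L[ℂ] H := cfc (psi t (wd n)) A

/-- the quadratic form sequence -/
def qs (t : ℝ) (x : H) (n : ℕ) : ℝ := qf A (psi t (wd n)) x

lemma qs_antitone (t : ℝ) (x : H) : Antitone (qs A t x) := fun n m h =>
  qf_mono' A (psi_continuous t (wd m)) (psi_continuous t (wd n))
    (fun y _ => psi_mono_w (wd_pos m) (wd_antitone h)) x

lemma qs_nonneg (t : ℝ) (x : H) (n : ℕ) : 0 ≤ qs A t x n :=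
  qf_nonneg' A (fun y _ => psi_nonneg t (wd n) y) x

/-- limit of the quadratic forms -/
def qlim (t : ℝ) (x : H) : ℝ := ⨅ n, qs A t x n

lemma qs_bddBelow (t : ℝ) (x : H) : BddBelow (Set.range (qs A t x)) :=
  ⟨0, by rintro r ⟨n, rfl⟩; exact qs_nonneg A t x n⟩

lemma qs_tendsto (t : ℝ) (x : H) :
    Tendsto (qs A t x) atTop (nhds (qlim A t x)) :=
  tendsto_atTop_ciInf (qs_antitone A t x) (qs_bddBelow A t x)

lemma qlim_le (t : ℝ) (x : H) (n : ℕ) : qlim A t x ≤ qs A t x n :=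
  ciInf_le (qs_bddBelow A t x) n

lemma norm_TT_sub_sq_le (t : ℝ) (x : H) {n m : ℕ} (h : n ≤ m) :
    ‖TT A t n x - TT A t m x‖ ^ 2 ≤ qs A t x n - qs A t x m := by
  have hc : Continuous (fun y => psi t (wd n) y - psi t (wd m) y) :=
    (psi_continuous t (wd n)).sub (psi_continuous t (wd m))
  have h1 : TT A t n x - TT A t m x = cfc (fun y => psi t (wd n) y - psi t (wd m) y) A x := by
    rw [cfc_sub _ _ A (psi_continuous t (wd n)).continuousOn (psi_continuous t (wd m)).continuousOn]
    simp [TT]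
  rw [h1, norm_cfc_apply_sq' A hc]
  have h2 : qf A (fun y => psi t (wd n) y - psi t (wd m) y) x = qs A t x n - qs A t x m :=
    qf_sub A _ _ (psi_continuous t (wd n)) (psi_continuous t (wd m)) x
  rw [← h2]
  refine qf_mono' A (hc.mul hc) hc (fun y _ => ?_) x
  have h3 : 0 ≤ psi t (wd n) y - psi t (wd m) y :=
    sub_nonneg.mpr (psi_mono_w (wd_pos m) (wd_antitone h))
  have h4 : psi t (wd n) y - psi t (wd m) y ≤ 1 :=
    le_trans (by linarith [psi_nonneg t (wd m) y]) (psi_le_one t (wd n) y)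
  simp only [Pi.mul_apply]
  nlinarith

lemma TT_cauchy (t : ℝ) (x : H) : CauchySeq (fun n => TT A t n x) := by
  rw [Metric.cauchySeq_iff]
  intro ε hε
  have hq : CauchySeq (qs A t x) := (qs_tendsto A t x).cauchySeq
  obtain ⟨N, hN⟩ := Metric.cauchySeq_iff.mp hq (ε ^ 2) (by positivity)
  refine ⟨N, fun m hm n hn => ?_⟩
  wlog hle : n ≤ m generalizing m n
  · rw [dist_comm]; exact this n hn m hm (le_of_not_ge hle)
  have h1 := norm_TT_sub_sq_le A t x hle
  have h2 := hN m hm n hn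
  rw [Real.dist_eq] at h2
  rw [dist_eq_norm]
  have h3 : ‖TT A t m x - TT A t n x‖ ^ 2 ≤ qs A t x n - qs A t x m := by
    rwa [norm_sub_rev]
  refine lt_of_pow_lt_pow_left₀ 2 hε.le ?_
  linarith [neg_abs_le (qs A t x m - qs A t x n)]

/-- `Qv A t x` is `χ_{(-∞,t]}(A) x`, as a strong limit. -/
def Qv (t : ℝ) (x : H) : H := (cauchySeq_tendsto_of_complete (TT_cauchy A t x)).choose

lemma Qv_tendsto (t : ℝ) (x : H) :
    Tendsto (fun n => TT A t n x) atTop (nhds (Qv A t x)) :=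
  (cauchySeq_tendsto_of_complete (TT_cauchy A t x)).choose_spec

lemma Qv_add (t : ℝ) (x y : H) : Qv A t (x + y) = Qv A t x + Qv A t y := by
  refine tendsto_nhds_unique (Qv_tendsto A t (x + y)) ?_
  have : (fun n => TT A t n (x + y)) = fun n => TT A t n x + TT A t n y := by
    funext n; exact map_add _ _ _
  rw [this]
  exact (Qv_tendsto A t x).add (Qv_tendsto A t y)

lemma Qv_smul (t : ℝ) (c : ℂ) (x : H) : Qv A t (c • x) = c • Qv A t x := by
  refine tendsto_nhds_unique (Qv_tendsto A t (c • x)) ?_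
  have : (fun n => TT A t n (c • x)) = fun n => c • TT A t n x := by
    funext n; exact map_smul _ _ _
  rw [this]
  exact (Qv_tendsto A t x).const_smul c


variable (hA : IsSelfAdjoint A) [Nontrivial H]

variable (hA : IsSelfAdjoint A) [Nontrivial H]

lemma spectrum_abs_le {y : ℝ} (hy : y ∈ spectrum ℝ A) : |y| ≤ ‖A‖ := by
  simpa [Real.norm_eq_abs] using spectrum.norm_le_norm_of_mem hy

include hA in
lemma Qv_eq_self {t : ℝ} (ht : ‖A‖ ≤ t) (x : H) : Qv A t x = x := by
  refine tendsto_nhds_unique (Qv_tendsto A t x) ?_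
  have hTT : ∀ n, TT A t n = 1 := by
    intro n
    have h1 : cfc (psi t (wd n)) A = cfc (fun _ : ℝ => (1:ℝ)) A := by
      refine cfc_congr fun y hy => ?_
      refine psi_eq_one (wd_pos n) ?_
      have := spectrum_abs_le A hy
      have := (abs_le.mp this).2
      have := wd_pos n
      linarith
    rw [TT, h1, cfc_const_one ℝ A]
  simp only [hTT, ContinuousLinearMap.one_apply]
  exact tendsto_const_nhds

include hA in
lemma Qv_eq_zero {t : ℝ} (ht : t ≤ -‖A‖ - 1) (x : H) : Qv A t x = 0 := by
  refine tendsto_nhds_unique (Qv_tendsto A t x) ?_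
  have hTT : ∀ n, TT A t n = 0 := by
    intro n
    have h1 : cfc (psi t (wd n)) A = cfc (fun _ : ℝ => (0:ℝ)) A := by
      refine cfc_congr fun y hy => ?_
      refine psi_eq_zero (wd_pos n) ?_
      have h2 := (abs_le.mp (spectrum_abs_le A hy)).1
      have h3 := wd_le_one n
      linarith
    have h0 : (fun _ : ℝ => (0:ℝ)) = (0 : ℝ → ℝ) := rfl
    rw [TT, h1, h0, cfc_zero ℝ A]
  simp only [hTT, ContinuousLinearMap.zero_apply]
  exact tendsto_const_nhds

/-- difference vector: `χ_{(s,t]}(A) x`. -/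
def Ev (s t : ℝ) (x : H) : H := Qv A t x - Qv A s x

/-- `Ev` as the limit of `cfc` of the difference of trapezoids. -/
lemma Ev_tendsto (s t : ℝ) (x : H) :
    Tendsto (fun n => cfc (fun y => psi t (wd n) y - psi s (wd n) y) A x) atTop
      (nhds (Ev A s t x)) := by
  have h : ∀ n, cfc (fun y => psi t (wd n) y - psi s (wd n) y) A x = TT A t n x - TT A s n x := by
    intro n
    rw [cfc_sub _ _ A (psi_continuous t (wd n)).continuousOn (psi_continuous s (wd n)).continuousOn]
    simp [TT]
  simp only [h]
  exact (Qv_tendsto A t x).sub (Qv_tendsto A s x)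

lemma Ev_add (s t : ℝ) (x y : H) : Ev A s t (x + y) = Ev A s t x + Ev A s t y := by
  unfold Ev; rw [Qv_add, Qv_add]; abel

lemma Ev_smul (s t : ℝ) (c : ℂ) (x : H) : Ev A s t (c • x) = c • Ev A s t x := by
  unfold Ev; rw [Qv_smul, Qv_smul, smul_sub]

lemma Ev_def (s t : ℝ) (x : H) : Ev A s t x = Qv A t x - Qv A s x := rfl

include hA in
/-- Key estimate: vectors in the range of `Ev s t` are approximate eigenvectors. -/
lemma eigen_approx {s t : ℝ} (hst : s < t) (x : H) :
    ‖A (Ev A s t x) - (((s + t) / 2 : ℝ) : ℂ) • Ev A s t x‖ ≤ (t - s) / 2 * ‖Ev A s t x‖ := by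
  set lam : ℝ := (s + t) / 2 with hlam
  set h : ℕ → ℝ → ℝ := fun n y => psi t (wd n) y - psi s (wd n) y with hh
  have hcont : ∀ n, Continuous (h n) := fun n =>
    (psi_continuous t (wd n)).sub (psi_continuous s (wd n))
  set g : ℕ → ℝ → ℝ := fun n y => (y - lam) * h n y with hg
  have hgcont : ∀ n, Continuous (g n) := fun n => (continuous_id.sub continuous_const).mul (hcont n)
  -- pointwise bound
  have hpt : ∀ n y, g n y * g n y ≤ ((t - s) / 2 + wd n) * ((t - s) / 2 + wd n) * (h n y * h n y) := by
    intro n y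
    by_cases h0 : h n y = 0
    · simp [hg, h0]
    · have hz1 : psi s (wd n) y ≠ 1 := by
        intro hc
        apply h0
        have := psi_le_one t (wd n) y
        have h2 : psi s (wd n) y ≤ psi t (wd n) y := psi_mono_t (wd_pos n) hst.le
        simp only [hh]
        rw [hc] at h2 ⊢
        linarith
      have hz2 : psi t (wd n) y ≠ 0 := by
        intro hc
        apply h0
        have h2 : psi s (wd n) y ≤ psi t (wd n) y := psi_mono_t (wd_pos n) hst.le
        have := psi_nonneg s (wd n) y
        simp only [hh]
        rw [hc] at h2 ⊢
        linarith
      have hy1 : s + wd n / 2 < y := psi_gt_of_ne_one (wd_pos n) hz1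
      have hy2 : y < t + wd n := psi_lt_top_of_ne_zero (wd_pos n) hz2
      have habs : |y - lam| ≤ (t - s) / 2 + wd n := by
        rw [abs_le]
        constructor <;> nlinarith [wd_pos n]
      have : (y - lam) * (y - lam) ≤ ((t - s) / 2 + wd n) * ((t - s) / 2 + wd n) := by
        nlinarith [abs_nonneg (y - lam), sq_abs (y - lam)]
      simp only [hg]
      nlinarith [mul_le_mul_of_nonneg_right this (mul_self_nonneg (h n y)),
        mul_self_nonneg (h n y)]
  -- norm bound for each n
  have hbd : ∀ n, ‖cfc (g n) A x‖ ≤ ((t - s) / 2 + wd n) * ‖cfc (h n) A x‖ := by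
    intro n
    have h1 : ‖cfc (g n) A x‖ ^ 2 ≤ (((t - s) / 2 + wd n) * ‖cfc (h n) A x‖) ^ 2 := by
      rw [norm_cfc_apply_sq' A (hgcont n) x]
      have h2 : qf A (fun y => g n y * g n y) x ≤
          qf A (fun y => ((t - s) / 2 + wd n) * (((t - s) / 2 + wd n) * (h n y * h n y))) x := by
        refine qf_mono' A ((hgcont n).mul (hgcont n)) (by fun_prop) (fun y _ => ?_) x
        calc g n y * g n y ≤ ((t - s) / 2 + wd n) * ((t - s) / 2 + wd n) * (h n y * h n y) :=
              hpt n y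
        _ = ((t - s) / 2 + wd n) * (((t - s) / 2 + wd n) * (h n y * h n y)) := by ring
      refine le_trans h2 ?_
      rw [qf_const_mul A _ _ (by fun_prop) x, qf_const_mul A _ _ (by fun_prop) x]
      rw [← norm_cfc_apply_sq' A (hcont n) x]
      have hhn : 0 ≤ (t - s) / 2 + wd n := by nlinarith [wd_pos n]
      have : 0 ≤ ‖cfc (h n) A x‖ ^ 2 := by positivity
      nlinarith
    have hpos : 0 ≤ ((t - s) / 2 + wd n) * ‖cfc (h n) A x‖ := by
      have : 0 ≤ (t - s) / 2 + wd n := by nlinarith [wd_pos n]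
      positivity
    exact (pow_le_pow_iff_left₀ (norm_nonneg _) hpos (by norm_num)).mp h1
  -- limits
  have hEv := Ev_tendsto A s t x
  have hL : Tendsto (fun n => cfc (g n) A x) atTop
      (nhds (A (Ev A s t x) - ((lam : ℝ) : ℂ) • Ev A s t x)) := by
    have hrw : ∀ n, cfc (g n) A x = A (cfc (h n) A x) - ((lam : ℝ) : ℂ) • cfc (h n) A x := by
      intro n
      have e1 : g n = fun y => y * h n y - lam * h n y := by
        funext y; simp only [hg]; ring
      rw [e1, cfc_sub _ _ A (by fun_prop) (by fun_prop),
        cfc_mul _ _ A (by fun_prop) (by fun_prop), cfc_id' ℝ A,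
        cfc_const_mul lam (h n) A (hcont n).continuousOn]
      simp only [ContinuousLinearMap.sub_apply, ContinuousLinearMap.mul_apply,
        ContinuousLinearMap.smul_apply]
      rw [Complex.coe_smul]
    simp only [hrw]
    exact ((A.continuous.tendsto _).comp hEv).sub (hEv.const_smul _)
  have hR : Tendsto (fun n => ((t - s) / 2 + wd n) * ‖cfc (h n) A x‖) atTop
      (nhds ((t - s) / 2 * ‖Ev A s t x‖)) := by
    have h1 : Tendsto (fun n => (t - s) / 2 + wd n) atTop (nhds ((t - s) / 2)) := by
      simpa using (tendsto_const_nhds (x := (t - s)/2)).add wd_tendsto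
    exact h1.mul hEv.norm
  exact le_of_tendsto_of_tendsto hL.norm hR (Filter.Eventually.of_forall hbd)

include hA in
/-- Key orthogonality: spectral pieces over disjoint intervals are orthogonal. -/
lemma ev_orthogonal {s t s' t' : ℝ} (hst : s < t) (hts' : t ≤ s') (hs't' : s' < t')
    (x y : H) : ⟪Ev A s t x, Ev A s' t' y⟫_ℂ = 0 := by
  set h : ℕ → ℝ → ℝ := fun n z => psi t (wd n) z - psi s (wd n) z with hh
  set h' : ℕ → ℝ → ℝ := fun m z => psi t' (wd m) z - psi s' (wd m) z with hh'
  have hcont : ∀ n, Continuous (h n) := fun n =>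
    (psi_continuous t (wd n)).sub (psi_continuous s (wd n))
  have hcont' : ∀ m, Continuous (h' m) := fun m =>
    (psi_continuous t' (wd m)).sub (psi_continuous s' (wd m))
  -- Step A: pointwise/quadratic bound
  have stepA : ∀ n m : ℕ, n + 1 ≤ m →
      ‖cfc (h (n+1)) A (cfc (h' m) A y)‖ ^ 2 ≤ qs A t y n - qs A t y (m+1) := by
    intro n m hnm
    have hcomp : cfc (h (n+1)) A (cfc (h' m) A y) =
        cfc (fun z => h (n+1) z * h' m z) A y := by
      rw [cfc_mul _ _ A (hcont (n+1)).continuousOn (hcont' m).continuousOn]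
      rfl
    rw [hcomp, norm_cfc_apply_sq' A (g := fun z => h (n+1) z * h' m z) ((hcont (n+1)).mul (hcont' m))]
    have hq : qs A t y n - qs A t y (m+1) =
        qf A (fun z => psi t (wd n) z - psi t (wd (m+1)) z) y := by
      rw [qf_sub A _ _ (psi_continuous t (wd n)) (psi_continuous t (wd (m+1)))]
      rfl
    rw [hq]
    refine qf_mono' A (by have := hcont (n+1); have := hcont' m; fun_prop)
      ((psi_continuous t (wd n)).sub (psi_continuous t (wd (m+1)))) (fun z _ => ?_) y
    set G := h (n+1) z * h' m z with hG
    by_cases hG0 : G = 0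
    · rw [hG0]
      simp only [mul_zero, zero_mul]
      exact sub_nonneg.mpr (psi_mono_w (wd_pos (m+1)) (wd_antitone (by omega)))
    · have hfac : h (n+1) z ≠ 0 ∧ h' m z ≠ 0 := by
        constructor <;> (intro hc; apply hG0; simp [hG, hc])
      -- z < t + wd (n+1)  hence  psi t (wd n) z = 1
      have hz1 : psi t (wd (n+1)) z ≠ 0 := by
        intro hc
        refine hfac.1 ?_
        have h2 : psi s (wd (n+1)) z ≤ psi t (wd (n+1)) z := psi_mono_t (wd_pos _) hst.le
        have := psi_nonneg s (wd (n+1)) z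
        simp only [hh]; rw [hc] at h2 ⊢; linarith
      have hzlt : z < t + wd (n+1) := psi_lt_top_of_ne_zero (wd_pos _) hz1
      have hpsi1 : psi t (wd n) z = 1 := by
        refine psi_eq_one (wd_pos n) ?_
        rw [wd_succ] at hzlt; linarith
      -- z > s' + wd m / 2  hence  psi t (wd (m+1)) z = 0
      have hz2 : psi s' (wd m) z ≠ 1 := by
        intro hc
        refine hfac.2 ?_
        have h2 : psi s' (wd m) z ≤ psi t' (wd m) z := psi_mono_t (wd_pos _) hs't'.le
        have := psi_le_one t' (wd m) z
        simp only [hh']; rw [hc] at h2 ⊢; linarith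
      have hzgt : s' + wd m / 2 < z := psi_gt_of_ne_one (wd_pos _) hz2
      have hpsi0 : psi t (wd (m+1)) z = 0 := by
        refine psi_eq_zero (wd_pos _) ?_
        rw [wd_succ]
        linarith
      rw [Pi.sub_apply, hpsi1, hpsi0]
      -- G ∈ [0,1] so G * G ≤ 1
      have hG1 : h (n+1) z ≤ 1 := by
        have := psi_le_one t (wd (n+1)) z
        have := psi_nonneg s (wd (n+1)) z
        simp only [hh]; linarith
      have hG2 : 0 ≤ h (n+1) z := by
        have := psi_mono_t (w := wd (n+1)) (wd_pos _) hst.le (x := z)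
        simp only [hh]; linarith
      have hG1' : h' m z ≤ 1 := by
        have := psi_le_one t' (wd m) z
        have := psi_nonneg s' (wd m) z
        simp only [hh']; linarith
      have hG2' : 0 ≤ h' m z := by
        have := psi_mono_t (w := wd m) (wd_pos _) hs't'.le (x := z)
        simp only [hh']; linarith
      have hp1 : h (n+1) z * h' m z ≤ 1 := mul_le_one₀ hG1 hG2' hG1'
      have hp0 : 0 ≤ h (n+1) z * h' m z := mul_nonneg hG2 hG2'
      simp only [hG]
      nlinarith
  -- Step B: bound with the limit vector
  have stepB : ∀ n : ℕ, ‖cfc (h (n+1)) A (Ev A s' t' y)‖ ^ 2 ≤ qs A t y n - qlim A t y := by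
    intro n
    have hEv' := Ev_tendsto A s' t' y
    have hL : Tendsto (fun m => ‖cfc (h (n+1)) A (cfc (h' m) A y)‖ ^ 2) atTop
        (nhds (‖cfc (h (n+1)) A (Ev A s' t' y)‖ ^ 2)) := by
      exact ((((cfc (h (n+1)) A).continuous.tendsto _).comp hEv').norm).pow 2
    have hR : Tendsto (fun m => qs A t y n - qs A t y (m+1)) atTop
        (nhds (qs A t y n - qlim A t y)) := by
      exact tendsto_const_nhds.sub ((qs_tendsto A t y).comp (tendsto_add_atTop_nat 1))
    refine le_of_tendsto_of_tendsto hL hR ?_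
    filter_upwards [eventually_ge_atTop (n+1)] with m hm
    exact stepA n m hm
  -- Step C
  have key : Tendsto (fun n => ⟪cfc (h (n+1)) A x, Ev A s' t' y⟫_ℂ) atTop
      (nhds ⟪Ev A s t x, Ev A s' t' y⟫_ℂ) := by
    exact (((Ev_tendsto A s t x).comp (tendsto_add_atTop_nat 1)).inner tendsto_const_nhds)
  have key0 : Tendsto (fun n => ⟪cfc (h (n+1)) A x, Ev A s' t' y⟫_ℂ) atTop (nhds 0) := by
    apply squeeze_zero_norm (a := fun n => ‖x‖ * Real.sqrt (qs A t y n - qlim A t y))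
    · intro n
      have hsym : ⟪cfc (h (n+1)) A x, Ev A s' t' y⟫_ℂ =
          ⟪x, cfc (h (n+1)) A (Ev A s' t' y)⟫_ℂ :=
        (cfc_predicate (h (n+1)) A).isSymmetric x (Ev A s' t' y)
      rw [hsym]
      refine le_trans (norm_inner_le_norm _ _) ?_
      have hnn : 0 ≤ qs A t y n - qlim A t y := sub_nonneg.mpr (qlim_le A t y n)
      have : ‖cfc (h (n+1)) A (Ev A s' t' y)‖ ≤ Real.sqrt (qs A t y n - qlim A t y) :=
        (Real.le_sqrt (norm_nonneg _) hnn).mpr (stepB n)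
      exact mul_le_mul_of_nonneg_left this (norm_nonneg x)
    · have : Tendsto (fun n => Real.sqrt (qs A t y n - qlim A t y)) atTop (nhds 0) := by
        have h1 : Tendsto (fun n => qs A t y n - qlim A t y) atTop (nhds 0) := by
          simpa using (qs_tendsto A t y).sub (tendsto_const_nhds (x := qlim A t y))
        simpa using h1.sqrt
      simpa using tendsto_const_nhds.mul this
  exact tendsto_nhds_unique key key0


omit [Nontrivial H] in
/-- contraction property of idempotent selfadjoint maps -/
lemma proj_contraction {P : H →L[ℂ] H} (hidem : IsIdempotentElem P) (hsa : IsSelfAdjoint P)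
    (z : H) : ‖P z‖ ≤ ‖z‖ := by
  rcases eq_or_lt_of_le (norm_nonneg (P z)) with h0 | h0
  · exact le_trans (le_of_eq h0.symm) (norm_nonneg z)
  have h1 : ‖P z‖ ^ 2 = RCLike.re ⟪z, P (P z)⟫_ℂ := by
    rw [← inner_self_eq_norm_sq (𝕜 := ℂ) (P z)]
    congr 1
    exact hsa.isSymmetric z (P z)
  have h2 : P (P z) = P z := by
    rw [← ContinuousLinearMap.mul_apply, hidem]
  rw [h2] at h1
  have h3 := re_inner_le_norm (𝕜 := ℂ) z (P z)
  have h4 : ‖P z‖ * ‖P z‖ ≤ ‖z‖ * ‖P z‖ := by nlinarith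
  exact le_of_mul_le_mul_right h4 h0

include hA

set_option maxHeartbeats 1000000 in
theorem core {ι : Type*} (bas : HilbertBasis ι ℂ H)
    (L : ℕ) (f : Fin L → H) (hf : ∀ l, ‖f l‖ = 1) (ε : ℝ) (hε : 0 < ε) :
    ∃ P : H →L[ℂ] H, IsIdempotentElem P ∧ IsSelfAdjoint P ∧
      FiniteDimensional ℂ (LinearMap.range (P : H →ₗ[ℂ] H)) ∧
      (∀ l, ‖((1 : H →L[ℂ] H) - P) (f l)‖ < ε) ∧
      FiniteDimensional ℂ (LinearMap.range ((((1 : H →L[ℂ] H) - P) * A * P : H →L[ℂ] H) : H →ₗ[ℂ] H)) ∧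
      Real.sqrt (∑' i, ‖(((1 : H →L[ℂ] H) - P) * A * P) (bas i)‖ ^ 2) < ε := by
  classical
  set M : ℝ := ‖A‖ + 1 with hM
  have hM1 : 1 ≤ M := by rw [hM]; linarith [norm_nonneg A]
  have hM0 : 0 < M := by linarith
  obtain ⟨N, hN⟩ := exists_nat_gt ((L : ℝ) * M ^ 2 / ε ^ 2)
  have hN0 : 0 < N := by
    have h1 : (0:ℝ) ≤ (L : ℝ) * M ^ 2 / ε ^ 2 := by positivity
    exact_mod_cast Nat.pos_of_ne_zero (by rintro rfl; push_cast at hN; linarith)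
  have hNR : (0:ℝ) < N := by exact_mod_cast hN0
  -- partition points
  set pt : ℕ → ℝ := fun j => -M + 2 * M / N * j with hpt
  have hpt_mono : ∀ j : ℕ, pt j < pt (j + 1) := by
    intro j
    simp only [hpt]
    have : 2 * M / N > 0 := by positivity
    push_cast
    nlinarith
  have hpt_le : ∀ j k : ℕ, j ≤ k → pt j ≤ pt k := by
    intro j k hjk
    induction k with
    | zero => simp at hjk; simp [hjk]
    | succ k ih =>
      rcases Nat.lt_or_ge j (k+1) with h | h
      · exact le_trans (ih (by omega)) (hpt_mono k).le
      · have : j = k + 1 := by omega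
        simp [this]
  have hpt0 : pt 0 = -M := by simp [hpt]
  have hptN : pt N = M := by
    simp only [hpt]
    field_simp
    ring
  have hdiff : ∀ j : ℕ, pt (j + 1) - pt j = 2 * M / N := by
    intro j; simp only [hpt]; push_cast; ring
  -- spectral pieces
  set g : Fin N → Fin L → H := fun j l => Ev A (pt j) (pt (j + 1)) (f l) with hg
  set Vj : Fin N → Submodule ℂ H := fun j => Submodule.span ℂ (Set.range (g j)) with hVj
  have hVfd : ∀ j, FiniteDimensional ℂ (Vj j) := fun j =>
    FiniteDimensional.span_of_finite ℂ (Set.finite_range (g j))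
  set d : Fin N → ℕ := fun j => Module.finrank ℂ (Vj j) with hd
  have hdL : ∀ j, d j ≤ L := by
    intro j
    have h1 := finrank_span_le_card (R := ℂ) (Set.range (g j))
    have h2 : (Set.range (g j)).toFinset.card ≤ L := by
      rw [Set.toFinset_card]
      simpa using Fintype.card_range_le (g j)
    exact le_trans h1 h2
  set b : ∀ j : Fin N, OrthonormalBasis (Fin (d j)) ℂ (Vj j) := fun j =>
    letI := hVfd j; stdOrthonormalBasis ℂ (Vj j) with hb
  set u : (Σ j : Fin N, Fin (d j)) → H := fun p => ((b p.1) p.2 : H) with hu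
  -- cross-subspace orthogonality
  have hVorth : ∀ j k : Fin N, j ≠ k → ∀ v ∈ Vj j, ∀ w ∈ Vj k, ⟪v, w⟫_ℂ = 0 := by
    have base : ∀ j k : Fin N, (j:ℕ) < (k:ℕ) → ∀ v ∈ Vj j, ∀ w ∈ Vj k, ⟪v, w⟫_ℂ = 0 := by
      intro j k hjk v hv w hw
      have : Submodule.span ℂ (Set.range (g j)) ⟂ Submodule.span ℂ (Set.range (g k)) := by
        rw [Submodule.isOrtho_span]
        rintro _ ⟨l, rfl⟩ _ ⟨l', rfl⟩
        exact ev_orthogonal A hA (hpt_mono j) (hpt_le _ _ hjk) (hpt_mono k) (f l) (f l')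
      exact this.inner_eq hv hw
    intro j k hjk v hv w hw
    rcases lt_or_gt_of_ne (fun h : (j:ℕ) = (k:ℕ) => hjk (Fin.ext h)) with h | h
    · exact base j k h v hv w hw
    · rw [← inner_conj_symm]
      rw [base k j h w hw v hv]
      simp
  -- orthonormality of u
  have huon : Orthonormal ℂ u := by
    rw [orthonormal_iff_ite]
    rintro ⟨j, k⟩ ⟨j', k'⟩
    by_cases hjj : j = j'
    · subst hjj
      have h1 : ⟪u ⟨j, k⟩, u ⟨j, k'⟩⟫_ℂ = ⟪(b j) k, (b j) k'⟫_ℂ := rfl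
      rw [h1, orthonormal_iff_ite.mp (b j).orthonormal k k']
      by_cases hkk : k = k' <;> simp [hkk]
    · have h0 : ⟪u ⟨j, k⟩, u ⟨j', k'⟩⟫_ℂ = 0 :=
        hVorth j j' hjj _ (SetLike.coe_mem _) _ (SetLike.coe_mem _)
      rw [h0]
      simp [Sigma.mk.inj_iff, hjj]
  -- the projection
  set P : H →L[ℂ] H := ∑ p : (Σ j : Fin N, Fin (d j)), (innerSL ℂ (u p)).smulRight (u p) with hP
  have hPapply : ∀ x : H, P x = ∑ p : (Σ j : Fin N, Fin (d j)), ⟪u p, x⟫_ℂ • u p := by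
    intro x
    simp [hP, ContinuousLinearMap.sum_apply]
  have hPmem : ∀ x : H, P x ∈ Submodule.span ℂ (Set.range u) := by
    intro x
    rw [hPapply]
    exact Submodule.sum_mem _ fun p _ =>
      Submodule.smul_mem _ _ (Submodule.subset_span ⟨p, rfl⟩)
  have hPu : ∀ p, P (u p) = u p := by
    intro p
    rw [hPapply]
    have : ∀ q, ⟪u q, u p⟫_ℂ • u q = (if q = p then (1:ℂ) else 0) • u q := by
      intro q; rw [orthonormal_iff_ite.mp huon q p]
    simp only [this, ite_smul, one_smul, zero_smul]
    simp
  have hPspan : ∀ x ∈ Submodule.span ℂ (Set.range u), P x = x := by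
    intro x hx
    induction hx using Submodule.span_induction with
    | mem y hy => obtain ⟨p, rfl⟩ := hy; exact hPu p
    | zero => simp
    | add y z _ _ hy hz => rw [map_add, hy, hz]
    | smul c y _ hy => rw [map_smul, hy]
  have hPidem : IsIdempotentElem P := by
    rw [IsIdempotentElem]
    ext x
    exact hPspan (P x) (hPmem x)
  have hPsa : IsSelfAdjoint P := by
    rw [ContinuousLinearMap.isSelfAdjoint_iff_isSymmetric]
    intro x y
    show ⟪P x, y⟫_ℂ = ⟪x, P y⟫_ℂ
    rw [hPapply, hPapply, sum_inner, inner_sum]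
    refine Finset.sum_congr rfl fun p _ => ?_
    rw [inner_smul_left, inner_smul_right, ← inner_conj_symm x (u p)]
    ring
  -- telescoping sum
  have htel : ∀ x : H, ∑ j : Fin N, Ev A (pt j) (pt (j + 1)) x = x := by
    intro x
    have h1 : ∑ j : Fin N, Ev A (pt j) (pt (j + 1)) x
        = ∑ j : Fin N, (Qv A (pt ((j:ℕ) + 1)) x - Qv A (pt (j:ℕ)) x) :=
      Finset.sum_congr rfl fun j _ => Ev_def A (pt (j:ℕ)) (pt ((j:ℕ)+1)) x
    have h2 := Fin.sum_univ_eq_sum_range (fun m => Qv A (pt (m + 1)) x - Qv A (pt m) x) N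
    rw [h1, h2, Finset.sum_range_sub (fun j => Qv A (pt j) x)]
    rw [Qv_eq_self A hA (t := pt N) (by rw [hptN, hM]; linarith [norm_nonneg A]) x,
      Qv_eq_zero A hA (t := pt 0) (by rw [hpt0, hM]; linarith) x]
    simp
  -- u p is in the range of Ev
  have hVle_range : ∀ j : Fin N, ∀ v ∈ Vj j, ∃ w, Ev A (pt j) (pt (j+1)) w = v := by
    intro j v hv
    have : Vj j ≤ LinearMap.range (LinearMap.mk (σ := RingHom.id ℂ)
        ⟨Ev A (pt j) (pt (j+1)), Ev_add A _ _⟩ (Ev_smul A _ _)) := by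
      rw [hVj, Submodule.span_le]
      rintro _ ⟨l, rfl⟩
      exact ⟨f l, rfl⟩
    exact this hv
  -- u in the span, f l in the span
  have huMem : ∀ p : (Σ j : Fin N, Fin (d j)), u p ∈ Submodule.span ℂ (Set.range u) :=
    fun p => Submodule.subset_span ⟨p, rfl⟩
  have hVle_span : ∀ j : Fin N, ∀ v ∈ Vj j, v ∈ Submodule.span ℂ (Set.range u) := by
    intro j v hv
    letI := hVfd j
    have h1 : ((⟨v, hv⟩ : Vj j) : H) = v := rfl
    rw [← h1]
    rw [← (b j).sum_repr ⟨v, hv⟩]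
    rw [Submodule.coe_sum]
    refine Submodule.sum_mem _ fun k _ => ?_
    rw [Submodule.coe_smul]
    exact Submodule.smul_mem _ _ (Submodule.subset_span ⟨⟨j, k⟩, rfl⟩)
  have hfspan : ∀ l, f l ∈ Submodule.span ℂ (Set.range u) := by
    intro l
    rw [← htel (f l)]
    refine Submodule.sum_mem _ fun j _ => ?_
    exact hVle_span j _ (Submodule.subset_span ⟨l, rfl⟩)
  have h1Pf : ∀ l, ((1 : H →L[ℂ] H) - P) (f l) = 0 := by
    intro l
    simp [ContinuousLinearMap.sub_apply, hPspan (f l) (hfspan l)]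
  -- eigenvalue estimate for each u p
  set v : (Σ j : Fin N, Fin (d j)) → H := fun p => ((1 : H →L[ℂ] H) - P) (A (u p)) with hv
  have hvbound : ∀ p, ‖v p‖ ≤ M / N := by
    rintro ⟨j, k⟩
    obtain ⟨w, hw⟩ := hVle_range j (u ⟨j, k⟩) (by exact SetLike.coe_mem _)
    have h1P : ((1 : H →L[ℂ] H) - P) (u ⟨j, k⟩) = 0 := by
      simp [ContinuousLinearMap.sub_apply,
        hPspan _ (hVle_span j _ (SetLike.coe_mem ((b j) k)))]
      exact sub_eq_zero.mpr (hPspan _ (hVle_span j _ (SetLike.coe_mem ((b j) k)))).symm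
    set lam : ℝ := (pt j + pt ((j:ℕ)+1)) / 2 with hlam
    have heq : v ⟨j, k⟩ = ((1 : H →L[ℂ] H) - P) (A (u ⟨j, k⟩) - (lam : ℂ) • u ⟨j, k⟩) := by
      rw [map_sub, map_smul, h1P, smul_zero, sub_zero, hv]
    have hcontr : ‖((1 : H →L[ℂ] H) - P) (A (u ⟨j, k⟩) - (lam : ℂ) • u ⟨j, k⟩)‖ ≤
        ‖A (u ⟨j, k⟩) - (lam : ℂ) • u ⟨j, k⟩‖ :=
      proj_contraction hPidem.one_sub ((IsSelfAdjoint.one (R := H →L[ℂ] H)).sub hPsa) _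
    have heig : ‖A (u ⟨j, k⟩) - (lam : ℂ) • u ⟨j, k⟩‖ ≤ M / N := by
      rw [← hw]
      calc ‖A (Ev A (pt j) (pt ((j:ℕ)+1)) w) - (lam : ℂ) • Ev A (pt j) (pt ((j:ℕ)+1)) w‖
          ≤ (pt ((j:ℕ)+1) - pt j) / 2 * ‖Ev A (pt j) (pt ((j:ℕ)+1)) w‖ :=
            eigen_approx A hA (hpt_mono j) w
        _ = M / N * ‖u ⟨j, k⟩‖ := by rw [hw, hdiff]; ring_nf
        _ = M / N := by rw [huon.1 ⟨j, k⟩, mul_one]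
    rw [heq]
    exact le_trans hcontr heig
  -- the operator T
  set T : H →L[ℂ] H := ((1 : H →L[ℂ] H) - P) * A * P with hT
  have hTapply : ∀ z : H, T z = ∑ p, ⟪u p, z⟫_ℂ • v p := by
    intro z
    have h1 : T z = ((1 : H →L[ℂ] H) - P) (A (P z)) := rfl
    rw [h1, hPapply]
    rw [map_sum, map_sum]
    refine Finset.sum_congr rfl fun p _ => ?_
    rw [map_smul, map_smul]
  -- finite rank of T and P
  haveI hspanfd : FiniteDimensional ℂ (Submodule.span ℂ (Set.range u)) :=
    FiniteDimensional.span_of_finite ℂ (Set.finite_range u)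
  haveI hspanfdv : FiniteDimensional ℂ (Submodule.span ℂ (Set.range v)) :=
    FiniteDimensional.span_of_finite ℂ (Set.finite_range v)
  have hPrange : FiniteDimensional ℂ (LinearMap.range (P : H →ₗ[ℂ] H)) := by
    have hle : LinearMap.range (P : H →ₗ[ℂ] H) ≤ Submodule.span ℂ (Set.range u) := by
      rintro y ⟨x, rfl⟩
      exact hPmem x
    exact Submodule.finiteDimensional_of_le hle
  have hTrange : FiniteDimensional ℂ (LinearMap.range (T : H →ₗ[ℂ] H)) := by
    have hle : LinearMap.range (T : H →ₗ[ℂ] H) ≤ Submodule.span ℂ (Set.range v) := by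
      rintro y ⟨x, rfl⟩
      rw [show (T : H →ₗ[ℂ] H) x = ∑ p, ⟪u p, x⟫_ℂ • v p from hTapply x]
      exact Submodule.sum_mem _ fun p _ =>
        Submodule.smul_mem _ _ (Submodule.subset_span ⟨p, rfl⟩)
    exact Submodule.finiteDimensional_of_le hle
  -- Hilbert-Schmidt estimate
  have hsummand : ∀ p q : (Σ j : Fin N, Fin (d j)),
      Summable (fun i : ι => ⟪v p, v q⟫_ℂ * (⟪u q, bas i⟫_ℂ * ⟪bas i, u p⟫_ℂ)) := by
    intro p q
    exact (bas.summable_inner_mul_inner (u q) (u p)).mul_left _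
  set F : ι → ℂ := fun i => ∑ p, ∑ q, ⟪v p, v q⟫_ℂ * (⟪u q, bas i⟫_ℂ * ⟪bas i, u p⟫_ℂ) with hF
  have hFeq : ∀ i, ⟪T (bas i), T (bas i)⟫_ℂ = F i := by
    intro i
    rw [hTapply, sum_inner]
    refine Finset.sum_congr rfl fun p _ => ?_
    rw [inner_sum]
    refine Finset.sum_congr rfl fun q _ => ?_
    rw [inner_smul_left, inner_smul_right, ← inner_conj_symm (bas i) (u p)]
    ring
  have hFsummable : Summable F := by
    exact summable_sum fun p _ => summable_sum fun q _ => hsummand p q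
  have hFtsum : ∑' i, F i = ∑ p, ⟪v p, v p⟫_ℂ := by
    rw [hF]
    rw [Summable.tsum_finsetSum (fun p _ => summable_sum fun q _ => hsummand p q)]
    have h1 : ∀ p : (Σ j : Fin N, Fin (d j)),
        ∑' i, ∑ q, ⟪v p, v q⟫_ℂ * (⟪u q, bas i⟫_ℂ * ⟪bas i, u p⟫_ℂ)
        = ∑ q, ⟪v p, v q⟫_ℂ * ⟪u q, u p⟫_ℂ := by
      intro p
      rw [Summable.tsum_finsetSum (fun q _ => hsummand p q)]
      refine Finset.sum_congr rfl fun q _ => ?_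
      rw [tsum_mul_left, bas.tsum_inner_mul_inner (u q) (u p)]
    refine (Finset.sum_congr rfl fun p _ => ?_)
    rw [h1 p]
    have h2 : ∀ q, ⟪v p, v q⟫_ℂ * ⟪u q, u p⟫_ℂ
        = if q = p then ⟪v p, v q⟫_ℂ else 0 := by
      intro q
      rw [orthonormal_iff_ite.mp huon q p]
      by_cases h : q = p <;> simp [h]
    simp only [h2]
    simp
  have hnormsq : ∀ i, ‖T (bas i)‖ ^ 2 = RCLike.re (F i) := by
    intro i
    rw [← hFeq, inner_self_eq_norm_sq]
  have htsum_eq : ∑' i, ‖T (bas i)‖ ^ 2 = ∑ p, ‖v p‖ ^ 2 := by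
    have h1 : ∑' i, ‖T (bas i)‖ ^ 2 = ∑' i, RCLike.re (F i) := tsum_congr hnormsq
    have h2 : ∑' i, RCLike.re (F i) = RCLike.re (∑' i, F i) := by
      have h3 := RCLike.reCLM.map_tsum hFsummable
      simpa using h3.symm
    rw [h1, h2, hFtsum]
    have h4 : RCLike.re (∑ p, ⟪v p, v p⟫_ℂ) = ∑ p, RCLike.re ⟪v p, v p⟫_ℂ := by
      have h5 := map_sum (RCLike.reCLM (K := ℂ)) (fun p => ⟪v p, v p⟫_ℂ) Finset.univ
      simpa using h5
    rw [h4]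
    exact Finset.sum_congr rfl fun p _ => inner_self_eq_norm_sq (v p)
  -- cardinality bound
  have hcard : (Fintype.card (Σ j : Fin N, Fin (d j)) : ℝ) ≤ (N : ℝ) * L := by
    rw [Fintype.card_sigma]
    push_cast
    calc (∑ j : Fin N, (Fintype.card (Fin (d j)) : ℝ))
        ≤ ∑ _j : Fin N, (L : ℝ) := by
          refine Finset.sum_le_sum fun j _ => ?_
          simpa using hdL j
      _ = (N : ℝ) * L := by simp [mul_comm]
  have hsumbound : ∑ p, ‖v p‖ ^ 2 ≤ (N : ℝ) * L * (M / N) ^ 2 := by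
    calc ∑ p, ‖v p‖ ^ 2 ≤ ∑ _p : (Σ j : Fin N, Fin (d j)), (M / N) ^ 2 := by
          refine Finset.sum_le_sum fun p _ => ?_
          have := hvbound p
          have h0 : (0:ℝ) ≤ M / N := by positivity
          nlinarith [norm_nonneg (v p)]
      _ = (Fintype.card (Σ j : Fin N, Fin (d j)) : ℝ) * (M / N) ^ 2 := by
          rw [Finset.sum_const, Finset.card_univ]; simp [nsmul_eq_mul]
      _ ≤ (N : ℝ) * L * (M / N) ^ 2 := by
          have h0 : (0:ℝ) ≤ (M / N) ^ 2 := by positivity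
          nlinarith
  have hfinal : ∑' i, ‖T (bas i)‖ ^ 2 < ε ^ 2 := by
    rw [htsum_eq]
    refine lt_of_le_of_lt hsumbound ?_
    have h1 : (N : ℝ) * L * (M / N) ^ 2 = (L : ℝ) * M ^ 2 / N := by
      field_simp
    rw [h1]
    rw [div_lt_iff₀ hNR]
    have h2 : (L : ℝ) * M ^ 2 < N * ε ^ 2 := by
      have := (div_lt_iff₀ (by positivity : (0:ℝ) < ε ^ 2)).mp hN
      linarith
    linarith
  refine ⟨P, hPidem, hPsa, hPrange, ?_, hTrange, ?_⟩
  · intro l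
    rw [h1Pf l]
    simpa using hε
  · have h0 : (0:ℝ) ≤ ∑' i, ‖T (bas i)‖ ^ 2 := by
      rw [htsum_eq]; positivity
    calc Real.sqrt (∑' i, ‖T (bas i)‖ ^ 2) < Real.sqrt (ε ^ 2) :=
          Real.sqrt_lt_sqrt h0 hfinal
      _ = ε := Real.sqrt_sq hε.le

end S
end
end Stmt12



/-- The Hilbert–Schmidt norm of `T` (w.r.t. the Hilbert basis `bas`). -/
noncomputable def hsNorm {𝓗 : Type*} [NormedAddCommGroup 𝓗] [InnerProductSpace ℂ 𝓗]
    [CompleteSpace 𝓗] {ι : Type*} (bas : HilbertBasis ι ℂ 𝓗) (T : 𝓗 →L[ℂ] 𝓗) : ℝ :=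
  Real.sqrt (∑' i, ‖T (bas i)‖ ^ 2)

/-- Weyl–von Neumann type approximation. For a self-adjoint operator `A`,
finitely many unit vectors `f₁,…,f_L` and `ε > 0`, there is a finite-rank orthogonal
projection `P` with `‖(I−P)f_l‖ < ε` for all `l`, and `(I−P)AP` of finite rank with
Hilbert–Schmidt norm `‖(I−P)AP‖₂ < ε`. -/
theorem stmt_12 {𝓗 : Type*} [NormedAddCommGroup 𝓗] [InnerProductSpace ℂ 𝓗] [CompleteSpace 𝓗]
    {ι : Type*} (bas : HilbertBasis ι ℂ 𝓗)
    (A : 𝓗 →L[ℂ] 𝓗) (hA : IsSelfAdjoint A)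
    (L : ℕ) (f : Fin L → 𝓗) (hf : ∀ l, ‖f l‖ = 1) (ε : ℝ) (hε : 0 < ε) :
    ∃ P : 𝓗 →L[ℂ] 𝓗, IsIdempotentElem P ∧ IsSelfAdjoint P ∧
      FiniteDimensional ℂ (LinearMap.range (P : 𝓗 →ₗ[ℂ] 𝓗)) ∧
      (∀ l, ‖((1 : 𝓗 →L[ℂ] 𝓗) - P) (f l)‖ < ε) ∧
      FiniteDimensional ℂ (LinearMap.range ((((1 : 𝓗 →L[ℂ] 𝓗) - P) * A * P : 𝓗 →L[ℂ] 𝓗) : 𝓗 →ₗ[ℂ] 𝓗)) ∧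
      hsNorm bas (((1 : 𝓗 →L[ℂ] 𝓗) - P) * A * P) < ε := by
  rcases subsingleton_or_nontrivial 𝓗 with hs | hn
  · refine ⟨0, by simp [IsIdempotentElem], by rw [IsSelfAdjoint]; exact star_zero _, ?_, ?_, ?_, ?_⟩
    · have : Subsingleton (LinearMap.range ((0 : 𝓗 →L[ℂ] 𝓗) : 𝓗 →ₗ[ℂ] 𝓗)) := by
        constructor; intro a b; ext; exact Subsingleton.elim _ _
      exact Module.Finite.of_basis (Module.Basis.empty _ (ι := Fin 0))
    · intro l
      have h0 : ((1 : 𝓗 →L[ℂ] 𝓗) - 0) (f l) = 0 := Subsingleton.elim _ _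
      rw [h0]; simpa using hε
    · have : Subsingleton (LinearMap.range ((((1 : 𝓗 →L[ℂ] 𝓗) - 0) * A * 0 : 𝓗 →L[ℂ] 𝓗) : 𝓗 →ₗ[ℂ] 𝓗)) := by
        constructor; intro a b; ext; exact Subsingleton.elim _ _
      exact Module.Finite.of_basis (Module.Basis.empty _ (ι := Fin 0))
    · have h0 : ∀ i, ‖(((1 : 𝓗 →L[ℂ] 𝓗) - 0) * A * 0) (bas i)‖ ^ 2 = 0 := by
        intro i
        rw [show (((1 : 𝓗 →L[ℂ] 𝓗) - 0) * A * 0) (bas i) = 0 from Subsingleton.elim _ _]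
        simp
      rw [hsNorm, tsum_congr h0]
      simpa using hε
  · obtain ⟨P, h1, h2, h3, h4, h5, h6⟩ := Stmt12.core A hA bas L f hf ε hε
    exact ⟨P, h1, h2, h3, h4, h5, by rwa [hsNorm]⟩
end

section
/- Let A be self-adjoint and P a finite-rank projection with range in Dom(A) such that ‖(I−P)AP‖₂ ≤ δ, and suppose moreover AP is bounded with ‖AP‖ ≤ a and rank P ≤ N. Then for |t| ≤ T, the function α(t) = ‖(I−P)e^{itA}P‖₂ satisfies α(t) ≤ a√N ∫₀^t α(s) ds + Tδ√N, and consequently α(t) ≤ T δ √N e^{a√N T}. -/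
set_option linter.unusedSectionVars false
set_option maxHeartbeats 1000000
set_option synthInstance.maxHeartbeats 400000

open scoped ComplexConjugate
local notation "⟪" x ", " y "⟫" => @inner ℂ _ _ x y

section Aux
variable {𝓗 : Type*} [NormedAddCommGroup 𝓗] [InnerProductSpace ℂ 𝓗] [CompleteSpace 𝓗]
  {ι : Type*}

lemma aux_hasSum (bas : HilbertBasis ι ℂ 𝓗) {n : ℕ} {e : Fin n → 𝓗} (he : Orthonormal ℂ e)
    (w : Fin n → 𝓗) :
    HasSum (fun i => ‖∑ k, ⟪e k, bas i⟫ • w k‖ ^ 2) (∑ k, ‖w k‖ ^ 2) := by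
  have key : ∀ i, (‖∑ k, ⟪e k, bas i⟫ • w k‖ : ℝ) ^ 2
      = Complex.reCLM (∑ k : Fin n, ∑ l : Fin n, (⟪e k, bas i⟫ * ⟪bas i, e l⟫) * ⟪w l, w k⟫) := by
    intro i
    rw [← inner_self_eq_norm_sq (𝕜 := ℂ)]
    have : ⟪∑ k, ⟪e k, bas i⟫ • w k, ∑ k, ⟪e k, bas i⟫ • w k⟫
        = ∑ k : Fin n, ∑ l : Fin n, (⟪e k, bas i⟫ * ⟪bas i, e l⟫) * ⟪w l, w k⟫ := by
      simp only [sum_inner, inner_smul_left, inner_sum, inner_smul_right, Finset.mul_sum]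
      simp only [inner_conj_symm]
      refine Finset.sum_congr rfl fun k _ => Finset.sum_congr rfl fun l _ => ?_
      ring
    rw [this]
    rfl
  have hsum : HasSum (fun i => ∑ k : Fin n, ∑ l : Fin n,
      (⟪e k, bas i⟫ * ⟪bas i, e l⟫) * ⟪w l, w k⟫)
      (∑ k : Fin n, ∑ l : Fin n, (⟪e k, e l⟫) * ⟪w l, w k⟫) :=
    hasSum_sum fun k _ => hasSum_sum fun l _ =>
      (bas.hasSum_inner_mul_inner (e k) (e l)).mul_right _
  have hre := Complex.reCLM.hasSum hsum
  have heq : Complex.reCLM (∑ k : Fin n, ∑ l : Fin n, (⟪e k, e l⟫) * ⟪w l, w k⟫)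
      = ∑ k, ‖w k‖ ^ 2 := by
    rw [orthonormal_iff_ite] at he
    have : (∑ k : Fin n, ∑ l : Fin n, (⟪e k, e l⟫) * ⟪w l, w k⟫)
        = ∑ k : Fin n, ⟪w k, w k⟫ := by
      refine Finset.sum_congr rfl fun k _ => ?_
      rw [Finset.sum_eq_single k]
      · rw [he k k, if_pos rfl, one_mul]
      · intro l _ hlk
        rw [he k l, if_neg (Ne.symm hlk), zero_mul]
      · intro h; exact absurd (Finset.mem_univ k) h
    rw [this, map_sum]
    refine Finset.sum_congr rfl fun k _ => ?_
    exact inner_self_eq_norm_sq (𝕜 := ℂ) (w k)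
  rw [heq] at hre
  have hfun : (fun i => ‖∑ k, ⟪e k, bas i⟫ • w k‖ ^ 2)
      = fun i => Complex.reCLM (∑ k : Fin n, ∑ l : Fin n,
          (⟪e k, bas i⟫ * ⟪bas i, e l⟫) * ⟪w l, w k⟫) := funext key
  rw [hfun]
  exact hre

noncomputable def projONB (P : 𝓗 →L[ℂ] 𝓗) [FiniteDimensional ℂ (LinearMap.range (P : 𝓗 →ₗ[ℂ] 𝓗))] :
    Fin (Module.finrank ℂ (LinearMap.range (P : 𝓗 →ₗ[ℂ] 𝓗))) → 𝓗 :=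
  fun k => (stdOrthonormalBasis ℂ (LinearMap.range (P : 𝓗 →ₗ[ℂ] 𝓗)) k : 𝓗)

lemma projONB_orthonormal (P : 𝓗 →L[ℂ] 𝓗) [FiniteDimensional ℂ (LinearMap.range (P : 𝓗 →ₗ[ℂ] 𝓗))] :
    Orthonormal ℂ (projONB P) :=
  (stdOrthonormalBasis ℂ (LinearMap.range (P : 𝓗 →ₗ[ℂ] 𝓗))).orthonormal.comp_linearIsometry
    (LinearMap.range (P : 𝓗 →ₗ[ℂ] 𝓗)).subtypeₗᵢ

lemma projONB_mem (P : 𝓗 →L[ℂ] 𝓗) [FiniteDimensional ℂ (LinearMap.range (P : 𝓗 →ₗ[ℂ] 𝓗))] (k) :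
    projONB P k ∈ LinearMap.range (P : 𝓗 →ₗ[ℂ] 𝓗) :=
  (stdOrthonormalBasis ℂ (LinearMap.range (P : 𝓗 →ₗ[ℂ] 𝓗)) k).2

lemma proj_apply_eq {P : 𝓗 →L[ℂ] 𝓗} (hP : IsIdempotentElem P) {x : 𝓗}
    (hx : x ∈ LinearMap.range (P : 𝓗 →ₗ[ℂ] 𝓗)) : P x = x := by
  obtain ⟨z, rfl⟩ := hx
  have := congrArg (fun T : 𝓗 →L[ℂ] 𝓗 => T z) hP
  simpa [ContinuousLinearMap.mul_apply] using this

lemma proj_formula {P : 𝓗 →L[ℂ] 𝓗} (hP : IsIdempotentElem P) (hP' : IsSelfAdjoint P)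
    [FiniteDimensional ℂ (LinearMap.range (P : 𝓗 →ₗ[ℂ] 𝓗))] (x : 𝓗) :
    P x = ∑ k, ⟪projONB P k, x⟫ • projONB P k := by
  have hsa : ∀ u v : 𝓗, ⟪P u, v⟫ = ⟪u, P v⟫ := by
    intro u v
    conv_lhs => rw [← ContinuousLinearMap.isSelfAdjoint_iff'.mp hP']
    exact ContinuousLinearMap.adjoint_inner_left P v u
  have hmem : P x ∈ LinearMap.range (P : 𝓗 →ₗ[ℂ] 𝓗) := ⟨x, rfl⟩
  have h1 : (⟨P x, hmem⟩ : LinearMap.range (P : 𝓗 →ₗ[ℂ] 𝓗))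
      = ∑ k, ⟪stdOrthonormalBasis ℂ (LinearMap.range (P : 𝓗 →ₗ[ℂ] 𝓗)) k, (⟨P x, hmem⟩ : LinearMap.range (P : 𝓗 →ₗ[ℂ] 𝓗))⟫
        • stdOrthonormalBasis ℂ (LinearMap.range (P : 𝓗 →ₗ[ℂ] 𝓗)) k :=
    ((stdOrthonormalBasis ℂ (LinearMap.range (P : 𝓗 →ₗ[ℂ] 𝓗))).sum_repr' _).symm
  have h2 := congrArg (Subtype.val) h1
  simp only [Submodule.coe_sum, Submodule.coe_smul] at h2
  rw [h2]
  refine Finset.sum_congr rfl fun k _ => ?_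
  have hik : ⟪stdOrthonormalBasis ℂ (LinearMap.range (P : 𝓗 →ₗ[ℂ] 𝓗)) k, (⟨P x, hmem⟩ : LinearMap.range (P : 𝓗 →ₗ[ℂ] 𝓗))⟫
      = ⟪projONB P k, P x⟫ := rfl
  rw [hik, ← hsa, proj_apply_eq hP (projONB_mem P k)]
  rfl

variable (bas : HilbertBasis ι ℂ 𝓗) {P : 𝓗 →L[ℂ] 𝓗}
  [FiniteDimensional ℂ (LinearMap.range (P : 𝓗 →ₗ[ℂ] 𝓗))] (S : 𝓗 →L[ℂ] 𝓗)

lemma hs_hasSum (hP : IsIdempotentElem P) (hP' : IsSelfAdjoint P) :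
    HasSum (fun i => ‖(S * P) (bas i)‖ ^ 2) (∑ k, ‖S (projONB P k)‖ ^ 2) := by
  have h := aux_hasSum bas (projONB_orthonormal P) (fun k => S (projONB P k))
  have : ∀ i, (S * P) (bas i) = ∑ k, ⟪projONB P k, bas i⟫ • S (projONB P k) := by
    intro i
    rw [ContinuousLinearMap.mul_apply, proj_formula hP hP', map_sum]
    simp [map_smul]
  simpa [this] using h

lemma hsNorm_mul_proj (hP : IsIdempotentElem P) (hP' : IsSelfAdjoint P) :
    hsNorm bas (S * P) = Real.sqrt (∑ k, ‖S (projONB P k)‖ ^ 2) := by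
  rw [hsNorm, (hs_hasSum bas S hP hP').tsum_eq]

lemma opNorm_mul_proj_le (hP : IsIdempotentElem P) (hP' : IsSelfAdjoint P) :
    ‖S * P‖ ≤ Real.sqrt (∑ k, ‖S (projONB P k)‖ ^ 2) := by
  refine ContinuousLinearMap.opNorm_le_bound _ (Real.sqrt_nonneg _) fun x => ?_
  have hx : (S * P) x = ∑ k, ⟪projONB P k, x⟫ • S (projONB P k) := by
    rw [ContinuousLinearMap.mul_apply, proj_formula hP hP', map_sum]
    simp [map_smul]
  rw [hx]
  calc ‖∑ k, ⟪projONB P k, x⟫ • S (projONB P k)‖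
      ≤ ∑ k, ‖⟪projONB P k, x⟫‖ * ‖S (projONB P k)‖ := by
        refine (norm_sum_le _ _).trans_eq ?_
        simp [norm_smul]
    _ ≤ Real.sqrt (∑ k, ‖S (projONB P k)‖ ^ 2) * ‖x‖ := by
        have hcs := Finset.sum_mul_sq_le_sq_mul_sq Finset.univ
          (fun k => ‖⟪projONB P k, x⟫‖) (fun k => ‖S (projONB P k)‖)
        have hbessel : ∑ k, ‖⟪projONB P k, x⟫‖ ^ 2 ≤ ‖x‖ ^ 2 :=
          (projONB_orthonormal P).sum_inner_products_le x
        have h1 : (∑ k, ‖⟪projONB P k, x⟫‖ * ‖S (projONB P k)‖) ^ 2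
            ≤ ‖x‖ ^ 2 * ∑ k, ‖S (projONB P k)‖ ^ 2 := by
          refine hcs.trans ?_
          exact mul_le_mul_of_nonneg_right hbessel (Finset.sum_nonneg fun k _ => sq_nonneg _)
        have h2 : ∑ k, ‖⟪projONB P k, x⟫‖ * ‖S (projONB P k)‖
            ≤ Real.sqrt (‖x‖ ^ 2 * ∑ k, ‖S (projONB P k)‖ ^ 2) := by
          rw [← Real.sqrt_sq (Finset.sum_nonneg fun k _ =>
            mul_nonneg (norm_nonneg _) (norm_nonneg _))]
          exact Real.sqrt_le_sqrt h1
        refine h2.trans_eq ?_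
        rw [Real.sqrt_mul (sq_nonneg _), Real.sqrt_sq (norm_nonneg _), mul_comm]

end Aux

section Exp
variable {𝓗 : Type*} [NormedAddCommGroup 𝓗] [InnerProductSpace ℂ 𝓗] [CompleteSpace 𝓗]

noncomputable def Eop (A : 𝓗 →L[ℂ] 𝓗) : ℝ → (𝓗 →L[ℂ] 𝓗) :=
  fun t => NormedSpace.exp ((Complex.I * t) • A)

lemma Eop_eq (A : 𝓗 →L[ℂ] 𝓗) (t : ℝ) :
    Eop A t = NormedSpace.exp (t • (Complex.I • A)) := by
  rw [Eop, show (Complex.I * (t:ℂ)) • A = t • (Complex.I • A) by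
    rw [← smul_smul, smul_comm, Complex.coe_smul]]

lemma Eop_star (A : 𝓗 →L[ℂ] 𝓗) (hA : IsSelfAdjoint A) (t : ℝ) :
    star (Eop A t) = Eop A (-t) := by
  rw [Eop, Eop, NormedSpace.star_exp]
  congr 1
  rw [star_smul, hA.star_eq]
  congr 1
  simp only [star_mul', Complex.star_def, Complex.conj_I, Complex.conj_ofReal]
  push_cast
  ring

lemma Eop_mul_self (A : 𝓗 →L[ℂ] 𝓗) (t : ℝ) : Eop A (-t) * Eop A t = 1 := by
  have hc : Commute ((Complex.I * ((-t : ℝ) : ℂ)) • A) ((Complex.I * (t : ℝ)) • A) :=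
    ((Commute.refl A).smul_right _).smul_left _
  let +nondep : NormedAlgebra ℚ (𝓗 →L[ℂ] 𝓗) := .restrictScalars ℚ ℂ _
  rw [Eop, Eop, ← NormedSpace.exp_add_of_commute hc, ← add_smul]
  have : Complex.I * ((-t : ℝ) : ℂ) + Complex.I * (t : ℝ) = 0 := by push_cast; ring
  rw [this, zero_smul, NormedSpace.exp_zero]

lemma Eop_norm_apply (A : 𝓗 →L[ℂ] 𝓗) (hA : IsSelfAdjoint A) (t : ℝ) (x : 𝓗) :
    ‖Eop A t x‖ = ‖x‖ := by
  have h1 : ContinuousLinearMap.adjoint (Eop A t) ((Eop A t) x) = x := by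
    rw [← ContinuousLinearMap.star_eq_adjoint, Eop_star A hA, ← ContinuousLinearMap.mul_apply,
      Eop_mul_self]
    rfl
  have h2 : ⟪Eop A t x, Eop A t x⟫ = ⟪x, x⟫ := by
    rw [← ContinuousLinearMap.adjoint_inner_left, h1]
  rw [@norm_eq_sqrt_re_inner ℂ, h2, ← @norm_eq_sqrt_re_inner ℂ]

lemma Eop_hasDerivAt (A : 𝓗 →L[ℂ] 𝓗) (t : ℝ) :
    HasDerivAt (Eop A) (Eop A t * (Complex.I • A)) t := by
  have h := hasDerivAt_exp_smul_const (𝕂 := ℝ) (Complex.I • A) t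
  simp_rw [← Eop_eq] at h
  exact h

lemma Eop_continuous (A : 𝓗 →L[ℂ] 𝓗) : Continuous (Eop A) :=
  continuous_iff_continuousAt.2 fun t => (Eop_hasDerivAt A t).continuousAt

end Exp

instance piLp_complete {𝓗 : Type*} [NormedAddCommGroup 𝓗] [CompleteSpace 𝓗] {r : ℕ} :
    CompleteSpace (PiLp 2 (fun _ : Fin r => 𝓗)) :=
  inferInstance

open intervalIntegral in
lemma gron_pos {E' : Type*} [NormedAddCommGroup E'] [NormedSpace ℝ E'] [CompleteSpace E']
    {F F' : ℝ → E'}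
    (hd : ∀ s, HasDerivAt F (F' s) s) (hc : Continuous F') (h0 : F 0 = 0)
    {K ε : ℝ} (hK : 0 ≤ K) (hε : 0 ≤ ε) (hb : ∀ s, ‖F' s‖ ≤ K * ‖F s‖ + ε)
    {t : ℝ} (ht : 0 ≤ t) :
    ‖F t‖ ≤ K * (∫ s in (0:ℝ)..t, ‖F s‖) + ε * t ∧ ‖F t‖ ≤ ε * t * Real.exp (K * t) := by
  have hFc : Continuous F := continuous_iff_continuousAt.2 fun s => (hd s).continuousAt
  constructor
  · have hftc : ∫ s in (0:ℝ)..t, F' s = F t - F 0 :=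
      integral_eq_sub_of_hasDerivAt (fun s _ => hd s) (hc.intervalIntegrable 0 t)
    have h1 : ‖F t‖ = ‖∫ s in (0:ℝ)..t, F' s‖ := by rw [hftc, h0, sub_zero]
    rw [h1]
    calc ‖∫ s in (0:ℝ)..t, F' s‖ ≤ ∫ s in (0:ℝ)..t, ‖F' s‖ :=
          norm_integral_le_integral_norm ht
      _ ≤ ∫ s in (0:ℝ)..t, (K * ‖F s‖ + ε) := by
          refine integral_mono_on ht (hc.norm.intervalIntegrable 0 t)
            (((continuous_const.mul hFc.norm).add continuous_const).intervalIntegrable 0 t)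
            fun s _ => hb s
      _ = K * (∫ s in (0:ℝ)..t, ‖F s‖) + ε * t := by
          rw [integral_add (f := fun s => K * ‖F s‖) (g := fun _ => ε) ((continuous_const.mul hFc.norm).intervalIntegrable 0 t)
            (continuous_const.intervalIntegrable 0 t), integral_const_mul, integral_const]
          simp [mul_comm]
  · have hg := norm_le_gronwallBound_of_norm_deriv_right_le
      (f := F) (f' := F') (δ := 0) (K := K) (ε := ε) (a := 0) (b := t)
      (hFc.continuousOn) (fun x _ => (hd x).hasDerivWithinAt)
      (by rw [h0]; simp) (fun x _ => hb x) t (Set.right_mem_Icc.2 ht)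
    rw [sub_zero] at hg
    refine hg.trans ?_
    by_cases hK0 : K = 0
    · subst hK0
      simp [gronwallBound_K0]
    · have hKpos : 0 < K := lt_of_le_of_ne hK (Ne.symm hK0)
      rw [gronwallBound_of_K_ne_0 hK0]
      have hexp : Real.exp (K * t) - 1 ≤ K * t * Real.exp (K * t) := by
        have h := Real.add_one_le_exp (-(K * t))
        have hp := Real.exp_pos (K * t)
        have hmul : (-(K * t) + 1) * Real.exp (K * t) ≤ Real.exp (-(K * t)) * Real.exp (K * t) :=
          mul_le_mul_of_nonneg_right h (le_of_lt hp)
        rw [← Real.exp_add] at hmul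
        simp at hmul
        nlinarith
      calc (0:ℝ) * Real.exp (K * t) + ε / K * (Real.exp (K * t) - 1)
          ≤ 0 + ε / K * (K * t * Real.exp (K * t)) := by
            refine add_le_add (by simp) ?_
            exact mul_le_mul_of_nonneg_left hexp (div_nonneg hε hK)
        _ = ε * t * Real.exp (K * t) := by field_simp; ring

open intervalIntegral in
lemma gron_main {E' : Type*} [NormedAddCommGroup E'] [NormedSpace ℝ E'] [CompleteSpace E']
    {F F' : ℝ → E'}
    (hd : ∀ s, HasDerivAt F (F' s) s) (hc : Continuous F') (h0 : F 0 = 0)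
    {K ε : ℝ} (hK : 0 ≤ K) (hε : 0 ≤ ε) (hb : ∀ s, ‖F' s‖ ≤ K * ‖F s‖ + ε) (t : ℝ) :
    ‖F t‖ ≤ K * |∫ s in (0:ℝ)..t, ‖F s‖| + ε * |t| ∧
      ‖F t‖ ≤ ε * |t| * Real.exp (K * |t|) := by
  have hFc : Continuous F := continuous_iff_continuousAt.2 fun s => (hd s).continuousAt
  rcases le_or_gt 0 t with ht | ht
  · have h := gron_pos hd hc h0 hK hε hb ht
    have habs : |∫ s in (0:ℝ)..t, ‖F s‖| = ∫ s in (0:ℝ)..t, ‖F s‖ :=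
      abs_of_nonneg (integral_nonneg ht fun s _ => norm_nonneg _)
    rw [abs_of_nonneg ht, habs]
    exact h
  · set G : ℝ → E' := fun s => F (-s) with hG
    set G' : ℝ → E' := fun s => (-1 : ℝ) • F' (-s) with hG'
    have hdG : ∀ s, HasDerivAt G (G' s) s := by
      intro s
      have := (hd (-s)).scomp s (hasDerivAt_neg s)
      simpa [hG, hG', Function.comp_def] using this
    have hcG : Continuous G' := (hc.comp continuous_neg).const_smul _
    have h0G : G 0 = 0 := by simp [hG, h0]
    have hbG : ∀ s, ‖G' s‖ ≤ K * ‖G s‖ + ε := by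
      intro s
      have : ‖G' s‖ = ‖F' (-s)‖ := by simp [hG', norm_smul]
      rw [this]
      exact hb (-s)
    have h := gron_pos hdG hcG h0G hK hε hbG (t := -t) (by linarith)
    have hGt : G (-t) = F t := by simp [hG]
    have hint : ∫ s in (0:ℝ)..(-t), ‖G s‖ = |∫ s in (0:ℝ)..t, ‖F s‖| := by
      have h1 : ∫ s in (0:ℝ)..(-t), ‖G s‖ = ∫ s in (0:ℝ)..(-t), ‖F (-s)‖ := rfl
      have h2 : ∫ s in (0:ℝ)..(-t), ‖F (-s)‖ = ∫ s in t..(0:ℝ), ‖F s‖ := by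
        rw [intervalIntegral.integral_comp_neg (f := fun s => ‖F s‖)]
        norm_num
      have h3 : (0:ℝ) ≤ ∫ s in t..(0:ℝ), ‖F s‖ :=
        integral_nonneg (by linarith) fun s _ => norm_nonneg _
      have h4 : ∫ s in (0:ℝ)..t, ‖F s‖ = -∫ s in t..(0:ℝ), ‖F s‖ :=
        intervalIntegral.integral_symm t 0
      rw [h1, h2, h4, abs_neg, abs_of_nonneg h3]
    rw [hGt, hint] at h
    rw [abs_of_neg ht]
    exact h

/-- Duhamel + Grönwall estimate. Let `A` be self-adjoint and `P` a
finite-rank orthogonal projection with `‖(I−P)AP‖₂ ≤ δ`, `‖AP‖ ≤ a` and `rank P ≤ N`. Then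
`α(t) = ‖(I−P)e^{itA}P‖₂` satisfies, for `|t| ≤ T`,
`α(t) ≤ a√N ∫₀ᵗ α(s) ds + Tδ√N`, and consequently `α(t) ≤ Tδ√N e^{a√N T}`. -/
theorem stmt_13 {𝓗 : Type*} [NormedAddCommGroup 𝓗] [InnerProductSpace ℂ 𝓗] [CompleteSpace 𝓗]
    {ι : Type*} (bas : HilbertBasis ι ℂ 𝓗)
    (A P : 𝓗 →L[ℂ] 𝓗) (hA : IsSelfAdjoint A)
    (hP : IsIdempotentElem P) (hP' : IsSelfAdjoint P)
    (hPfin : FiniteDimensional ℂ (LinearMap.range (P : 𝓗 →ₗ[ℂ] 𝓗)))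
    (a δ T : ℝ) (N : ℕ) (ha : ‖A * P‖ ≤ a)
    (hδ : hsNorm bas (((1 : 𝓗 →L[ℂ] 𝓗) - P) * A * P) ≤ δ)
    (hN : Module.finrank ℂ (LinearMap.range (P : 𝓗 →ₗ[ℂ] 𝓗)) ≤ N) (hT : 0 < T)
    (α : ℝ → ℝ)
    (hα : ∀ t : ℝ, α t =
      hsNorm bas (((1 : 𝓗 →L[ℂ] 𝓗) - P) * NormedSpace.exp ((Complex.I * t) • A) * P))
    (t : ℝ) (ht : |t| ≤ T) :
    α t ≤ a * Real.sqrt N * |∫ s in (0:ℝ)..t, α s| + T * δ * Real.sqrt N ∧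
      α t ≤ T * δ * Real.sqrt N * Real.exp (a * Real.sqrt N * T) := by
  have ha0 : (0:ℝ) ≤ a := le_trans (norm_nonneg _) ha
  have hδ0 : (0:ℝ) ≤ δ := le_trans (Real.sqrt_nonneg _) hδ
  set r := Module.finrank ℂ (LinearMap.range (P : 𝓗 →ₗ[ℂ] 𝓗)) with hrdef
  have hon : Orthonormal ℂ (projONB P) := projONB_orthonormal P
  have hone : ∀ k, ‖projONB P k‖ = 1 := hon.1
  have hPe : ∀ k, P (projONB P k) = projONB P k := fun k => proj_apply_eq hP (projONB_mem P k)
  have hα' : ∀ s : ℝ, α s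
      = Real.sqrt (∑ k, ‖(((1 : 𝓗 →L[ℂ] 𝓗) - P) * Eop A s) (projONB P k)‖ ^ 2) := by
    intro s
    rw [hα s]
    exact hsNorm_mul_proj bas (((1 : 𝓗 →L[ℂ] 𝓗) - P) * Eop A s) hP hP'
  have hopQAP : ‖((1 : 𝓗 →L[ℂ] 𝓗) - P) * A * P‖ ≤ δ := by
    refine le_trans (opNorm_mul_proj_le (((1 : 𝓗 →L[ℂ] 𝓗) - P) * A) hP hP') ?_
    rw [← hsNorm_mul_proj bas (((1 : 𝓗 →L[ℂ] 𝓗) - P) * A) hP hP']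
    exact hδ
  have hPA : ‖P * A‖ ≤ a := by
    have h1 : star (A * P) = P * A := by rw [star_mul, hP'.star_eq, hA.star_eq]
    calc ‖P * A‖ = ‖star (A * P)‖ := by rw [h1]
      _ = ‖A * P‖ := norm_star _
      _ ≤ a := ha
  set ee := PiLp.continuousLinearEquiv 2 ℂ (fun _ : Fin r => 𝓗) with hee
  set Fpi : ℝ → (Fin r → 𝓗) :=
    fun s k => (Eop A (-s) * (((1 : 𝓗 →L[ℂ] 𝓗) - P) * Eop A s)) (projONB P k) with hFpi
  set F : ℝ → PiLp 2 (fun _ : Fin r => 𝓗) := fun s => ee.symm (Fpi s) with hF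
  set Dop : ℝ → (𝓗 →L[ℂ] 𝓗) := fun s =>
    ((-1:ℝ) • (Eop A (-s) * (Complex.I • A))) * (((1 : 𝓗 →L[ℂ] 𝓗) - P) * Eop A s)
      + Eop A (-s) * (((1 : 𝓗 →L[ℂ] 𝓗) - P) * (Eop A s * (Complex.I • A))) with hDopdef
  set F' : ℝ → PiLp 2 (fun _ : Fin r => 𝓗) :=
    fun s => ee.symm (fun k => Dop s (projONB P k)) with hF'
  have hMd : ∀ s, HasDerivAt
      (fun u => Eop A (-u) * (((1 : 𝓗 →L[ℂ] 𝓗) - P) * Eop A u)) (Dop s) s := by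
    intro s
    have hneg : HasDerivAt (fun u : ℝ => -u) (-1 : ℝ) s := hasDerivAt_neg s
    have h1 : HasDerivAt (fun u : ℝ => Eop A (-u))
        ((-1:ℝ) • (Eop A (-s) * (Complex.I • A))) s :=
      (Eop_hasDerivAt A (-s)).scomp s hneg
    have h2 : HasDerivAt (fun u : ℝ => ((1 : 𝓗 →L[ℂ] 𝓗) - P) * Eop A u)
        (((1 : 𝓗 →L[ℂ] 𝓗) - P) * (Eop A s * (Complex.I • A))) s :=
      HasDerivAt.const_mul ((1 : 𝓗 →L[ℂ] 𝓗) - P) (Eop_hasDerivAt A s)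
    exact h1.mul h2
  have hFd : ∀ s, HasDerivAt F (F' s) s := by
    intro s
    have hpi : HasDerivAt Fpi (fun k => Dop s (projONB P k)) s :=
      hasDerivAt_pi.2 fun k =>
        ((ContinuousLinearMap.apply ℂ 𝓗 (projONB P k)).restrictScalars
          ℝ).hasFDerivAt.comp_hasDerivAt s (hMd s)
    exact ((ee.symm.toContinuousLinearMap.restrictScalars
      ℝ)).hasFDerivAt.comp_hasDerivAt s hpi
  have hFnorm : ∀ s, ‖F s‖
      = Real.sqrt (∑ k, ‖(((1 : 𝓗 →L[ℂ] 𝓗) - P) * Eop A s) (projONB P k)‖ ^ 2) := by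
    intro s
    rw [PiLp.norm_eq_of_L2]
    congr 1
    refine Finset.sum_congr rfl fun k _ => ?_
    have h1 : F s k = Eop A (-s) ((((1 : 𝓗 →L[ℂ] 𝓗) - P) * Eop A s) (projONB P k)) := rfl
    rw [h1, Eop_norm_apply A hA]
  have hαF : ∀ s, α s = ‖F s‖ := fun s => by rw [hα' s, hFnorm s]
  have hEzero : Eop A 0 = 1 := by
    rw [Eop, show (Complex.I * ((0:ℝ):ℂ)) • A = 0 by norm_num]
    exact NormedSpace.exp_zero
  have hF0 : F 0 = 0 := by
    have hpz : Fpi 0 = 0 := by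
      funext k
      show (Eop A (-0) * (((1 : 𝓗 →L[ℂ] 𝓗) - P) * Eop A 0)) (projONB P k) = 0
      rw [neg_zero, hEzero]
      simp [ContinuousLinearMap.mul_apply, ContinuousLinearMap.sub_apply, hPe k]
    rw [hF]
    show ee.symm (Fpi 0) = 0
    rw [hpz, map_zero]
  have hcomm : ∀ s : ℝ, Eop A s * (Complex.I • A) = (Complex.I • A) * Eop A s := by
    intro s
    have hc : Commute ((Complex.I * (s:ℝ)) • A) (Complex.I • A) :=
      ((Commute.refl A).smul_left _).smul_right _
    exact (hc.exp_left).eq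
  have hDid : ∀ s, Dop s = Eop A (-s)
      * ((Complex.I • ((((1 : 𝓗 →L[ℂ] 𝓗) - P) * A * P) - (P * A * ((1 : 𝓗 →L[ℂ] 𝓗) - P))))
        * Eop A s) := by
    intro s
    rw [hDopdef]
    show ((-1:ℝ) • (Eop A (-s) * (Complex.I • A))) * (((1 : 𝓗 →L[ℂ] 𝓗) - P) * Eop A s)
      + Eop A (-s) * (((1 : 𝓗 →L[ℂ] 𝓗) - P) * (Eop A s * (Complex.I • A))) = _
    rw [hcomm s, neg_one_smul]
    simp only [mul_smul_comm, smul_mul_assoc, neg_smul, ← smul_add, ← smul_sub, ← smul_neg]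
    congr 1
    noncomm_ring
  have hDapp : ∀ s k, Dop s (projONB P k)
      = Eop A (-s) ((Complex.I • (((1 : 𝓗 →L[ℂ] 𝓗) - P) * A * P))
          ((Eop A s) (projONB P k)))
        - Eop A (-s) ((Complex.I • (P * A * ((1 : 𝓗 →L[ℂ] 𝓗) - P)))
          ((Eop A s) (projONB P k))) := by
    intro s k
    rw [hDid s]
    simp [ContinuousLinearMap.mul_apply, ContinuousLinearMap.sub_apply,
      ContinuousLinearMap.smul_apply, smul_sub, map_sub]
  have hb : ∀ s, ‖F' s‖ ≤ a * ‖F s‖ + Real.sqrt r * δ := by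
    intro s
    set u : Fin r → 𝓗 := fun k =>
      Eop A (-s) ((Complex.I • (((1 : 𝓗 →L[ℂ] 𝓗) - P) * A * P)) ((Eop A s) (projONB P k)))
      with hu
    set v : Fin r → 𝓗 := fun k =>
      Eop A (-s) ((Complex.I • (P * A * ((1 : 𝓗 →L[ℂ] 𝓗) - P))) ((Eop A s) (projONB P k)))
      with hv
    have hsplit : F' s = ee.symm u - ee.symm v := by
      rw [hF', ← map_sub]
      show ee.symm (fun k => Dop s (projONB P k)) = ee.symm (u - v)
      congr 1
      funext k
      exact hDapp s k
    have hUcomp : ∀ k, ‖u k‖ ≤ δ := by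
      intro k
      rw [hu]
      simp only
      rw [Eop_norm_apply A hA, ContinuousLinearMap.smul_apply, norm_smul, Complex.norm_I, one_mul]
      calc ‖(((1 : 𝓗 →L[ℂ] 𝓗) - P) * A * P) (Eop A s (projONB P k))‖
          ≤ ‖((1 : 𝓗 →L[ℂ] 𝓗) - P) * A * P‖ * ‖Eop A s (projONB P k)‖ :=
            ContinuousLinearMap.le_opNorm _ _
        _ = ‖((1 : 𝓗 →L[ℂ] 𝓗) - P) * A * P‖ := by
            rw [Eop_norm_apply A hA, hone k, mul_one]
        _ ≤ δ := hopQAP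
    have hU : ‖(ee.symm u : PiLp 2 (fun _ : Fin r => 𝓗))‖ ≤ Real.sqrt r * δ := by
      rw [PiLp.norm_eq_of_L2]
      have heq : ∀ k, (ee.symm u : PiLp 2 (fun _ : Fin r => 𝓗)) k = u k := fun k => rfl
      calc Real.sqrt (∑ k, ‖(ee.symm u : PiLp 2 (fun _ : Fin r => 𝓗)) k‖ ^ 2)
          ≤ Real.sqrt (∑ _k : Fin r, δ ^ 2) := by
            apply Real.sqrt_le_sqrt
            refine Finset.sum_le_sum fun k _ => ?_
            rw [heq k]
            exact pow_le_pow_left₀ (norm_nonneg _) (hUcomp k) 2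
        _ = Real.sqrt r * δ := by
            rw [Finset.sum_const, Finset.card_univ, Fintype.card_fin, nsmul_eq_mul,
              Real.sqrt_mul (Nat.cast_nonneg r), Real.sqrt_sq hδ0]
    have hVcomp : ∀ k, ‖v k‖
        ≤ a * ‖(((1 : 𝓗 →L[ℂ] 𝓗) - P) * Eop A s) (projONB P k)‖ := by
      intro k
      rw [hv]
      simp only
      rw [Eop_norm_apply A hA, ContinuousLinearMap.smul_apply, norm_smul, Complex.norm_I, one_mul]
      have h2 : (P * A * ((1 : 𝓗 →L[ℂ] 𝓗) - P)) (Eop A s (projONB P k))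
          = (P * A) ((((1 : 𝓗 →L[ℂ] 𝓗) - P) * Eop A s) (projONB P k)) := rfl
      rw [h2]
      calc ‖(P * A) ((((1 : 𝓗 →L[ℂ] 𝓗) - P) * Eop A s) (projONB P k))‖
          ≤ ‖P * A‖ * ‖(((1 : 𝓗 →L[ℂ] 𝓗) - P) * Eop A s) (projONB P k)‖ :=
            ContinuousLinearMap.le_opNorm _ _
        _ ≤ a * ‖(((1 : 𝓗 →L[ℂ] 𝓗) - P) * Eop A s) (projONB P k)‖ :=
            mul_le_mul_of_nonneg_right hPA (norm_nonneg _)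
    have hV : ‖(ee.symm v : PiLp 2 (fun _ : Fin r => 𝓗))‖ ≤ a * ‖F s‖ := by
      rw [PiLp.norm_eq_of_L2, hFnorm s]
      have heq : ∀ k, (ee.symm v : PiLp 2 (fun _ : Fin r => 𝓗)) k = v k := fun k => rfl
      calc Real.sqrt (∑ k, ‖(ee.symm v : PiLp 2 (fun _ : Fin r => 𝓗)) k‖ ^ 2)
          ≤ Real.sqrt (∑ k,
              (a * ‖(((1 : 𝓗 →L[ℂ] 𝓗) - P) * Eop A s) (projONB P k)‖) ^ 2) := by
            apply Real.sqrt_le_sqrt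
            refine Finset.sum_le_sum fun k _ => ?_
            rw [heq k]
            exact pow_le_pow_left₀ (norm_nonneg _) (hVcomp k) 2
        _ = a * Real.sqrt (∑ k,
              ‖(((1 : 𝓗 →L[ℂ] 𝓗) - P) * Eop A s) (projONB P k)‖ ^ 2) := by
            simp_rw [mul_pow]
            rw [← Finset.mul_sum, Real.sqrt_mul (sq_nonneg a), Real.sqrt_sq ha0]
    calc ‖F' s‖ = ‖(ee.symm u : PiLp 2 (fun _ : Fin r => 𝓗)) - ee.symm v‖ := by rw [hsplit]
      _ ≤ ‖(ee.symm u : PiLp 2 (fun _ : Fin r => 𝓗))‖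
          + ‖(ee.symm v : PiLp 2 (fun _ : Fin r => 𝓗))‖ := norm_sub_le _ _
      _ ≤ Real.sqrt r * δ + a * ‖F s‖ := add_le_add hU hV
      _ = a * ‖F s‖ + Real.sqrt r * δ := by ring
  have hcF' : Continuous F' := by
    have h1 : Continuous (fun s : ℝ => Eop A (-s)) := (Eop_continuous A).comp continuous_neg
    have hD : Continuous Dop := by
      rw [hDopdef]
      exact (((h1.mul continuous_const).const_smul (-1:ℝ)).mul
        (continuous_const.mul (Eop_continuous A))).add
        (h1.mul (continuous_const.mul ((Eop_continuous A).mul continuous_const)))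
    rw [hF']
    exact ee.symm.continuous.comp (continuous_pi fun k =>
      (ContinuousLinearMap.apply ℂ 𝓗 (projONB P k)).continuous.comp hD)
  have hgron := gron_main hFd hcF' hF0 ha0 (mul_nonneg (Real.sqrt_nonneg _) hδ0) hb t
  have hint : ∫ s in (0:ℝ)..t, α s = ∫ s in (0:ℝ)..t, ‖F s‖ :=
    intervalIntegral.integral_congr fun s _ => hαF s
  rw [hαF t, hint]
  obtain ⟨hg1, hg2⟩ := hgron
  by_cases hN0 : N = 0
  · subst hN0
    have hr0 : r = 0 := Nat.le_zero.mp hN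
    have hzero : ‖F t‖ = 0 := by
      rw [hFnorm t]
      have hemp : IsEmpty (Fin r) := by rw [hr0]; exact Fin.isEmpty
      rw [Finset.univ_eq_empty, Finset.sum_empty, Real.sqrt_zero]
    rw [hzero]
    norm_num
  · have hN1 : (1:ℝ) ≤ Real.sqrt N := by
      rw [show (1:ℝ) = Real.sqrt 1 by rw [Real.sqrt_one]]
      exact Real.sqrt_le_sqrt (by exact_mod_cast Nat.one_le_iff_ne_zero.2 hN0)
    have hrN : Real.sqrt r ≤ Real.sqrt N := Real.sqrt_le_sqrt (by exact_mod_cast hN)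
    have hsqN0 : (0:ℝ) ≤ Real.sqrt N := Real.sqrt_nonneg _
    have hsqr0 : (0:ℝ) ≤ Real.sqrt r := Real.sqrt_nonneg _
    have habs0 : (0:ℝ) ≤ |∫ s in (0:ℝ)..t, ‖F s‖| := abs_nonneg _
    have habst : (0:ℝ) ≤ |t| := abs_nonneg _
    constructor
    · refine hg1.trans ?_
      have h1 : a * |∫ s in (0:ℝ)..t, ‖F s‖|
          ≤ a * Real.sqrt N * |∫ s in (0:ℝ)..t, ‖F s‖| := by
        nlinarith [mul_nonneg (mul_nonneg ha0 habs0) (sub_nonneg.2 hN1)]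
      have h2 : Real.sqrt r * δ * |t| ≤ T * δ * Real.sqrt N := by
        have e1 : Real.sqrt r * δ * |t| ≤ Real.sqrt N * δ * |t| :=
          mul_le_mul_of_nonneg_right (mul_le_mul_of_nonneg_right hrN hδ0) habst
        have e2 : Real.sqrt N * δ * |t| ≤ Real.sqrt N * δ * T :=
          mul_le_mul_of_nonneg_left ht (by positivity)
        have e3 : Real.sqrt N * δ * T = T * δ * Real.sqrt N := by ring
        linarith
      linarith
    · refine hg2.trans ?_
      have hexp : Real.exp (a * |t|) ≤ Real.exp (a * Real.sqrt N * T) := by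
        apply Real.exp_le_exp.2
        have e1 : a * |t| ≤ a * T := mul_le_mul_of_nonneg_left ht ha0
        nlinarith [mul_nonneg (mul_nonneg ha0 hT.le) (sub_nonneg.2 hN1)]
      calc Real.sqrt r * δ * |t| * Real.exp (a * |t|)
          ≤ (Real.sqrt N * δ * T) * Real.exp (a * Real.sqrt N * T) := by
            apply mul_le_mul ?_ hexp (Real.exp_pos _).le (by positivity)
            have e1 : Real.sqrt r * δ * |t| ≤ Real.sqrt N * δ * |t| :=
              mul_le_mul_of_nonneg_right (mul_le_mul_of_nonneg_right hrN hδ0) habst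
            have e2 : Real.sqrt N * δ * |t| ≤ Real.sqrt N * δ * T :=
              mul_le_mul_of_nonneg_left ht (by positivity)
            linarith
        _ = T * δ * Real.sqrt N * Real.exp (a * Real.sqrt N * T) := by ring
end

section
/- Let H, H₀ be bounded operators, P a finite-rank projection, and r ≥ 1. Then ‖(H^r − (PHP)^r)P‖₂ ≤ r(1+‖H‖)^r ‖(I−P)HP‖₂. -/
open scoped ENNReal NNReal ComplexConjugate

noncomputable section Aux
variable {𝓗 : Type*} [NormedAddCommGroup 𝓗] [InnerProductSpace ℂ 𝓗] [CompleteSpace 𝓗]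
  {ι : Type*}

local notation "⟪" x ", " y "⟫" => @inner ℂ _ _ x y

def Eh (bas : HilbertBasis ι ℂ 𝓗) (T : 𝓗 →L[ℂ] 𝓗) : ℝ≥0∞ :=
  ∑' i, (‖T (bas i)‖₊ : ℝ≥0∞) ^ (2:ℝ)

lemma coe_sq (a : ℝ≥0) : (a : ℝ≥0∞) ^ (2:ℝ) = ((a ^ 2 : ℝ≥0) : ℝ≥0∞) := by
  rw [← ENNReal.coe_rpow_of_nonneg _ (by norm_num : (0:ℝ) ≤ 2)]
  congr 1
  rw [← NNReal.rpow_natCast a 2]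
  norm_num

lemma sq_half (a : ℝ≥0∞) : (a ^ (2:ℝ)) ^ (1/2:ℝ) = a := by
  rw [← ENNReal.rpow_mul]; norm_num

lemma parseval_real (bas : HilbertBasis ι ℂ 𝓗) (x : 𝓗) :
    HasSum (fun i => ‖⟪bas i, x⟫‖ ^ 2) (‖x‖ ^ 2) := by
  have h := (bas.hasSum_inner_mul_inner x x).mapL Complex.reCLM
  convert h using 2 with i
  · show _ = Complex.reCLM _
    simp only [Complex.reCLM_apply, ← inner_conj_symm x (bas i), Complex.conj_mul']
    norm_cast
  · show _ = Complex.reCLM _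
    simp only [Complex.reCLM_apply]
    exact (inner_self_eq_norm_sq (𝕜 := ℂ) x).symm

lemma parseval_nnreal (bas : HilbertBasis ι ℂ 𝓗) (x : 𝓗) :
    HasSum (fun i => ‖⟪bas i, x⟫‖₊ ^ 2) (‖x‖₊ ^ 2) := by
  have h := parseval_real bas x
  simp only [← coe_nnnorm, ← NNReal.coe_pow] at h
  exact NNReal.hasSum_coe.mp h

lemma parseval_E (bas : HilbertBasis ι ℂ 𝓗) (x : 𝓗) :
    ∑' i, (‖⟪bas i, x⟫‖₊ : ℝ≥0∞) ^ (2:ℝ) = (‖x‖₊ : ℝ≥0∞) ^ (2:ℝ) := by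
  simp_rw [coe_sq]
  exact ENNReal.tsum_coe_eq (parseval_nnreal bas x)

lemma Eh_adjoint (bas : HilbertBasis ι ℂ 𝓗) (X : 𝓗 →L[ℂ] 𝓗) :
    Eh bas (ContinuousLinearMap.adjoint X) = Eh bas X := by
  have key : ∀ (Y : 𝓗 →L[ℂ] 𝓗) (j : ι),
      (‖Y (bas j)‖₊ : ℝ≥0∞) ^ (2:ℝ) = ∑' i, (‖⟪bas i, Y (bas j)⟫‖₊ : ℝ≥0∞) ^ (2:ℝ) :=
    fun Y j => (parseval_E bas _).symm
  calc Eh bas (ContinuousLinearMap.adjoint X)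
      = ∑' j, ∑' i, (‖⟪bas i, (ContinuousLinearMap.adjoint X) (bas j)⟫‖₊ : ℝ≥0∞) ^ (2:ℝ) :=
        tsum_congr (fun j => key _ j)
    _ = ∑' j, ∑' i, (‖⟪bas j, X (bas i)⟫‖₊ : ℝ≥0∞) ^ (2:ℝ) := by
        refine tsum_congr fun j => tsum_congr fun i => ?_
        have h : ‖⟪bas i, (ContinuousLinearMap.adjoint X) (bas j)⟫‖
            = ‖⟪bas j, X (bas i)⟫‖ := by
          rw [norm_inner_symm, ContinuousLinearMap.adjoint_inner_left]
        congr 2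
        exact NNReal.coe_injective h
    _ = ∑' i, ∑' j, (‖⟪bas j, X (bas i)⟫‖₊ : ℝ≥0∞) ^ (2:ℝ) := ENNReal.tsum_comm
    _ = Eh bas X := tsum_congr (fun i => (key X i).symm)

lemma Eh_mul_left (bas : HilbertBasis ι ℂ 𝓗) (A B : 𝓗 →L[ℂ] 𝓗) :
    Eh bas (A * B) ≤ (‖A‖₊ : ℝ≥0∞) ^ (2:ℝ) * Eh bas B := by
  rw [Eh, Eh, ← ENNReal.tsum_mul_left]
  refine ENNReal.tsum_le_tsum fun i => ?_
  rw [← ENNReal.mul_rpow_of_nonneg _ _ (by norm_num : (0:ℝ) ≤ 2)]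
  refine ENNReal.rpow_le_rpow ?_ (by norm_num)
  rw [← ENNReal.coe_mul]
  exact_mod_cast (A.le_opNNNorm (B (bas i)))

lemma Eh_mul_right (bas : HilbertBasis ι ℂ 𝓗) (A B : 𝓗 →L[ℂ] 𝓗) :
    Eh bas (A * B) ≤ (‖B‖₊ : ℝ≥0∞) ^ (2:ℝ) * Eh bas A := by
  rw [← Eh_adjoint bas (A * B), ← Eh_adjoint bas A]
  have : ContinuousLinearMap.adjoint (A * B)
      = (ContinuousLinearMap.adjoint B) * (ContinuousLinearMap.adjoint A) :=
    ContinuousLinearMap.adjoint_comp A B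
  rw [this]
  have hB : ‖ContinuousLinearMap.adjoint B‖₊ = ‖B‖₊ :=
    NNReal.coe_injective (ContinuousLinearMap.adjoint.norm_map B)
  rw [← hB]
  exact Eh_mul_left bas _ _

lemma minkowski_tsum {κ : Type*} (f g : κ → ℝ≥0∞) :
    (∑' i, (f i + g i) ^ (2:ℝ)) ^ (1/2:ℝ)
      ≤ (∑' i, f i ^ (2:ℝ)) ^ (1/2:ℝ) + (∑' i, g i ^ (2:ℝ)) ^ (1/2:ℝ) := by
  set A := (∑' i, f i ^ (2:ℝ)) ^ (1/2:ℝ)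
  set B := (∑' i, g i ^ (2:ℝ)) ^ (1/2:ℝ)
  have key : ∀ s : Finset κ, (∑ i ∈ s, (f i + g i) ^ (2:ℝ)) ≤ (A + B) ^ (2:ℝ) := by
    intro s
    have h1 := ENNReal.Lp_add_le s f g (by norm_num : (1:ℝ) ≤ 2)
    have h2 : (∑ i ∈ s, (f i + g i) ^ (2:ℝ)) ^ (1/2:ℝ) ≤ A + B := by
      refine h1.trans (add_le_add ?_ ?_) <;>
        exact ENNReal.rpow_le_rpow (ENNReal.sum_le_tsum s) (by norm_num)
    calc (∑ i ∈ s, (f i + g i) ^ (2:ℝ))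
        = ((∑ i ∈ s, (f i + g i) ^ (2:ℝ)) ^ (1/2:ℝ)) ^ (2:ℝ) := by
          rw [← ENNReal.rpow_mul]; norm_num
      _ ≤ (A + B) ^ (2:ℝ) := ENNReal.rpow_le_rpow h2 (by norm_num)
  have h3 : (∑' i, (f i + g i) ^ (2:ℝ)) ≤ (A + B) ^ (2:ℝ) := by
    rw [ENNReal.tsum_eq_iSup_sum]
    exact iSup_le key
  calc (∑' i, (f i + g i) ^ (2:ℝ)) ^ (1/2:ℝ)
      ≤ ((A + B) ^ (2:ℝ)) ^ (1/2:ℝ) := ENNReal.rpow_le_rpow h3 (by norm_num)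
    _ = A + B := sq_half _

lemma sqE_add (bas : HilbertBasis ι ℂ 𝓗) (X Y : 𝓗 →L[ℂ] 𝓗) :
    (Eh bas (X + Y)) ^ (1/2:ℝ) ≤ (Eh bas X) ^ (1/2:ℝ) + (Eh bas Y) ^ (1/2:ℝ) := by
  have h1 : Eh bas (X + Y) ≤ ∑' i, ((‖X (bas i)‖₊ : ℝ≥0∞) + (‖Y (bas i)‖₊ : ℝ≥0∞)) ^ (2:ℝ) := by
    refine ENNReal.tsum_le_tsum fun i => ENNReal.rpow_le_rpow ?_ (by norm_num)
    rw [← ENNReal.coe_add]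
    exact_mod_cast nnnorm_add_le (X (bas i)) (Y (bas i))
  exact (ENNReal.rpow_le_rpow h1 (by norm_num)).trans (minkowski_tsum _ _)

lemma Eh_zero (bas : HilbertBasis ι ℂ 𝓗) : Eh bas (0 : 𝓗 →L[ℂ] 𝓗) = 0 := by
  simp [Eh, ENNReal.zero_rpow_of_pos]

lemma sqE_sum (bas : HilbertBasis ι ℂ 𝓗) {κ : Type*} (s : Finset κ) (T : κ → (𝓗 →L[ℂ] 𝓗)) :
    (Eh bas (∑ a ∈ s, T a)) ^ (1/2:ℝ) ≤ ∑ a ∈ s, (Eh bas (T a)) ^ (1/2:ℝ) := by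
  classical
  induction s using Finset.induction_on with
  | empty => simp [Eh_zero, ENNReal.zero_rpow_of_pos]
  | insert a s' h ih =>
    rw [Finset.sum_insert h, Finset.sum_insert h]
    exact (sqE_add bas _ _).trans (add_le_add_right ih _)

lemma proj_inner_move {P : 𝓗 →L[ℂ] 𝓗} (hP' : IsSelfAdjoint P) (x y : 𝓗) :
    ⟪P x, y⟫ = ⟪x, P y⟫ := by
  have h := ContinuousLinearMap.adjoint_inner_left P y x
  rwa [hP'.adjoint_eq] at h

lemma proj_nnnorm_le_one {P : 𝓗 →L[ℂ] 𝓗} (hP : IsIdempotentElem P) (hP' : IsSelfAdjoint P) :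
    ‖P‖₊ ≤ 1 := by
  have hnorm : ‖P‖ ≤ 1 := by
    refine ContinuousLinearMap.opNorm_le_bound P zero_le_one (fun x => ?_)
    rw [one_mul]
    have hPP : P (P x) = P x := by
      have := congrArg (fun T : 𝓗 →L[ℂ] 𝓗 => T x) hP.eq
      simpa using this
    have hsq : ‖P x‖ ^ 2 = RCLike.re (⟪x, P x⟫ : ℂ) := by
      rw [← inner_self_eq_norm_sq (𝕜 := ℂ) (P x), proj_inner_move hP', hPP]
    have hb : RCLike.re (⟪x, P x⟫ : ℂ) ≤ ‖x‖ * ‖P x‖ := re_inner_le_norm x (P x)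
    rcases eq_or_lt_of_le (norm_nonneg (P x)) with h0 | h0
    · rw [← h0]; exact norm_nonneg x
    · nlinarith [hsq, hb]
  exact_mod_cast hnorm

lemma proj_fix {P : 𝓗 →L[ℂ] 𝓗} (hP : IsIdempotentElem P) (y : 𝓗)
    (hy : y ∈ LinearMap.range (P : 𝓗 →ₗ[ℂ] 𝓗)) : P y = y := by
  obtain ⟨u, rfl⟩ := hy
  have := congrArg (fun T : 𝓗 →L[ℂ] 𝓗 => T u) hP.eq
  simpa using this

lemma Eh_proj_fin (bas : HilbertBasis ι ℂ 𝓗) {P : 𝓗 →L[ℂ] 𝓗}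
    (hP : IsIdempotentElem P) (hP' : IsSelfAdjoint P)
    (hPfin : FiniteDimensional ℂ (LinearMap.range (P : 𝓗 →ₗ[ℂ] 𝓗))) :
    Eh bas P ≠ ⊤ := by
  haveI := hPfin
  set V := LinearMap.range (P : 𝓗 →ₗ[ℂ] 𝓗)
  set w := stdOrthonormalBasis ℂ V with hw
  have key : ∀ i : ι, (‖P (bas i)‖₊ : ℝ≥0∞) ^ (2:ℝ)
      = ∑ k, (‖⟪((w k : V) : 𝓗), bas i⟫‖₊ : ℝ≥0∞) ^ (2:ℝ) := by
    intro i
    have hmem : P (bas i) ∈ V := LinearMap.mem_range_self P.toLinearMap (bas i)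
    set v : V := ⟨P (bas i), hmem⟩ with hv
    have hnorm : ‖P (bas i)‖ = ‖v‖ := rfl
    have hpar : ‖v‖ ^ 2 = ∑ k, ‖⟪(w k : V), v⟫‖ ^ 2 := by
      have h2 := congrArg Complex.re (w.sum_inner_mul_inner v v)
      rw [Complex.re_sum] at h2
      calc ‖v‖ ^ 2 = (⟪v, v⟫ : ℂ).re := (inner_self_eq_norm_sq (𝕜 := ℂ) v).symm
        _ = ∑ k, (⟪v, w k⟫ * ⟪w k, v⟫ : ℂ).re := h2.symm
        _ = ∑ k, ‖⟪(w k : V), v⟫‖ ^ 2 := Finset.sum_congr rfl fun k _ => by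
              simp only [← inner_conj_symm v (w k), Complex.conj_mul']
              norm_cast
    have hterm : ∀ k, ‖⟪(w k : V), v⟫‖ = ‖⟪((w k : V) : 𝓗), bas i⟫‖ := by
      intro k
      have h1 : (⟪(w k : V), v⟫ : ℂ) = ⟪((w k : V) : 𝓗), P (bas i)⟫ := rfl
      rw [h1, ← proj_inner_move hP', proj_fix hP _ (w k : V).2]
    have hnn : ‖P (bas i)‖₊ ^ 2 = ∑ k, ‖⟪((w k : V) : 𝓗), bas i⟫‖₊ ^ 2 := by
      apply NNReal.coe_injective
      push_cast
      rw [hnorm, hpar]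
      exact Finset.sum_congr rfl fun k _ => by rw [hterm k]
    rw [coe_sq, hnn]
    push_cast
    exact Finset.sum_congr rfl fun k _ => (coe_sq _).symm
  have hone : ∀ k : Fin (Module.finrank ℂ V), (‖((w k : V) : 𝓗)‖₊ : ℝ≥0∞) ^ (2:ℝ) = 1 := by
    intro k
    have h2 : ‖((w k : V) : 𝓗)‖ = 1 := by
      rw [show ‖((w k : V) : 𝓗)‖ = ‖(w k : V)‖ from rfl]
      exact w.orthonormal.1 k
    have h3 : ‖((w k : V) : 𝓗)‖₊ = 1 := NNReal.coe_injective (by simpa using h2)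
    rw [h3]
    simp
  rw [Eh]
  calc (∑' i, (‖P (bas i)‖₊ : ℝ≥0∞) ^ (2:ℝ))
      = ∑' i, ∑ k, (‖⟪((w k : V) : 𝓗), bas i⟫‖₊ : ℝ≥0∞) ^ (2:ℝ) := tsum_congr key
    _ = ∑ k, ∑' i, (‖⟪((w k : V) : 𝓗), bas i⟫‖₊ : ℝ≥0∞) ^ (2:ℝ) :=
        (Summable.tsum_finsetSum (fun k _ => ENNReal.summable))
    _ = ∑ k : Fin (Module.finrank ℂ V), (‖((w k : V) : 𝓗)‖₊ : ℝ≥0∞) ^ (2:ℝ) := by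
        refine Finset.sum_congr rfl fun k _ => ?_
        calc ∑' i, (‖⟪((w k : V) : 𝓗), bas i⟫‖₊ : ℝ≥0∞) ^ (2:ℝ)
            = ∑' i, (‖⟪bas i, ((w k : V) : 𝓗)⟫‖₊ : ℝ≥0∞) ^ (2:ℝ) := by
              refine tsum_congr fun i => ?_
              congr 2
              exact NNReal.coe_injective (norm_inner_symm _ _)
          _ = _ := parseval_E bas _
    _ = ∑ k : Fin (Module.finrank ℂ V), (1:ℝ≥0∞) :=
        Finset.sum_congr rfl fun k _ => hone k
    _ ≠ ⊤ := by simp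




lemma pbp {R : Type*} [Ring R] (P Hm : R) (hP : P * P = P) (l : ℕ) :
    P * ((P * Hm * P) ^ l * P) = (P * Hm * P) ^ l * P := by
  induction l with
  | zero => simpa using hP
  | succ n ih =>
    have hPB : P * (P * Hm * P) = P * Hm * P := by rw [← mul_assoc, ← mul_assoc, hP]
    calc P * ((P * Hm * P) ^ (n+1) * P)
        = (P * (P * Hm * P)) * ((P * Hm * P) ^ n * P) := by rw [pow_succ', mul_assoc, ← mul_assoc]
      _ = (P * Hm * P) * ((P * Hm * P) ^ n * P) := by rw [hPB]
      _ = (P * Hm * P) ^ (n+1) * P := by rw [← mul_assoc, ← pow_succ']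

lemma telescope {R : Type*} [Ring R] (Hm P : R) (hP : P * P = P) (r : ℕ) :
    Hm ^ r * P - (P * Hm * P) ^ r * P
      = ∑ l ∈ Finset.range r, Hm ^ (r - 1 - l) * ((1 - P) * Hm * P) * ((P * Hm * P) ^ l * P) := by
  induction r with
  | zero => simp
  | succ n ih =>
    have hD : ((1 - P) * Hm * P) * ((P * Hm * P) ^ n * P)
        = Hm * ((P * Hm * P) ^ n * P) - (P * Hm * P) ^ (n+1) * P := by
      have expand : (1 - P) * Hm * P = Hm * P - P * Hm * P := by noncomm_ring
      rw [expand, sub_mul]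
      congr 1
      · rw [mul_assoc, pbp P Hm hP]
      · rw [← mul_assoc, ← pow_succ']
    have hsum : ∑ l ∈ Finset.range n, Hm ^ (n + 1 - 1 - l) * ((1 - P) * Hm * P) * ((P * Hm * P) ^ l * P)
        = Hm * ∑ l ∈ Finset.range n, Hm ^ (n - 1 - l) * ((1 - P) * Hm * P) * ((P * Hm * P) ^ l * P) := by
      rw [Finset.mul_sum]
      refine Finset.sum_congr rfl fun l hl => ?_
      have hl' := Finset.mem_range.mp hl
      have he : n + 1 - 1 - l = (n - 1 - l) + 1 := by omega
      rw [he, pow_succ']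
      simp [mul_assoc]
    rw [Finset.sum_range_succ, hsum, ← ih]
    have h0 : n + 1 - 1 - n = 0 := by omega
    rw [h0, pow_zero, one_mul]
    rw [hD]
    noncomm_ring
    rw [add_comm]
    congr 1
    rw [← mul_assoc, ← mul_assoc, ← pow_succ, ← pow_succ']


lemma hsNorm_eq_toReal (bas : HilbertBasis ι ℂ 𝓗) (T : 𝓗 →L[ℂ] 𝓗) (h : Eh bas T ≠ ⊤) :
    hsNorm bas T = ((Eh bas T) ^ (1/2:ℝ)).toReal := by
  set F : ι → ℝ≥0 := fun i => ‖T (bas i)‖₊ ^ 2 with hF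
  have hEF : Eh bas T = ∑' i, (F i : ℝ≥0∞) := by
    simp_rw [Eh, hF, coe_sq]
  have hs : Summable F := ENNReal.tsum_coe_ne_top_iff_summable.mp (by rw [← hEF]; exact h)
  have h2 : (Eh bas T).toReal = ∑' i, ‖T (bas i)‖ ^ 2 := by
    rw [hEF, ← ENNReal.coe_tsum hs, ENNReal.coe_toReal, NNReal.coe_tsum]
    push_cast [hF]
    rfl
  rw [hsNorm, ← ENNReal.toReal_rpow, h2, ← Real.sqrt_eq_rpow]

lemma clm_nnnorm_pow_le (A : 𝓗 →L[ℂ] 𝓗) (k : ℕ) : ‖A ^ k‖₊ ≤ ‖A‖₊ ^ k := by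
  induction k with
  | zero =>
    simp only [pow_zero]
    have h : ‖(1 : 𝓗 →L[ℂ] 𝓗)‖ ≤ 1 := ContinuousLinearMap.norm_id_le
    exact_mod_cast h
  | succ n ih =>
    calc ‖A ^ (n+1)‖₊ = ‖A ^ n * A‖₊ := by rw [pow_succ]
      _ ≤ ‖A ^ n‖₊ * ‖A‖₊ := nnnorm_mul_le _ _
      _ ≤ ‖A‖₊ ^ n * ‖A‖₊ := mul_le_mul_left ih _
      _ = ‖A‖₊ ^ (n+1) := (pow_succ _ _).symm

end Aux

/-- For a bounded operator `H`, a finite-rank orthogonal projection `P` and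
`r ≥ 1`: `‖(H^r − (PHP)^r)P‖₂ ≤ r (1+‖H‖)^r ‖(I−P)HP‖₂`. -/
theorem stmt_16 {𝓗 : Type*} [NormedAddCommGroup 𝓗] [InnerProductSpace ℂ 𝓗] [CompleteSpace 𝓗]
    {ι : Type*} (bas : HilbertBasis ι ℂ 𝓗)
    (H P : 𝓗 →L[ℂ] 𝓗)
    (hP : IsIdempotentElem P) (hP' : IsSelfAdjoint P)
    (hPfin : FiniteDimensional ℂ (LinearMap.range (P : 𝓗 →ₗ[ℂ] 𝓗)))
    (r : ℕ) (hr : 1 ≤ r) :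
    hsNorm bas ((H ^ r - (P * H * P) ^ r) * P) ≤
      r * (1 + ‖H‖) ^ r * hsNorm bas (((1 : 𝓗 →L[ℂ] 𝓗) - P) * H * P) := by
  classical
  set Dop : 𝓗 →L[ℂ] 𝓗 := ((1 : 𝓗 →L[ℂ] 𝓗) - P) * H * P with hDop
  set L : 𝓗 →L[ℂ] 𝓗 := (H ^ r - (P * H * P) ^ r) * P with hL
  set c : ℝ≥0 := 1 + ‖H‖₊ with hc
  have hPle : ‖P‖₊ ≤ 1 := proj_nnnorm_le_one hP hP'
  have hc1 : (1:ℝ≥0) ≤ c := le_add_of_nonneg_right zero_le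
  have hHc : ‖H‖₊ ≤ c := le_add_of_nonneg_left zero_le_one
  -- finiteness of Eh of Dop
  have hDfin : Eh bas Dop ≠ ⊤ := by
    have h1 : Eh bas Dop ≤ (‖((1 : 𝓗 →L[ℂ] 𝓗) - P) * H‖₊ : ℝ≥0∞) ^ (2:ℝ) * Eh bas P :=
      Eh_mul_left bas (((1 : 𝓗 →L[ℂ] 𝓗) - P) * H) P
    exact ne_top_of_le_ne_top
      (ENNReal.mul_ne_top
        (ENNReal.rpow_ne_top_of_nonneg (by norm_num) ENNReal.coe_ne_top)
        (Eh_proj_fin bas hP hP' hPfin)) h1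
  -- telescoping
  have hop : L = ∑ l ∈ Finset.range r,
      H ^ (r - 1 - l) * Dop * ((P * H * P) ^ l * P) := by
    rw [hL, sub_mul]
    exact telescope H P hP.eq r
  -- per-term bound
  have hterm : ∀ l ∈ Finset.range r,
      (Eh bas (H ^ (r - 1 - l) * Dop * ((P * H * P) ^ l * P))) ^ (1/2:ℝ)
        ≤ ((c ^ r : ℝ≥0) : ℝ≥0∞) * (Eh bas Dop) ^ (1/2:ℝ) := by
    intro l hl
    have hl' := Finset.mem_range.mp hl
    set k := r - 1 - l with hk
    -- operator norm bounds
    have hBH : ‖P * H * P‖₊ ≤ ‖H‖₊ := by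
      calc ‖P * H * P‖₊ ≤ ‖P * H‖₊ * ‖P‖₊ := nnnorm_mul_le _ _
        _ ≤ (‖P‖₊ * ‖H‖₊) * ‖P‖₊ := mul_le_mul_left (nnnorm_mul_le _ _) _
        _ ≤ (1 * ‖H‖₊) * 1 := mul_le_mul' (mul_le_mul_left hPle _) hPle
        _ = ‖H‖₊ := by ring
    have hfac : ‖(P * H * P) ^ l * P‖₊ * ‖H ^ k‖₊ ≤ c ^ r := by
      calc ‖(P * H * P) ^ l * P‖₊ * ‖H ^ k‖₊
          ≤ (‖(P * H * P) ^ l‖₊ * ‖P‖₊) * ‖H‖₊ ^ k :=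
            mul_le_mul' (nnnorm_mul_le _ _) (clm_nnnorm_pow_le H k)
        _ ≤ (‖P * H * P‖₊ ^ l * 1) * ‖H‖₊ ^ k :=
            mul_le_mul_left (mul_le_mul' (clm_nnnorm_pow_le _ l) hPle) _
        _ ≤ (‖H‖₊ ^ l * 1) * ‖H‖₊ ^ k :=
            mul_le_mul_left (mul_le_mul_left (pow_le_pow_left₀ zero_le hBH l) _) _
        _ = ‖H‖₊ ^ (l + k) := by rw [mul_one, pow_add]
        _ ≤ c ^ (l + k) := pow_le_pow_left₀ zero_le hHc _
        _ ≤ c ^ r := pow_le_pow_right₀ hc1 (by omega)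
    -- HS bounds
    have h1 : Eh bas (H ^ k * Dop * ((P * H * P) ^ l * P))
        ≤ (‖(P * H * P) ^ l * P‖₊ : ℝ≥0∞) ^ (2:ℝ) * Eh bas (H ^ k * Dop) :=
      Eh_mul_right bas _ _
    have h2 : Eh bas (H ^ k * Dop) ≤ (‖H ^ k‖₊ : ℝ≥0∞) ^ (2:ℝ) * Eh bas Dop :=
      Eh_mul_left bas _ _
    have h3 : Eh bas (H ^ k * Dop * ((P * H * P) ^ l * P))
        ≤ ((‖(P * H * P) ^ l * P‖₊ * ‖H ^ k‖₊ : ℝ≥0) : ℝ≥0∞) ^ (2:ℝ) * Eh bas Dop := by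
      refine h1.trans ?_
      calc (‖(P * H * P) ^ l * P‖₊ : ℝ≥0∞) ^ (2:ℝ) * Eh bas (H ^ k * Dop)
          ≤ (‖(P * H * P) ^ l * P‖₊ : ℝ≥0∞) ^ (2:ℝ)
              * ((‖H ^ k‖₊ : ℝ≥0∞) ^ (2:ℝ) * Eh bas Dop) := mul_le_mul_right h2 _
        _ = ((‖(P * H * P) ^ l * P‖₊ * ‖H ^ k‖₊ : ℝ≥0) : ℝ≥0∞) ^ (2:ℝ) * Eh bas Dop := by
            rw [ENNReal.coe_mul, ENNReal.mul_rpow_of_nonneg _ _ (by norm_num : (0:ℝ) ≤ 2)]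
            exact (mul_assoc _ _ _).symm
    calc (Eh bas (H ^ k * Dop * ((P * H * P) ^ l * P))) ^ (1/2:ℝ)
        ≤ (((‖(P * H * P) ^ l * P‖₊ * ‖H ^ k‖₊ : ℝ≥0) : ℝ≥0∞) ^ (2:ℝ) * Eh bas Dop) ^ (1/2:ℝ) :=
          ENNReal.rpow_le_rpow h3 (by norm_num)
      _ = ((‖(P * H * P) ^ l * P‖₊ * ‖H ^ k‖₊ : ℝ≥0) : ℝ≥0∞) * (Eh bas Dop) ^ (1/2:ℝ) := by
          rw [ENNReal.mul_rpow_of_nonneg _ _ (by norm_num : (0:ℝ) ≤ 1/2), sq_half]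
      _ ≤ ((c ^ r : ℝ≥0) : ℝ≥0∞) * (Eh bas Dop) ^ (1/2:ℝ) :=
          mul_le_mul_left (by exact_mod_cast hfac) _
  -- summing up
  have main : (Eh bas L) ^ (1/2:ℝ)
      ≤ ((r * c ^ r : ℝ≥0) : ℝ≥0∞) * (Eh bas Dop) ^ (1/2:ℝ) := by
    rw [hop]
    refine (sqE_sum bas _ _).trans ?_
    refine (Finset.sum_le_sum hterm).trans ?_
    rw [Finset.sum_const, Finset.card_range, nsmul_eq_mul]
    rw [← mul_assoc]
    refine mul_le_mul_left ?_ _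
    rw [ENNReal.coe_mul]
    push_cast
    rfl
  have hRHSfin : ((r * c ^ r : ℝ≥0) : ℝ≥0∞) * (Eh bas Dop) ^ (1/2:ℝ) ≠ ⊤ :=
    ENNReal.mul_ne_top ENNReal.coe_ne_top
      (ENNReal.rpow_ne_top_of_nonneg (by norm_num) hDfin)
  have hLfin : Eh bas L ≠ ⊤ := by
    intro htop
    apply hRHSfin
    refine top_le_iff.mp ?_
    calc (⊤:ℝ≥0∞) = (Eh bas L) ^ (1/2:ℝ) := by
          rw [htop, ENNReal.top_rpow_of_pos (by norm_num)]
      _ ≤ _ := main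
  rw [hsNorm_eq_toReal bas _ hLfin, hsNorm_eq_toReal bas _ hDfin]
  have hfinal := ENNReal.toReal_mono hRHSfin main
  rw [ENNReal.toReal_mul, ENNReal.coe_toReal] at hfinal
  refine hfinal.trans_eq ?_
  have hcast : ((r * c ^ r : ℝ≥0) : ℝ) = (r : ℝ) * (1 + ‖H‖) ^ r := by
    push_cast [hc]
    try ring
  rw [hcast]
end
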